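/- arXiv:1206.0803 — 4 statements merged into one kernel-verified Lean document; each statement's English description precedes it below -/
import Mathlib

section
/- The Dyck paths of order n are partitioned by the fibers of θ: Dyck(n) = disjoint union over Motzkin paths m of order n of B(m); moreover, if rk(m) = i, then the induced subposet (B(m), ≤) of the noncrossing partition order on Dyck paths is isomorphic to the boolean lattice B_{n-1-2i}. In particular, the noncrossing partition lattice NC(n) admits a symmetric boolean decomposition. -/
open Finset

/-- Number of up steps (`true`) among the first `k` steps of `p`. -/
def upCount {m : ℕ} (p : Fin m → Bool) (k : ℕ) : ℕ :=
  (Finset.univ.filter fun i : Fin m => (i : ℕ) < k ∧ p i = true).card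

/-- Number of down steps (`false`) among the first `k` steps of `p`. -/
def downCount {m : ℕ} (p : Fin m → Bool) (k : ℕ) : ℕ :=
  (Finset.univ.filter fun i : Fin m => (i : ℕ) < k ∧ p i = false).card

/-- `p` is a Dyck path of order `n`: a path of `2n` steps (up = `true`,
down = `false`), with `n` up steps, never going below the x-axis. -/
def IsDyck (n : ℕ) (p : Fin (2 * n) → Bool) : Prop :=
  upCount p (2 * n) = n ∧ ∀ k < 2 * n + 1, downCount p k ≤ upCount p k

instance (n : ℕ) : DecidablePred (IsDyck n) := fun p => by
  unfold IsDyck; infer_instance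

/-- The Finset of Dyck paths of order `n`. -/
def dyckSet (n : ℕ) : Finset (Fin (2 * n) → Bool) :=
  Finset.univ.filter (IsDyck n)

/-- Height of the path after `k` steps. -/
def height {n : ℕ} (p : Fin (2 * n) → Bool) (k : ℕ) : ℕ :=
  upCount p k - downCount p k

/-- The area of a Dyck path: the number of unused lattice points strictly below
the path and weakly above the x-axis (equivalently, the number of
`1/√2 × 1/√2` diamonds fitting between the path and the x-axis). -/
def area {n : ℕ} (p : Fin (2 * n) → Bool) : ℕ :=
  ∑ k ∈ Finset.range (2 * n + 1), height p k / 2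

/-- The `j`-th step of `p` (defaulting to `false` out of range). -/
def stepAt {m : ℕ} (p : Fin m → Bool) (j : ℕ) : Bool :=
  if h : j < m then p ⟨j, h⟩ else false

/-- The rank of a Dyck path of order `n` in the noncrossing partition lattice
under Stump's bijection: equivalently (Simion–Ullman) the number of letters `b`
and `r` in its SU-word, i.e. the number of `i ∈ {1,…,n-1}` for which the step
leaving the `i`-th odd lattice point (the step with index `2i-1`, 0-indexed)
is an up step. -/
def rk {n : ℕ} (p : Fin (2 * n) → Bool) : ℕ :=
  ((Finset.Icc 1 (n - 1)).filter fun i => stepAt p (2 * i - 1) = true).card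

def upM {k : ℕ} (m : Fin k → Option Bool) (j : ℕ) : ℕ :=
  (Finset.univ.filter fun i : Fin k => (i : ℕ) < j ∧ m i = some true).card

def downM {k : ℕ} (m : Fin k → Option Bool) (j : ℕ) : ℕ :=
  (Finset.univ.filter fun i : Fin k => (i : ℕ) < j ∧ m i = some false).card

/-- A Motzkin word (`some true` = up, `some false` = down, `none` = level):
as many ups as downs, every prefix having at least as many ups as downs.
A Motzkin path of order `n` is such a word of length `n-1`. -/
def IsMotzkin {k : ℕ} (m : Fin k → Option Bool) : Prop :=
  upM m k = downM m k ∧ ∀ j < k + 1, downM m j ≤ upM m j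

instance (k : ℕ) : DecidablePred (IsMotzkin (k := k)) := fun m => by
  unfold IsMotzkin; infer_instance

/-- The Finset of Motzkin paths of order `n` (length `n-1`). -/
def motzSet (n : ℕ) : Finset (Fin (n - 1) → Option Bool) :=
  Finset.univ.filter IsMotzkin

/-- The rank of a Motzkin path: its number of up steps. -/
def rkM {k : ℕ} (m : Fin k → Option Bool) : ℕ := upM m k

def mext {k : ℕ} (m : Fin k → Option Bool) (i : ℕ) : Option Bool :=
  if h : i < k then m ⟨i, h⟩ else none

/-- ρ : Motzkin paths of order `n` → Dyck paths of order `n`.  Prepend an up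
step and append a down step; up steps become two up steps, down steps two down
steps, and each level step becomes a down-up pair. -/
def rho (n : ℕ) (m : Fin (n - 1) → Option Bool) : Fin (2 * n) → Bool := fun j =>
  if (j : ℕ) = 0 then true
  else if (j : ℕ) = 2 * n - 1 then false
  else
    match mext m (((j : ℕ) - 1) / 2) with
    | some b => b
    | none => decide ((j : ℕ) % 2 = 0)

/-- The area of a Motzkin path is the area of the Dyck path `ρ(m)`. -/
def areaM (n : ℕ) (m : Fin (n - 1) → Option Bool) : ℕ := area (rho n m)

/-- θ : Dyck paths of order `n` → Motzkin paths of order `n`, joining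
consecutive odd lattice points of the path: the segment between the `i`-th and
`(i+1)`-st odd points (steps `2i+1`, `2i+2`, 0-indexed) becomes an up, down, or
level step accordingly. -/
def theta (n : ℕ) (p : Fin (2 * n) → Bool) : Fin (n - 1) → Option Bool := fun i =>
  match stepAt p (2 * (i : ℕ) + 1), stepAt p (2 * (i : ℕ) + 2) with
  | true, true => some true
  | false, false => some false
  | _, _ => none

/-- Stump's relation on `{0,…,n-1}` (0-indexed version of `{1,…,n}`): `a` and
`b` are in the same block of the noncrossing partition `φ(p)` iff their odd
lattice points have the same height and the path between them does not pass
below that height. -/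
def stumpRel {n : ℕ} (p : Fin (2 * n) → Bool) (a b : ℕ) : Prop :=
  height p (2 * a + 1) = height p (2 * b + 1) ∧
  ∀ x, 2 * a + 1 ≤ x → x ≤ 2 * b + 1 → height p (2 * a + 1) ≤ height p x

/-- The partial order on Dyck paths pulled back from the noncrossing partition
lattice (reverse refinement) via Stump's bijection: `p ≤ q` iff `φ(p)` refines
`φ(q)`. -/
def dyckLE {n : ℕ} (p q : Fin (2 * n) → Bool) : Prop :=
  ∀ a b : ℕ, a ≤ b → b < n → stumpRel p a b → stumpRel q a b

namespace SBD
open Finset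

lemma stepAt_lt {M : ℕ} (p : Fin M → Bool) {j : ℕ} (h : j < M) :
    stepAt p j = p ⟨j, h⟩ := dif_pos h

lemma cnt_succ {M : ℕ} (Q : Fin M → Prop) [DecidablePred Q] {k : ℕ} (hk : k < M) :
    (univ.filter fun i : Fin M => (i : ℕ) < k + 1 ∧ Q i).card
      = (univ.filter fun i : Fin M => (i : ℕ) < k ∧ Q i).card
        + if Q ⟨k, hk⟩ then 1 else 0 := by
  have hsplit : (univ.filter fun i : Fin M => (i : ℕ) < k + 1 ∧ Q i)
      = (univ.filter fun i : Fin M => (i : ℕ) < k ∧ Q i)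
        ∪ (univ.filter fun i : Fin M => (i : ℕ) = k ∧ Q i) := by
    ext i
    simp only [mem_filter, mem_univ, true_and, mem_union]
    constructor
    · rintro ⟨h1, h2⟩
      rcases Nat.lt_succ_iff_lt_or_eq.mp h1 with h | h
      · exact Or.inl ⟨h, h2⟩
      · exact Or.inr ⟨h, h2⟩
    · rintro (⟨h1, h2⟩ | ⟨h1, h2⟩)
      · exact ⟨by omega, h2⟩
      · exact ⟨by omega, h2⟩
  rw [hsplit, card_union_of_disjoint]
  · congr 1
    by_cases h : Q ⟨k, hk⟩
    · rw [if_pos h]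
      have : (univ.filter fun i : Fin M => (i : ℕ) = k ∧ Q i) = {⟨k, hk⟩} := by
        ext i
        simp only [mem_filter, mem_univ, true_and, mem_singleton]
        constructor
        · rintro ⟨h1, _⟩; exact Fin.ext h1
        · rintro rfl; exact ⟨rfl, h⟩
      rw [this, card_singleton]
    · rw [if_neg h]
      rw [card_eq_zero, filter_eq_empty_iff]
      rintro i - ⟨h1, h2⟩
      exact h (by rwa [show (⟨k, hk⟩ : Fin M) = i from Fin.ext h1.symm])
  · rw [disjoint_left]
    rintro i hi hi'
    simp only [mem_filter, mem_univ, true_and] at hi hi'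
    omega

lemma cnt_succ_ge {M : ℕ} (Q : Fin M → Prop) [DecidablePred Q] {k : ℕ} (hk : M ≤ k) :
    (univ.filter fun i : Fin M => (i : ℕ) < k + 1 ∧ Q i).card
      = (univ.filter fun i : Fin M => (i : ℕ) < k ∧ Q i).card := by
  congr 1
  apply filter_congr
  intro i _
  have := i.isLt
  constructor
  · rintro ⟨-, h⟩; exact ⟨by omega, h⟩
  · rintro ⟨-, h⟩; exact ⟨by omega, h⟩

lemma cnt_zero {M : ℕ} (Q : Fin M → Prop) [DecidablePred Q] :
    (univ.filter fun i : Fin M => (i : ℕ) < 0 ∧ Q i).card = 0 := by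
  rw [card_eq_zero, filter_eq_empty_iff]
  rintro i - ⟨h1, -⟩
  omega

lemma total_count {M : ℕ} (p : Fin M → Bool) {k : ℕ} (hk : k ≤ M) :
    upCount p k + downCount p k = k := by
  induction k with
  | zero => simp [upCount, downCount, cnt_zero]
  | succ k ih =>
    have hk' : k < M := hk
    rw [upCount, downCount, cnt_succ (fun i : Fin M => p i = true) hk',
      cnt_succ (fun i : Fin M => p i = false) hk']
    have := ih (le_of_lt hk')
    rw [upCount, downCount] at this
    cases h : p ⟨k, hk'⟩ <;> simp [h] <;> omega

lemma upCount_succ {M : ℕ} (p : Fin M → Bool) {k : ℕ} (hk : k < M) :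
    upCount p (k + 1) = upCount p k + if p ⟨k, hk⟩ = true then 1 else 0 :=
  cnt_succ _ hk

lemma downCount_succ {M : ℕ} (p : Fin M → Bool) {k : ℕ} (hk : k < M) :
    downCount p (k + 1) = downCount p k + if p ⟨k, hk⟩ = false then 1 else 0 :=
  cnt_succ _ hk

lemma upM_succ {K : ℕ} (m : Fin K → Option Bool) {k : ℕ} (hk : k < K) :
    upM m (k + 1) = upM m k + if m ⟨k, hk⟩ = some true then 1 else 0 :=
  cnt_succ _ hk

lemma downM_succ {K : ℕ} (m : Fin K → Option Bool) {k : ℕ} (hk : k < K) :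
    downM m (k + 1) = downM m k + if m ⟨k, hk⟩ = some false then 1 else 0 :=
  cnt_succ _ hk

lemma upM_zero {K : ℕ} (m : Fin K → Option Bool) : upM m 0 = 0 := cnt_zero _
lemma downM_zero {K : ℕ} (m : Fin K → Option Bool) : downM m 0 = 0 := cnt_zero _
lemma upCount_zero {M : ℕ} (p : Fin M → Bool) : upCount p 0 = 0 := cnt_zero _
lemma downCount_zero {M : ℕ} (p : Fin M → Bool) : downCount p 0 = 0 := cnt_zero _

end SBD
namespace SBD
open Finset

lemma theta_cases {n : ℕ} (p : Fin (2*n) → Bool) (i : Fin (n-1)) :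
    (stepAt p (2*(i:ℕ)+1) = true ∧ stepAt p (2*(i:ℕ)+2) = true ∧ theta n p i = some true) ∨
    (stepAt p (2*(i:ℕ)+1) = false ∧ stepAt p (2*(i:ℕ)+2) = false ∧ theta n p i = some false) ∨
    (stepAt p (2*(i:ℕ)+1) = true ∧ stepAt p (2*(i:ℕ)+2) = false ∧ theta n p i = none) ∨
    (stepAt p (2*(i:ℕ)+1) = false ∧ stepAt p (2*(i:ℕ)+2) = true ∧ theta n p i = none) := by
  rcases h1 : stepAt p (2*(i:ℕ)+1) <;> rcases h2 : stepAt p (2*(i:ℕ)+2) <;>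
    simp [theta, h1, h2]

lemma counts {n : ℕ} (p : Fin (2*n) → Bool) (m : Fin (n-1) → Option Bool)
    (h0 : stepAt p 0 = true) (hθ : theta n p = m) :
    ∀ i, i ≤ n - 1 → (upCount p (2*i+1) + downM m i = 1 + i + upM m i
      ∧ downCount p (2*i+1) + upM m i = i + downM m i) := by
  intro i
  induction i with
  | zero =>
    intro _
    have h1 : (0:ℕ) < 2*n := by
      rcases Nat.eq_zero_or_pos n with h | h
      · subst h
        rw [stepAt] at h0
        simp at h0
      · omega
    have e1 : upCount p (0+1) = upCount p 0 + (if p ⟨0, h1⟩ = true then 1 else 0) :=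
      upCount_succ p h1
    have e2 : downCount p (0+1) = downCount p 0 + (if p ⟨0, h1⟩ = false then 1 else 0) :=
      downCount_succ p h1
    rw [stepAt_lt p h1] at h0
    rw [h0] at e1 e2
    have z1 := upCount_zero p
    have z2 := downCount_zero p
    have z3 := upM_zero m
    have z4 := downM_zero m
    simp at e1 e2
    norm_num at e1 e2 ⊢
    omega
  | succ i ih =>
    intro hi
    have hi' : i < n - 1 := by omega
    have ihh := ih (by omega)
    have h1 : 2*i+1 < 2*n := by omega
    have h2 : 2*i+2 < 2*n := by omega
    have eU2 : upCount p (2*i+1+1) = upCount p (2*i+1) + (if p ⟨2*i+1, h1⟩ = true then 1 else 0) :=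
      upCount_succ p h1
    have eU3 : upCount p (2*i+2+1) = upCount p (2*i+2) + (if p ⟨2*i+2, h2⟩ = true then 1 else 0) :=
      upCount_succ p h2
    have eD2 : downCount p (2*i+1+1) = downCount p (2*i+1) + (if p ⟨2*i+1, h1⟩ = false then 1 else 0) :=
      downCount_succ p h1
    have eD3 : downCount p (2*i+2+1) = downCount p (2*i+2) + (if p ⟨2*i+2, h2⟩ = false then 1 else 0) :=
      downCount_succ p h2
    have eu : upM m (i+1) = upM m i + (if m ⟨i, hi'⟩ = some true then 1 else 0) := upM_succ m hi'
    have ed : downM m (i+1) = downM m i + (if m ⟨i, hi'⟩ = some false then 1 else 0) := downM_succ m hi'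
    have hti := theta_cases p ⟨i, hi'⟩
    rw [hθ] at hti
    simp only [show ((⟨i, hi'⟩ : Fin (n-1)) : ℕ) = i from rfl, stepAt_lt p h1, stepAt_lt p h2] at hti
    have hg1 : 2*(i+1)+1 = 2*i+2+1 := by ring
    rw [hg1]
    rw [show 2*i+1+1 = 2*i+2 by omega] at eU2 eD2
    rcases hti with ⟨ha, hb, hc⟩ | ⟨ha, hb, hc⟩ | ⟨ha, hb, hc⟩ | ⟨ha, hb, hc⟩ <;>
      rw [ha] at eU2 eD2 <;> rw [hb] at eU3 eD3 <;> rw [hc] at eu ed <;>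
      simp only [if_pos, if_neg, reduceIte, reduceCtorEq, Option.some.injEq,
        Bool.true_eq_false, Bool.false_eq_true] at eU2 eU3 eD2 eD3 eu ed <;>
      constructor <;> omega

lemma dyck_first {n : ℕ} {p : Fin (2*n) → Bool} (hn : 1 ≤ n) (hp : IsDyck n p) :
    stepAt p 0 = true := by
  have h1 : (0:ℕ) < 2*n := by omega
  have e1 : upCount p (0+1) = upCount p 0 + (if p ⟨0, h1⟩ = true then 1 else 0) :=
    upCount_succ p h1
  have e2 : downCount p (0+1) = downCount p 0 + (if p ⟨0, h1⟩ = false then 1 else 0) :=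
    downCount_succ p h1
  have hd := hp.2 1 (by omega)
  rw [stepAt_lt p h1]
  rw [upCount_zero] at e1
  rw [downCount_zero] at e2
  rcases h : p ⟨0, h1⟩
  · rw [h] at e1 e2
    simp at e1 e2
    omega
  · rfl

lemma dyck_last {n : ℕ} {p : Fin (2*n) → Bool} (hn : 1 ≤ n) (hp : IsDyck n p) :
    stepAt p (2*n-1) = false := by
  have h1 : 2*n-1 < 2*n := by omega
  have e1 : upCount p (2*n-1+1) = upCount p (2*n-1) + (if p ⟨2*n-1, h1⟩ = true then 1 else 0) :=
    upCount_succ p h1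
  have e2 : downCount p (2*n-1+1) = downCount p (2*n-1) + (if p ⟨2*n-1, h1⟩ = false then 1 else 0) :=
    downCount_succ p h1
  have ht : upCount p (2*n) + downCount p (2*n) = 2*n := total_count p le_rfl
  have ht' : upCount p (2*n-1) + downCount p (2*n-1) = 2*n-1 := total_count p (by omega)
  have hd := hp.2 (2*n-1) (by omega)
  have hu := hp.1
  rw [show 2*n-1+1 = 2*n by omega] at e1 e2
  rw [stepAt_lt p h1]
  rcases h : p ⟨2*n-1, h1⟩
  · rfl
  · rw [h] at e1 e2
    simp at e1 e2
    omega

lemma theta_isMotzkin {n : ℕ} {p : Fin (2*n) → Bool} (hn : 1 ≤ n) (hp : IsDyck n p) :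
    IsMotzkin (theta n p) := by
  have hc := counts p (theta n p) (dyck_first hn hp) rfl
  have hlast := dyck_last hn hp
  have h1 : 2*n-1 < 2*n := by omega
  rw [stepAt_lt p h1] at hlast
  have e1 : upCount p (2*n-1+1) = upCount p (2*n-1) + (if p ⟨2*n-1, h1⟩ = true then 1 else 0) :=
    upCount_succ p h1
  rw [hlast] at e1
  simp at e1
  have ht' : upCount p (2*n-1) + downCount p (2*n-1) = 2*n-1 := total_count p (by omega)
  have hu := hp.1
  rw [show 2*n-1+1 = 2*n by omega] at e1
  have hfin := hc (n-1) le_rfl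
  rw [show 2*(n-1)+1 = 2*n-1 by omega] at hfin
  constructor
  · omega
  · intro j hj
    have hcj := hc j (by omega)
    have hd := hp.2 (2*j+1) (by omega)
    omega

lemma isDyck_of {n : ℕ} {p : Fin (2*n) → Bool} {m : Fin (n-1) → Option Bool}
    (hn : 1 ≤ n) (hm : IsMotzkin m) (h0 : stepAt p 0 = true)
    (hlast : stepAt p (2*n-1) = false) (hθ : theta n p = m) : IsDyck n p := by
  have hc := counts p m h0 hθ
  have h1 : 2*n-1 < 2*n := by omega
  rw [stepAt_lt p h1] at hlast
  have e1 : upCount p (2*n-1+1) = upCount p (2*n-1) + (if p ⟨2*n-1, h1⟩ = true then 1 else 0) :=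
    upCount_succ p h1
  rw [hlast] at e1
  simp at e1
  rw [show 2*n-1+1 = 2*n by omega] at e1
  have hfin := hc (n-1) le_rfl
  rw [show 2*(n-1)+1 = 2*n-1 by omega] at hfin
  have hmeq := hm.1
  constructor
  · omega
  · intro k hk
    rcases Nat.eq_zero_or_pos k with rfl | hk0
    · rw [upCount_zero, downCount_zero]
    rcases Nat.even_or_odd k with ⟨j, hj⟩ | ⟨j, hj⟩
    · -- k = 2j, 1 ≤ j ≤ n
      rcases Nat.eq_or_lt_of_le (show k ≤ 2*n by omega) with hkn | hkn
      · -- k = 2n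
        have ht : upCount p (2*n) + downCount p (2*n) = 2*n := total_count p le_rfl
        rw [hkn]
        omega
      · -- k = 2j, j ≤ n-1, so k = 2(j-1)+2
        have hj1 : j - 1 ≤ n - 1 := by omega
        have hcj := hc (j-1) hj1
        have hmj := hm.2 (j-1) (by omega)
        have h2 : 2*(j-1)+1 < 2*n := by omega
        have e2 : upCount p (2*(j-1)+1+1)
            = upCount p (2*(j-1)+1) + (if p ⟨2*(j-1)+1, h2⟩ = true then 1 else 0) :=
          upCount_succ p h2
        have ht : upCount p k + downCount p k = k := total_count p (by omega)
        rw [show 2*(j-1)+1+1 = k by omega] at e2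
        rcases h : p ⟨2*(j-1)+1, h2⟩ <;> rw [h] at e2 <;> simp at e2 <;> omega
    · -- k = 2j+1, j ≤ n-1
      subst hj
      have hcj := hc j (by omega)
      have hmj := hm.2 j (by omega)
      omega

end SBD
namespace SBD
open Finset

def pathOf (n : ℕ) (m : Fin (n-1) → Option Bool) (c : ℕ → Bool) : Fin (2*n) → Bool := fun j =>
  if (j:ℕ) = 0 then true
  else if (j:ℕ) = 2*n-1 then false
  else match mext m (((j:ℕ)-1)/2) with
  | some b => b
  | none => c (((j:ℕ)-1)/2) == decide ((j:ℕ) % 2 = 1)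

lemma stepAt_coe {M : ℕ} (p : Fin M → Bool) (j : Fin M) : stepAt p (j:ℕ) = p j := by
  rw [stepAt_lt p j.isLt]

lemma pathOf_val {n : ℕ} (m : Fin (n-1) → Option Bool) (c : ℕ → Bool) {j : ℕ} (hj : j < 2*n) :
    stepAt (pathOf n m c) j =
      if j = 0 then true
      else if j = 2*n-1 then false
      else match mext m ((j-1)/2) with
      | some b => b
      | none => c ((j-1)/2) == decide (j % 2 = 1) := by
  rw [stepAt_lt _ hj]; rfl

lemma pathOf_zero {n : ℕ} (m : Fin (n-1) → Option Bool) (c : ℕ → Bool) (hn : 1 ≤ n) :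
    stepAt (pathOf n m c) 0 = true := by
  rw [pathOf_val m c (by omega)]; rfl

lemma pathOf_last {n : ℕ} (m : Fin (n-1) → Option Bool) (c : ℕ → Bool) (hn : 1 ≤ n) :
    stepAt (pathOf n m c) (2*n-1) = false := by
  rw [pathOf_val m c (by omega), if_neg (by omega), if_pos rfl]

lemma pathOf_odd {n : ℕ} (m : Fin (n-1) → Option Bool) (c : ℕ → Bool) {i : ℕ} (hi : i < n-1) :
    stepAt (pathOf n m c) (2*i+1)
      = match m ⟨i, hi⟩ with | some b => b | none => c i := by
  rw [pathOf_val m c (by omega), if_neg (by omega), if_neg (by omega),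
    show (2*i+1-1)/2 = i by omega, show mext m i = m ⟨i, hi⟩ from dif_pos hi,
    show (2*i+1) % 2 = 1 by omega]
  rcases m ⟨i, hi⟩ with _ | b
  · simp
  · rfl

lemma pathOf_even {n : ℕ} (m : Fin (n-1) → Option Bool) (c : ℕ → Bool) {i : ℕ} (hi : i < n-1) :
    stepAt (pathOf n m c) (2*i+2)
      = match m ⟨i, hi⟩ with | some b => b | none => !(c i) := by
  rw [pathOf_val m c (by omega), if_neg (by omega), if_neg (by omega),
    show (2*i+2-1)/2 = i by omega, show mext m i = m ⟨i, hi⟩ from dif_pos hi,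
    show (2*i+2) % 2 = 0 by omega]
  rcases m ⟨i, hi⟩ with _ | b
  · simp
  · rfl

lemma theta_pathOf {n : ℕ} (m : Fin (n-1) → Option Bool) (c : ℕ → Bool) :
    theta n (pathOf n m c) = m := by
  funext i
  have hi : (i:ℕ) < n-1 := i.isLt
  have ho := pathOf_odd m c hi
  have he := pathOf_even m c hi
  rw [Fin.eta] at ho he
  rcases h : m i with _ | b
  · rw [h] at ho he
    simp only at ho he
    rcases hc : c (i:ℕ) <;> rw [hc] at ho he <;> simp only [Bool.not_true, Bool.not_false] at ho he <;>
      simp [theta, ho, he]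
  · rw [h] at ho he
    simp only at ho he
    rcases b <;> simp [theta, ho, he]

lemma pathOf_congr {n : ℕ} (m : Fin (n-1) → Option Bool) (c c' : ℕ → Bool)
    (h : ∀ i (hi : i < n-1), m ⟨i, hi⟩ = none → c i = c' i) :
    pathOf n m c = pathOf n m c' := by
  funext j
  have hj : (j:ℕ) < 2*n := j.isLt
  rw [← stepAt_coe (pathOf n m c) j, ← stepAt_coe (pathOf n m c') j,
    pathOf_val m c hj, pathOf_val m c' hj]
  by_cases h0 : (j:ℕ) = 0
  · simp [h0]
  by_cases hl : (j:ℕ) = 2*n-1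
  · simp [h0, hl]
  rw [if_neg h0, if_neg hl, if_neg h0, if_neg hl]
  have hq : ((j:ℕ)-1)/2 < n-1 := by omega
  have hme : mext m (((j:ℕ)-1)/2) = m ⟨((j:ℕ)-1)/2, hq⟩ := dif_pos hq
  rw [hme]
  rcases hmv : m ⟨((j:ℕ)-1)/2, hq⟩ with _ | b
  · simp only
    rw [h _ hq hmv]
  · rfl

lemma eq_pathOf {n : ℕ} {p : Fin (2*n) → Bool} {m : Fin (n-1) → Option Bool}
    (hn : 1 ≤ n) (hp : IsDyck n p) (hθ : theta n p = m) :
    p = pathOf n m (fun i => stepAt p (2*i+1)) := by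
  funext j
  set c : ℕ → Bool := fun i => stepAt p (2*i+1) with hc
  have hj : (j:ℕ) < 2*n := j.isLt
  rw [← stepAt_coe p j, ← stepAt_coe (pathOf n m c) j]
  by_cases h0 : (j:ℕ) = 0
  · rw [h0, pathOf_zero m c hn, dyck_first hn hp]
  by_cases hl : (j:ℕ) = 2*n-1
  · rw [hl, pathOf_last m c hn, dyck_last hn hp]
  have hq : ((j:ℕ)-1)/2 < n-1 := by omega
  set q := ((j:ℕ)-1)/2 with hqdef
  have hcq : c q = stepAt p (2*q+1) := rfl
  have hti := theta_cases p ⟨q, hq⟩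
  rw [hθ] at hti
  simp only [show ((⟨q, hq⟩ : Fin (n-1)) : ℕ) = q from rfl] at hti
  have hcases : (j:ℕ) = 2*q+1 ∨ (j:ℕ) = 2*q+2 := by omega
  have ho := pathOf_odd m c hq
  have he := pathOf_even m c hq
  rcases hti with ⟨ha, hb, hm⟩ | ⟨ha, hb, hm⟩ | ⟨ha, hb, hm⟩ | ⟨ha, hb, hm⟩ <;>
    rw [hm] at ho he <;> simp only at ho he <;>
    rcases hcases with hjj | hjj <;> rw [hjj] <;>
    simp [ho, he, ha, hb, hcq]

end SBD
namespace SBD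
open Finset

lemma step_some {n : ℕ} {p : Fin (2*n) → Bool} {m : Fin (n-1) → Option Bool}
    (hθ : theta n p = m) {i : ℕ} (hi : i < n-1) {b : Bool}
    (hmv : m ⟨i, hi⟩ = some b) : stepAt p (2*i+1) = b ∧ stepAt p (2*i+2) = b := by
  have hti := theta_cases p ⟨i, hi⟩
  rw [hθ] at hti
  simp only [show ((⟨i, hi⟩ : Fin (n-1)) : ℕ) = i from rfl] at hti
  rcases hti with ⟨ha, hb, hc⟩ | ⟨ha, hb, hc⟩ | ⟨ha, hb, hc⟩ | ⟨ha, hb, hc⟩ <;>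
    rw [hmv] at hc
  · injection hc with h; subst h; exact ⟨ha, hb⟩
  · injection hc with h; subst h; exact ⟨ha, hb⟩
  · cases hc
  · cases hc

lemma step_none {n : ℕ} {p : Fin (2*n) → Bool} {m : Fin (n-1) → Option Bool}
    (hθ : theta n p = m) {i : ℕ} (hi : i < n-1)
    (hmv : m ⟨i, hi⟩ = none) : stepAt p (2*i+2) = !stepAt p (2*i+1) := by
  have hti := theta_cases p ⟨i, hi⟩
  rw [hθ] at hti
  simp only [show ((⟨i, hi⟩ : Fin (n-1)) : ℕ) = i from rfl] at hti
  rcases hti with ⟨ha, hb, hc⟩ | ⟨ha, hb, hc⟩ | ⟨ha, hb, hc⟩ | ⟨ha, hb, hc⟩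
  · rw [hmv] at hc; cases hc
  · rw [hmv] at hc; cases hc
  · rw [ha, hb]; rfl
  · rw [ha, hb]; rfl

lemma height_mono {n : ℕ} {p q : Fin (2*n) → Bool} {m : Fin (n-1) → Option Bool}
    (hm : IsMotzkin m)
    (h0p : stepAt p 0 = true) (hθp : theta n p = m)
    (h0q : stepAt q 0 = true) (hθq : theta n q = m)
    (hstep : ∀ i (hi : i < n-1), m ⟨i, hi⟩ = none →
      stepAt p (2*i+1) = true → stepAt q (2*i+1) = true) :
    ∀ x, 1 ≤ x → x ≤ 2*n-1 →
      (height p x ≤ height q x ∧ (x % 2 = 1 → height p x = height q x)) := by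
  have hcp := counts p m h0p hθp
  have hcq := counts q m h0q hθq
  intro x hx1 hx2
  rcases Nat.even_or_odd x with ⟨j, hj⟩ | ⟨j, hj⟩
  · -- even x = j + j = 2(j-1)+2
    have hi : j - 1 < n - 1 := by omega
    have hxe : x = 2*(j-1)+2 := by omega
    subst hxe
    set i := j - 1 with hidef
    have hcpi := hcp i (by omega)
    have hcqi := hcq i (by omega)
    have hmi := hm.2 i (by omega)
    have h1 : 2*i+1 < 2*n := by omega
    have eUp : upCount p (2*i+1+1) = upCount p (2*i+1) + (if p ⟨2*i+1, h1⟩ = true then 1 else 0) :=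
      upCount_succ p h1
    have eUq : upCount q (2*i+1+1) = upCount q (2*i+1) + (if q ⟨2*i+1, h1⟩ = true then 1 else 0) :=
      upCount_succ q h1
    rw [show 2*i+1+1 = 2*i+2 by omega] at eUp eUq
    have tp : upCount p (2*i+2) + downCount p (2*i+2) = 2*i+2 := total_count p (by omega)
    have tq : upCount q (2*i+2) + downCount q (2*i+2) = 2*i+2 := total_count q (by omega)
    have hind : (if p ⟨2*i+1, h1⟩ = true then 1 else 0)
        ≤ ((if q ⟨2*i+1, h1⟩ = true then 1 else 0) : ℕ) := by
      rcases hsp : p ⟨2*i+1, h1⟩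
      · simp
      · have hsp' : stepAt p (2*i+1) = true := by rw [stepAt_lt p h1]; exact hsp
        have hsq' : stepAt q (2*i+1) = true := by
          rcases hmv : m ⟨i, hi⟩ with _ | b
          · exact hstep i hi hmv hsp'
          · have h1p := (step_some hθp hi hmv).1
            have h1q := (step_some hθq hi hmv).1
            rw [hsp'] at h1p
            rw [← h1p] at h1q
            exact h1q
        rw [stepAt_lt q h1] at hsq'
        simp [hsq']
    have hhp2 : height p (2*i+2) = upCount p (2*i+2) - downCount p (2*i+2) := rfl
    have hhq2 : height q (2*i+2) = upCount q (2*i+2) - downCount q (2*i+2) := rfl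
    constructor
    · omega
    · intro hmod; omega
  · -- odd x = 2j+1
    subst hj
    have hcpj := hcp j (by omega)
    have hcqj := hcq j (by omega)
    have hmj := hm.2 j (by omega)
    have hhp : height p (2*j+1) = upCount p (2*j+1) - downCount p (2*j+1) := rfl
    have hhq : height q (2*j+1) = upCount q (2*j+1) - downCount q (2*j+1) := rfl
    constructor
    · omega
    · intro _; omega

lemma dyckLE_of_step {n : ℕ} {p q : Fin (2*n) → Bool} {m : Fin (n-1) → Option Bool}
    (hm : IsMotzkin m)
    (h0p : stepAt p 0 = true) (hθp : theta n p = m)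
    (h0q : stepAt q 0 = true) (hθq : theta n q = m)
    (hstep : ∀ i (hi : i < n-1), m ⟨i, hi⟩ = none →
      stepAt p (2*i+1) = true → stepAt q (2*i+1) = true) :
    dyckLE p q := by
  have hmono := height_mono hm h0p hθp h0q hθq hstep
  intro a b hab hbn hrel
  have hodd : ∀ y : ℕ, y < n → height p (2*y+1) = height q (2*y+1) := by
    intro y hy
    exact ((hmono (2*y+1) (by omega) (by omega)).2 (by omega))
  constructor
  · rw [← hodd a (by omega), ← hodd b (by omega)]
    exact hrel.1
  · intro x hx1 hx2
    have h1 := hrel.2 x hx1 hx2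
    have h2 := (hmono x (by omega) (by omega)).1
    rw [← hodd a (by omega)]
    exact le_trans h1 h2

lemma key1 {i u d u' d' Up1 Up2 Up3 Dp1 Dp2 Dp3 Uq1 Uq2 Dq1 Dq2 Hp1 Hp2 Hp3 Hq1 Hq2 : ℕ}
    (e1 : Up1 + d = 1 + i + u) (e2 : Dp1 + u = i + d)
    (e3 : Up3 + d' = 1 + (i + 1) + u') (e4 : Dp3 + u' = i + 1 + d')
    (e5 : Uq1 + d = 1 + i + u) (e6 : Dq1 + u = i + d)
    (e7 : u' = u) (e8 : d' = d) (e9 : d ≤ u)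
    (e10 : Up2 = Up1 + 1) (e11 : Uq2 = Uq1)
    (t1 : Up1 + Dp1 = 2*i+1) (t2 : Up2 + Dp2 = 2*i+2) (t3 : Up3 + Dp3 = 2*i+3)
    (s1 : Uq1 + Dq1 = 2*i+1) (s2 : Uq2 + Dq2 = 2*i+2)
    (h1 : Hp1 = Up1 - Dp1) (h2 : Hp2 = Up2 - Dp2) (h3 : Hp3 = Up3 - Dp3)
    (h4 : Hq1 = Uq1 - Dq1) (h5 : Hq2 = Uq2 - Dq2) :
    Hp1 = Hp3 ∧ Hp1 ≤ Hp2 ∧ Hq2 + 1 = Hq1 := by omega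

lemma step_of_dyckLE {n : ℕ} {p q : Fin (2*n) → Bool} {m : Fin (n-1) → Option Bool}
    (hm : IsMotzkin m)
    (h0p : stepAt p 0 = true) (hθp : theta n p = m)
    (h0q : stepAt q 0 = true) (hθq : theta n q = m)
    (hle : dyckLE p q) :
    ∀ i (hi : i < n-1), m ⟨i, hi⟩ = none →
      stepAt p (2*i+1) = true → stepAt q (2*i+1) = true := by
  have hcp := counts p m h0p hθp
  have hcq := counts q m h0q hθq
  intro i hi hmv hsp
  by_contra hq
  have hsq : stepAt q (2*i+1) = false := by
    rcases h : stepAt q (2*i+1)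
    · rfl
    · exact absurd h hq
  have hs2p : stepAt p (2*i+2) = false := by rw [step_none hθp hi hmv, hsp]; rfl
  have hs2q : stepAt q (2*i+2) = true := by rw [step_none hθq hi hmv, hsq]; rfl
  -- counts at i and i+1
  have hcpi := hcp i (by omega)
  have hcqi := hcq i (by omega)
  have hcpi1 := hcp (i+1) (by omega)
  have hcqi1 := hcq (i+1) (by omega)
  have hmi := hm.2 i (by omega)
  have hmi1 := hm.2 (i+1) (by omega)
  have h1 : 2*i+1 < 2*n := by omega
  rw [stepAt_lt p h1] at hsp
  rw [stepAt_lt q h1] at hsq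
  have eUp : upCount p (2*i+2) = upCount p (2*i+1) + 1 := by
    rw [show 2*i+2 = 2*i+1+1 by omega, upCount_succ p h1, hsp]
    simp
  have eUq : upCount q (2*i+2) = upCount q (2*i+1) := by
    rw [show 2*i+2 = 2*i+1+1 by omega, upCount_succ q h1, hsq]
    simp
  have tp1 : upCount p (2*i+1) + downCount p (2*i+1) = 2*i+1 := total_count p (by omega)
  have tq1 : upCount q (2*i+1) + downCount q (2*i+1) = 2*i+1 := total_count q (by omega)
  have tp2 : upCount p (2*i+2) + downCount p (2*i+2) = 2*i+2 := total_count p (by omega)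
  have tq2 : upCount q (2*i+2) + downCount q (2*i+2) = 2*i+2 := total_count q (by omega)
  have tp3 : upCount p (2*i+3) + downCount p (2*i+3) = 2*i+3 := total_count p (by omega)
  have tq3 : upCount q (2*i+3) + downCount q (2*i+3) = 2*i+3 := total_count q (by omega)
  -- upM, downM constant across a level step
  have eu : upM m (i+1) = upM m i := by
    rw [upM_succ m hi, hmv]
    simp
  have ed : downM m (i+1) = downM m i := by
    rw [downM_succ m hi, hmv]
    simp
  -- heights
  have hhp1 : height p (2*i+1) = upCount p (2*i+1) - downCount p (2*i+1) := rfl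
  have hhp2 : height p (2*i+2) = upCount p (2*i+2) - downCount p (2*i+2) := rfl
  have hhp3 : height p (2*i+3) = upCount p (2*i+3) - downCount p (2*i+3) := rfl
  have hhq1 : height q (2*i+1) = upCount q (2*i+1) - downCount q (2*i+1) := rfl
  have hhq2 : height q (2*i+2) = upCount q (2*i+2) - downCount q (2*i+2) := rfl
  have hE' : 2*(i+1)+1 = 2*i+3 := by ring
  rw [hE'] at hcpi1 hcqi1
  have hkey := key1 hcpi.1 hcpi.2 hcpi1.1 hcpi1.2 hcqi.1 hcqi.2 eu ed hmi eUp eUq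
    tp1 tp2 tp3 tq1 tq2 hhp1 hhp2 hhp3 hhq1 hhq2
  clear hcp hcq hcpi hcqi hcpi1 hcqi1 eu ed hmi hmi1 eUp eUq tp1 tq1 tp2 tq2 tp3 tq3
    hhp1 hhp2 hhp3 hhq1 hhq2 hq hmv hsp hsq hs2p hs2q h0p h0q hθp hθq hm
  have hrel : stumpRel p i (i+1) := by
    refine ⟨?_, ?_⟩
    · exact hkey.1.trans (congrArg (height p) (by ring : 2*i+3 = 2*(i+1)+1))
    · intro x hx1 hx2
      rw [hE'] at hx2
      have hx3 : x = 2*i+1 ∨ x = 2*i+2 ∨ x = 2*i+3 := by omega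
      rcases hx3 with rfl | rfl | rfl
      · exact le_rfl
      · exact hkey.2.1
      · exact le_of_eq hkey.1
  have ha1 : i ≤ i + 1 := by omega
  have ha2 : i + 1 < n := by omega
  have hR : stumpRel q i (i+1) := hle i (i+1) ha1 ha2 hrel
  have ha3 : 2*i+1 ≤ 2*i+2 := by omega
  have ha4 : 2*i+2 ≤ 2*(i+1)+1 := by omega
  have hq2 := hR.2 (2*i+2) ha3 ha4
  clear hR hrel hle
  omega
end SBD
namespace SBD
open Finset

def levels (n : ℕ) (m : Fin (n-1) → Option Bool) : Finset (Fin (n-1)) :=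
  univ.filter fun i => m i = none

lemma mem_levels {n : ℕ} {m : Fin (n-1) → Option Bool} {i : Fin (n-1)} :
    i ∈ levels n m ↔ m i = none := by simp [levels]

lemma levels_card {n : ℕ} {m : Fin (n-1) → Option Bool} (hm : IsMotzkin m) :
    (levels n m).card = n - 1 - 2 * rkM m := by
  have hT : upM m (n-1) = (univ.filter fun i : Fin (n-1) => m i = some true).card := by
    unfold upM
    congr 1
    apply filter_congr
    intro i _
    simp [i.isLt]
  have hF : downM m (n-1) = (univ.filter fun i : Fin (n-1) => m i = some false).card := by
    unfold downM
    congr 1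
    apply filter_congr
    intro i _
    simp [i.isLt]
  have h1 : (univ.filter fun i : Fin (n-1) => m i = none).card
      + (univ.filter fun i : Fin (n-1) => ¬ m i = none).card = n - 1 := by
    rw [card_filter_add_card_filter_not]
    simp
  have h2 : (univ.filter fun i : Fin (n-1) => ¬ m i = none)
      = (univ.filter fun i : Fin (n-1) => m i = some true)
        ∪ (univ.filter fun i : Fin (n-1) => m i = some false) := by
    ext i
    simp only [mem_filter, mem_univ, true_and, mem_union]
    rcases m i with _ | b
    · simp
    · cases b <;> simp
  have h3 : Disjoint (univ.filter fun i : Fin (n-1) => m i = some true)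
      (univ.filter fun i : Fin (n-1) => m i = some false) := by
    rw [disjoint_left]
    intro i hi hi'
    simp only [mem_filter] at hi hi'
    rw [hi.2] at hi'
    simp at hi'
  have h4 := card_union_of_disjoint h3
  have hud : upM m (n-1) = downM m (n-1) := hm.1
  have hrk : rkM m = upM m (n-1) := rfl
  rw [h2, h4] at h1
  unfold levels
  omega

def lIso {n k : ℕ} (m : Fin (n-1) → Option Bool) (hL : (levels n m).card = k) :
    Fin k ≃o {x // x ∈ levels n m} := (levels n m).orderIsoOfFin hL

def Fmap {n k : ℕ} (m : Fin (n-1) → Option Bool) (hL : (levels n m).card = k)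
    (p : Fin (2*n) → Bool) : Finset (Fin k) :=
  univ.filter fun a => stepAt p (2 * (((lIso m hL a : {x // x ∈ levels n m}) : Fin (n-1)) : ℕ) + 1) = true

def cfun {n k : ℕ} (m : Fin (n-1) → Option Bool) (hL : (levels n m).card = k)
    (S : Finset (Fin k)) : ℕ → Bool := fun i =>
  if h : i < n - 1 then
    (if h2 : m ⟨i, h⟩ = none then
      decide (((lIso m hL).symm ⟨⟨i, h⟩, mem_levels.mpr h2⟩) ∈ S) else false)
  else false

lemma mem_Fmap {n k : ℕ} {m : Fin (n-1) → Option Bool} {hL : (levels n m).card = k}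
    {p : Fin (2*n) → Bool} {a : Fin k} :
    a ∈ Fmap m hL p ↔ stepAt p (2 * (((lIso m hL a : {x // x ∈ levels n m}) : Fin (n-1)) : ℕ) + 1) = true := by
  simp [Fmap]

lemma cfun_eq {n k : ℕ} {m : Fin (n-1) → Option Bool} {hL : (levels n m).card = k}
    (S : Finset (Fin k)) {i : ℕ} (hi : i < n-1) (h2 : m ⟨i, hi⟩ = none) :
    cfun m hL S i = decide (((lIso m hL).symm ⟨⟨i, hi⟩, mem_levels.mpr h2⟩) ∈ S) := by
  unfold cfun
  rw [dif_pos hi, dif_pos h2]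

lemma GF {n k : ℕ} {m : Fin (n-1) → Option Bool} {hL : (levels n m).card = k}
    {p : Fin (2*n) → Bool} (hn : 1 ≤ n) (hpD : IsDyck n p) (hθp : theta n p = m) :
    pathOf n m (cfun m hL (Fmap m hL p)) = p := by
  conv_rhs => rw [eq_pathOf hn hpD hθp]
  apply pathOf_congr
  intro i hi hnone
  rw [cfun_eq _ hi hnone]
  have hx : (((lIso m hL).symm ⟨⟨i, hi⟩, mem_levels.mpr hnone⟩) ∈ Fmap m hL p)
      ↔ stepAt p (2*i+1) = true := by
    rw [mem_Fmap, OrderIso.apply_symm_apply]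
  rcases hb : stepAt p (2*i+1)
  · simp [hx, hb]
  · simp [hx, hb]

lemma FG {n k : ℕ} {m : Fin (n-1) → Option Bool} {hL : (levels n m).card = k}
    (S : Finset (Fin k)) : Fmap m hL (pathOf n m (cfun m hL S)) = S := by
  ext a
  rw [mem_Fmap]
  have hi : (((lIso m hL a : {x // x ∈ levels n m}) : Fin (n-1)) : ℕ) < n - 1 :=
    ((lIso m hL a : {x // x ∈ levels n m}) : Fin (n-1)).isLt
  have hnone : m ⟨(((lIso m hL a : {x // x ∈ levels n m}) : Fin (n-1)) : ℕ), hi⟩ = none := by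
    rw [Fin.eta]
    exact mem_levels.mp (lIso m hL a).2
  rw [pathOf_odd m _ hi, hnone]
  show cfun m hL S (((lIso m hL a : {x // x ∈ levels n m}) : Fin (n-1)) : ℕ) = true ↔ a ∈ S
  rw [cfun_eq S hi hnone]
  have he : (⟨⟨(((lIso m hL a : {x // x ∈ levels n m}) : Fin (n-1)) : ℕ), hi⟩,
      mem_levels.mpr hnone⟩ : {x // x ∈ levels n m}) = lIso m hL a := by
    apply Subtype.ext
    apply Fin.ext
    rfl
  rw [he, OrderIso.symm_apply_apply]
  simp

lemma Fsub_iff {n k : ℕ} {m : Fin (n-1) → Option Bool} {hL : (levels n m).card = k}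
    {p q : Fin (2*n) → Bool} :
    (Fmap m hL p ⊆ Fmap m hL q) ↔
      ∀ i (hi : i < n-1), m ⟨i, hi⟩ = none →
        stepAt p (2*i+1) = true → stepAt q (2*i+1) = true := by
  constructor
  · intro hsub i hi hnone hsp
    have hmem : (⟨i, hi⟩ : Fin (n-1)) ∈ levels n m := mem_levels.mpr hnone
    have haF : (lIso m hL).symm ⟨⟨i, hi⟩, hmem⟩ ∈ Fmap m hL p := by
      rw [mem_Fmap, OrderIso.apply_symm_apply]
      exact hsp
    have h2 := hsub haF
    rw [mem_Fmap, OrderIso.apply_symm_apply] at h2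
    exact h2
  · intro hstep a haF
    rw [mem_Fmap] at haF ⊢
    exact hstep _ ((lIso m hL a : {x // x ∈ levels n m}) : Fin (n-1)).isLt
      (by rw [Fin.eta]; exact mem_levels.mp (lIso m hL a).2) haF

end SBD
namespace SBD
open Finset

lemma part3 {n : ℕ} (hn : 1 ≤ n) (m : Fin (n - 1) → Option Bool) (hm : IsMotzkin m) :
    ∃ e : {p : Fin (2 * n) → Bool // p ∈ (dyckSet n).filter fun p => theta n p = m}
          ≃ Finset (Fin (n - 1 - 2 * rkM m)),
      ∀ p q, dyckLE p.1 q.1 ↔ e p ⊆ e q := by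
  have hL : (levels n m).card = n - 1 - 2 * rkM m := levels_card hm
  have hmem : ∀ p : {p : Fin (2*n) → Bool // p ∈ (dyckSet n).filter fun p => theta n p = m},
      IsDyck n p.1 ∧ theta n p.1 = m := by
    intro p
    have h := mem_filter.mp p.2
    exact ⟨(mem_filter.mp h.1).2, h.2⟩
  have hmemG : ∀ S, pathOf n m (cfun m hL S) ∈ (dyckSet n).filter fun p => theta n p = m := by
    intro S
    refine mem_filter.mpr ⟨mem_filter.mpr ⟨mem_univ _, ?_⟩, theta_pathOf m _⟩
    exact isDyck_of hn hm (pathOf_zero m _ hn) (pathOf_last m _ hn) (theta_pathOf m _)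
  refine ⟨⟨fun p => Fmap m hL p.1, fun S => ⟨pathOf n m (cfun m hL S), hmemG S⟩, ?_, ?_⟩, ?_⟩
  · intro p
    exact Subtype.ext (GF hn (hmem p).1 (hmem p).2)
  · intro S
    exact FG S
  · intro p q
    have hp := hmem p
    have hq := hmem q
    simp only [Equiv.coe_fn_mk]
    rw [Fsub_iff]
    constructor
    · exact step_of_dyckLE hm (dyck_first hn hp.1) hp.2 (dyck_first hn hq.1) hq.2
    · exact dyckLE_of_step hm (dyck_first hn hp.1) hp.2 (dyck_first hn hq.1) hq.2

end SBD


/-- The Dyck paths of order `n` are partitioned by the fibers `B(m)` of `θ`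
over Motzkin paths `m`, and each fiber `B(m)` with `rk(m) = i`, with the order
pulled back from the noncrossing partition lattice, is isomorphic to the
boolean lattice `B_{n-1-2i}`: a symmetric boolean decomposition of `NC(n)`. -/
theorem symmetric_boolean_decomposition (n : ℕ) (hn : 1 ≤ n) :
    (dyckSet n =
      (motzSet n).biUnion fun m => (dyckSet n).filter fun p => theta n p = m) ∧
    (∀ m ∈ motzSet n, ∀ m' ∈ motzSet n, m ≠ m' →
      Disjoint ((dyckSet n).filter fun p => theta n p = m)
        ((dyckSet n).filter fun p => theta n p = m')) ∧
    ∀ m ∈ motzSet n,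
      ∃ e : {p : Fin (2 * n) → Bool // p ∈ (dyckSet n).filter fun p => theta n p = m}
            ≃ Finset (Fin (n - 1 - 2 * rkM m)),
        ∀ p q, dyckLE p.1 q.1 ↔ e p ⊆ e q := by
  refine ⟨?_, ?_, ?_⟩
  · ext p
    simp only [Finset.mem_biUnion]
    constructor
    · intro hp
      have hD : IsDyck n p := (Finset.mem_filter.mp hp).2
      refine ⟨theta n p, ?_, Finset.mem_filter.mpr ⟨hp, rfl⟩⟩
      exact Finset.mem_filter.mpr ⟨Finset.mem_univ _, SBD.theta_isMotzkin hn hD⟩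
    · rintro ⟨m, -, hp⟩
      exact (Finset.mem_filter.mp hp).1
  · intro m _ m' _ hne
    rw [Finset.disjoint_left]
    intro p hp hp'
    exact hne ((Finset.mem_filter.mp hp).2.symm.trans (Finset.mem_filter.mp hp').2)
  · intro m hmm
    exact SBD.part3 hn m (Finset.mem_filter.mp hmm).2
end

section
/- The rank generating function of the noncrossing partition lattice satisfies NC(n;t) = sum over π in NC(n) of t^(rk(π)) = sum over j with 0 ≤ 2j ≤ n-1 of C_j * binomial(n-1, 2j) * t^j * (1+t)^(n-1-2j), where C_j is the j-th Catalan number. -/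
open Finset

/-- Two blocks `B`, `B'` cross if there are `a < a' < b < b'` with `a, b ∈ B`
and `a', b' ∈ B'`.  A partition is noncrossing if no two distinct blocks
cross. -/
def Noncrossing {n : ℕ} (P : Finpartition (Finset.univ : Finset (Fin n))) : Prop :=
  ∀ B ∈ P.parts, ∀ B' ∈ P.parts, B ≠ B' →
    ¬ ∃ a a' b b' : Fin n, a ∈ B ∧ b ∈ B ∧ a' ∈ B' ∧ b' ∈ B' ∧
      a < a' ∧ a' < b ∧ b < b'

section Transport

variable {α : Type*} [LinearOrder α] [DecidableEq α]

/-- Noncrossing predicate for finpartitions of a finset in a linear order. -/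
def NCPred {s : Finset α} (P : Finpartition s) : Prop :=
  ∀ B ∈ P.parts, ∀ B' ∈ P.parts, B ≠ B' →
    ¬ ∃ a a' b b' : α, a ∈ B ∧ b ∈ B ∧ a' ∈ B' ∧ b' ∈ B' ∧
      a < a' ∧ a' < b ∧ b < b'

open scoped Classical in
/-- Rank generating function of noncrossing partitions of `s`. -/
noncomputable def ncrgf (s : Finset α) (t : ℝ) : ℝ :=
  ∑ P ∈ Finset.univ.filter (fun P : Finpartition s => NCPred P),
    t ^ (s.card - P.parts.card)

variable {β : Type*} [LinearOrder β] [DecidableEq β]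

lemma mem_part_iff {s : Finset α} (P : Finpartition s) {x : α} {B : Finset α}
    (hB : B ∈ P.parts) : x ∈ B ↔ x ∈ s ∧ P.part x = B := by
  constructor
  · intro hx
    have hxs : x ∈ s := P.le hB hx
    exact ⟨hxs, P.part_eq_of_mem hB hx⟩
  · rintro ⟨hxs, rfl⟩
    exact P.mem_part hxs

/-- Push a finpartition forward along an order embedding. -/
def pmap (g : α ↪o β) {s : Finset α} (P : Finpartition s) :
    Finpartition (s.image g) where
  parts := P.parts.image (Finset.image g)
  supIndep := by
    rw [Finset.supIndep_iff_pairwiseDisjoint]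
    rintro B hB C hC hBC
    simp only [coe_image, Set.mem_image, mem_coe] at hB hC
    obtain ⟨B₀, hB₀, rfl⟩ := hB
    obtain ⟨C₀, hC₀, rfl⟩ := hC
    have hne : B₀ ≠ C₀ := by rintro rfl; exact hBC rfl
    have := P.disjoint hB₀ hC₀ hne
    simpa only [Function.onFun, id, Finset.disjoint_image g.injective] using this
  sup_parts := by
    ext x
    simp only [Finset.mem_sup, Finset.mem_image, id]
    constructor
    · rintro ⟨B, ⟨B₀, hB₀, rfl⟩, hx⟩
      obtain ⟨a, ha, rfl⟩ := Finset.mem_image.1 hx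
      exact ⟨a, P.le hB₀ ha, rfl⟩
    · rintro ⟨a, ha, rfl⟩
      refine ⟨(P.part a).image g, ⟨P.part a, P.part_mem.2 ha, rfl⟩, ?_⟩
      exact Finset.mem_image_of_mem _ (P.mem_part ha)
  bot_notMem := by
    intro h
    simp only [Finset.bot_eq_empty, Finset.mem_image] at h
    obtain ⟨B₀, hB₀, hB₀e⟩ := h
    rw [Finset.image_eq_empty] at hB₀e
    subst hB₀e
    exact P.bot_notMem hB₀

@[simp] lemma pmap_parts (g : α ↪o β) {s : Finset α} (P : Finpartition s) :
    (pmap g P).parts = P.parts.image (Finset.image g) := rfl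

lemma pmap_parts_card (g : α ↪o β) {s : Finset α} (P : Finpartition s) :
    (pmap g P).parts.card = P.parts.card := by
  rw [pmap_parts]
  exact Finset.card_image_of_injective _ (Finset.image_injective g.injective)

lemma ncpred_pmap (g : α ↪o β) {s : Finset α} (P : Finpartition s) :
    NCPred (pmap g P) ↔ NCPred P := by
  constructor
  · intro h B hB C hC hBC ⟨a, a', b, b', ha, hb, ha', hb', h1, h2, h3⟩
    refine h (B.image g) (Finset.mem_image_of_mem _ hB) (C.image g)
      (Finset.mem_image_of_mem _ hC) ?_
      ⟨g a, g a', g b, g b', Finset.mem_image_of_mem _ ha, Finset.mem_image_of_mem _ hb,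
        Finset.mem_image_of_mem _ ha', Finset.mem_image_of_mem _ hb', by
          simpa using h1, by simpa using h2, by simpa using h3⟩
    intro hc
    exact hBC (Finset.image_injective g.injective hc)
  · intro h B hB C hC hBC ⟨a, a', b, b', ha, hb, ha', hb', h1, h2, h3⟩
    simp only [pmap_parts, Finset.mem_image] at hB hC
    obtain ⟨B₀, hB₀, rfl⟩ := hB
    obtain ⟨C₀, hC₀, rfl⟩ := hC
    obtain ⟨a₀, ha₀, rfl⟩ := Finset.mem_image.1 ha
    obtain ⟨b₀, hb₀, rfl⟩ := Finset.mem_image.1 hb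
    obtain ⟨a₀', ha₀', rfl⟩ := Finset.mem_image.1 ha'
    obtain ⟨b₀', hb₀', rfl⟩ := Finset.mem_image.1 hb'
    have hne : B₀ ≠ C₀ := by rintro rfl; exact hBC rfl
    exact h B₀ hB₀ C₀ hC₀ hne ⟨a₀, a₀', b₀, b₀', ha₀, hb₀, ha₀', hb₀',
      by simpa using h1, by simpa using h2, by simpa using h3⟩

/-- Pull a finpartition back along an order embedding. -/
noncomputable def pcomap (g : α ↪o β) {u : Finset β} (Q : Finpartition u) :
    Finpartition (u.preimage g g.injective.injOn) where
  parts := (Q.parts.image (fun B => B.preimage g g.injective.injOn)).erase ∅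
  supIndep := by
    rw [Finset.supIndep_iff_pairwiseDisjoint]
    rintro B hB C hC hBC
    simp only [coe_erase, Set.mem_diff, coe_image, Set.mem_image, mem_coe] at hB hC
    obtain ⟨⟨B₀, hB₀, rfl⟩, -⟩ := hB
    obtain ⟨⟨C₀, hC₀, rfl⟩, -⟩ := hC
    have hne : B₀ ≠ C₀ := by rintro rfl; exact hBC rfl
    have hd := Q.disjoint hB₀ hC₀ hne
    simp only [Function.onFun, id] at hd ⊢
    rw [Finset.disjoint_left] at hd ⊢
    intro x hx hy
    exact hd (Finset.mem_preimage.1 hx) (Finset.mem_preimage.1 hy)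
  sup_parts := by
    ext x
    simp only [Finset.mem_sup, Finset.mem_erase, Finset.mem_image, id, Finset.mem_preimage]
    constructor
    · rintro ⟨B, ⟨-, B₀, hB₀, rfl⟩, hx⟩
      exact Q.le hB₀ (Finset.mem_preimage.1 hx)
    · intro hx
      refine ⟨(Q.part (g x)).preimage g g.injective.injOn, ⟨?_, Q.part (g x), Q.part_mem.2 hx, rfl⟩,
        Finset.mem_preimage.2 (Q.mem_part hx)⟩
      intro he
      have : x ∈ ((Q.part (g x)).preimage g g.injective.injOn) :=
        Finset.mem_preimage.2 (Q.mem_part hx)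
      rw [he] at this
      exact absurd this (Finset.notMem_empty x)
  bot_notMem := by simp [Finset.bot_eq_empty]
@[simp] lemma pcomap_parts (g : α ↪o β) {u : Finset β} (Q : Finpartition u) :
    (pcomap g Q).parts = (Q.parts.image (fun B => B.preimage g g.injective.injOn)).erase ∅ := rfl

lemma preimage_image_finset (g : α ↪o β) (s : Finset α) :
    (s.image g).preimage g g.injective.injOn = s := by
  ext x; simp [Finset.mem_preimage, g.injective.eq_iff]

lemma image_preimage_finset (g : α ↪o β) {s : Finset α} {B : Finset β}
    (hB : B ⊆ s.image g) : (B.preimage g g.injective.injOn).image g = B := by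
  ext y
  simp only [Finset.mem_image, Finset.mem_preimage]
  constructor
  · rintro ⟨a, ha, rfl⟩; exact ha
  · intro hy
    obtain ⟨a, -, rfl⟩ := Finset.mem_image.1 (hB hy)
    exact ⟨a, hy, rfl⟩

lemma ncpred_copy {s u : Finset α} (P : Finpartition s) (h : s = u) :
    NCPred (P.copy h) ↔ NCPred P := Iff.rfl

lemma pcomap_pmap (g : α ↪o β) {s : Finset α} (P : Finpartition s) :
    (pcomap g (pmap g P)).copy (preimage_image_finset g s) = P := by
  apply Finpartition.ext
  ext B
  simp only [Finpartition.copy, pcomap_parts, pmap_parts]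
  rw [Finset.image_image, Finset.mem_erase]
  constructor
  · rintro ⟨hne, hB⟩
    obtain ⟨B₀, hB₀, rfl⟩ := Finset.mem_image.1 hB
    rwa [Function.comp_apply, preimage_image_finset g B₀]
  · intro hB
    refine ⟨?_, Finset.mem_image.2 ⟨B, hB, by rw [Function.comp_apply, preimage_image_finset g B]⟩⟩
    intro he
    exact P.bot_notMem (by rw [Finset.bot_eq_empty, ← he]; exact hB)

lemma pmap_pcomap (g : α ↪o β) {s : Finset α} (Q : Finpartition (s.image g)) :
    pmap g ((pcomap g Q).copy (preimage_image_finset g s)) = Q := by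
  apply Finpartition.ext
  ext B
  simp only [pmap_parts, Finpartition.copy, pcomap_parts]
  constructor
  · intro hB
    obtain ⟨C, hC, rfl⟩ := Finset.mem_image.1 hB
    rw [Finset.mem_erase] at hC
    obtain ⟨-, hC2⟩ := hC
    obtain ⟨C₀, hC₀, rfl⟩ := Finset.mem_image.1 hC2
    rwa [image_preimage_finset g (Q.le hC₀)]
  · intro hB
    refine Finset.mem_image.2 ⟨B.preimage g g.injective.injOn, Finset.mem_erase.2
      ⟨?_, Finset.mem_image.2 ⟨B, hB, rfl⟩⟩, image_preimage_finset g (Q.le hB)⟩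
    intro he
    have : B = ∅ := by
      have := congrArg (Finset.image g) he
      rwa [image_preimage_finset g (Q.le hB), Finset.image_empty] at this
    exact Q.bot_notMem (by rw [Finset.bot_eq_empty, ← this]; exact hB)

open scoped Classical in
lemma ncrgf_map (g : α ↪o β) (s : Finset α) (t : ℝ) :
    ncrgf (s.image g) t = ncrgf s t := by
  classical
  rw [ncrgf, ncrgf]
  refine (Finset.sum_bij' (fun Q _ => (pcomap g Q).copy (preimage_image_finset g s))
    (fun P _ => pmap g P) ?_ ?_ ?_ ?_ ?_)
  · intro Q hQ
    rw [Finset.mem_filter] at hQ ⊢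
    refine ⟨Finset.mem_univ _, ?_⟩
    rw [← ncpred_pmap g, pmap_pcomap g Q]
    exact hQ.2
  · intro P hP
    rw [Finset.mem_filter] at hP ⊢
    exact ⟨Finset.mem_univ _, (ncpred_pmap g P).2 hP.2⟩
  · intro Q _
    exact pmap_pcomap g Q
  · intro P _
    exact pcomap_pmap g P
  · intro Q _
    have h1 : ((pcomap g Q).copy (preimage_image_finset g s)).parts.card = Q.parts.card := by
      conv_rhs => rw [← pmap_pcomap g Q]
      rw [pmap_parts_card]
    rw [Finset.card_image_of_injective _ g.injective, h1]

end Transport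

/-- The noncrossing rank generating polynomial, as a function of the cardinality. -/
noncomputable def pnc (k : ℕ) (t : ℝ) : ℝ := ncrgf (Finset.range k) t

lemma image_univ_orderEmb {k : ℕ} (g : Fin k ↪o ℕ) (s : Finset ℕ)
    (h : Set.range g = (s : Set ℕ)) : (Finset.univ : Finset (Fin k)).image g = s := by
  apply Finset.coe_injective
  rw [Finset.coe_image, Finset.coe_univ, Set.image_univ, h]

lemma ncrgf_card (s : Finset ℕ) (t : ℝ) : ncrgf s t = pnc s.card t := by
  have h1 : ncrgf s t = ncrgf (Finset.univ : Finset (Fin s.card)) t := by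
    conv_lhs => rw [← image_univ_orderEmb (s.orderEmbOfFin rfl) s (s.range_orderEmbOfFin rfl)]
    rw [ncrgf_map]
  have h2 : pnc s.card t = ncrgf (Finset.univ : Finset (Fin s.card)) t := by
    have hr : Set.range (Fin.valOrderEmb s.card) = ((Finset.range s.card : Finset ℕ) : Set ℕ) := by
      ext x
      simp only [Set.mem_range, Finset.coe_range, Set.mem_Iio]
      constructor
      · rintro ⟨i, rfl⟩; exact i.2
      · intro hx; exact ⟨⟨x, hx⟩, rfl⟩
    rw [pnc, ← image_univ_orderEmb (Fin.valOrderEmb s.card) (Finset.range s.card) hr, ncrgf_map]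
  rw [h1, h2]


section Decomp

variable {n : ℕ}

lemma zero_mem_range : (0 : ℕ) ∈ Finset.range (n+1) := Finset.mem_range.2 (Nat.succ_pos n)

/-- second-smallest element of the block of 0. -/
noncomputable def m0 (P : Finpartition (Finset.range (n+1))) : ℕ :=
  sInf {x : ℕ | x ∈ (P.part 0).erase 0}

lemma erase_nonempty {P : Finpartition (Finset.range (n+1))} (hB : P.part 0 ≠ {0}) :
    ((P.part 0).erase 0).Nonempty := by
  rcases Finset.eq_empty_or_nonempty ((P.part 0).erase 0) with h | h
  · exfalso
    apply hB
    have h0 : 0 ∈ P.part 0 := P.mem_part zero_mem_range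
    apply Finset.Subset.antisymm
    · intro x hx
      rcases eq_or_ne x 0 with rfl | hne
      · exact Finset.mem_singleton_self 0
      · exact absurd (Finset.mem_erase.2 ⟨hne, hx⟩) (h ▸ Finset.notMem_empty x)
    · simpa using h0
  · exact h

lemma m0_mem {P : Finpartition (Finset.range (n+1))} (hB : P.part 0 ≠ {0}) :
    m0 P ∈ (P.part 0).erase 0 := by
  have := Nat.sInf_mem (s := {x : ℕ | x ∈ (P.part 0).erase 0}) (erase_nonempty hB)
  exact this

lemma m0_le {P : Finpartition (Finset.range (n+1))} {y : ℕ}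
    (hy : y ∈ (P.part 0).erase 0) : m0 P ≤ y := Nat.sInf_le hy

lemma m0_pos {P : Finpartition (Finset.range (n+1))} (hB : P.part 0 ≠ {0}) : 1 ≤ m0 P := by
  have := m0_mem hB
  rw [Finset.mem_erase] at this
  omega

lemma m0_le_n {P : Finpartition (Finset.range (n+1))} (hB : P.part 0 ≠ {0}) : m0 P ≤ n := by
  have h := P.le (P.part_mem.2 zero_mem_range) (Finset.mem_of_mem_erase (m0_mem hB))
  rw [Finset.mem_range] at h
  omega

/-- the separation lemma: every block other than the block of `0` lies entirely
below or entirely above `m0 P`. -/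
lemma part_sep {P : Finpartition (Finset.range (n+1))} (hNC : NCPred P)
    (hB : P.part 0 ≠ {0}) {C : Finset ℕ} (hC : C ∈ P.parts) (hCB : C ≠ P.part 0) :
    C ⊆ Finset.Ico 1 (m0 P) ∨ C ⊆ Finset.Ico (m0 P) (n+1) := by
  have hzero : (0 : ℕ) ∉ C := by
    intro h0
    exact hCB (P.eq_of_mem_parts hC (P.part_mem.2 zero_mem_range) h0 (P.mem_part zero_mem_range))
  have hCr : C ⊆ Finset.range (n+1) := P.le hC
  by_cases hlow : C ⊆ Finset.Ico 1 (m0 P)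
  · exact Or.inl hlow
  · right
    rw [Finset.not_subset] at hlow
    obtain ⟨y, hyC, hy⟩ := hlow
    have hy1 : 1 ≤ y := by
      rcases Nat.eq_zero_or_pos y with rfl | h
      · exact absurd hyC hzero
      · exact h
    have hyn : y < n + 1 := Finset.mem_range.1 (hCr hyC)
    have hym : m0 P ≤ y := by
      rw [Finset.mem_Ico] at hy; omega
    have hmnotC : m0 P ∉ C := by
      intro h
      have := P.eq_of_mem_parts hC (P.part_mem.2 zero_mem_range) h
        (Finset.mem_of_mem_erase (m0_mem hB))
      exact hCB this
    have hym' : m0 P < y := lt_of_le_of_ne hym (fun h => hmnotC (h ▸ hyC))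
    intro z hzC
    rw [Finset.mem_Ico]
    have hzn : z < n + 1 := Finset.mem_range.1 (hCr hzC)
    refine ⟨?_, hzn⟩
    by_contra hzm
    push_neg at hzm
    have hz1 : 1 ≤ z := by
      rcases Nat.eq_zero_or_pos z with rfl | h
      · exact absurd hzC hzero
      · exact h
    -- crossing 0 < z < m0 P < y with 0, m0 ∈ part 0 and z, y ∈ C
    exact hNC (P.part 0) (P.part_mem.2 zero_mem_range) C hC (Ne.symm hCB)
      ⟨0, z, m0 P, y, P.mem_part zero_mem_range,
        Finset.mem_of_mem_erase (m0_mem hB), hzC, hyC, by omega, by omega, hym'⟩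

lemma sup_filter_subset (P : Finpartition (Finset.range (n+1))) (u : Finset ℕ)
    (h : ∀ x ∈ u, x ∈ Finset.range (n+1) ∧ P.part x ⊆ u) :
    (P.parts.filter (· ⊆ u)).sup id = u := by
  apply Finset.Subset.antisymm
  · intro x hx
    rw [Finset.mem_sup] at hx
    obtain ⟨B, hB, hxB⟩ := hx
    exact (Finset.mem_filter.1 hB).2 hxB
  · intro x hx
    rw [Finset.mem_sup]
    exact ⟨P.part x, Finset.mem_filter.2 ⟨P.part_mem.2 (h x hx).1, (h x hx).2⟩,
      P.mem_part (h x hx).1⟩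

lemma part_ne_zero_part {P : Finpartition (Finset.range (n+1))} {x : ℕ}
    (hx : x ∈ Finset.range (n+1)) (hx0 : x ≠ 0) (h0 : 0 ∈ P.part x) :
    P.part x = P.part 0 :=
  P.eq_of_mem_parts (P.part_mem.2 hx) (P.part_mem.2 zero_mem_range) h0 (P.mem_part zero_mem_range)


/-- Remove the singleton block `{0}`. -/
def split0 (P : Finpartition (Finset.range (n+1))) (h : P.part 0 = {0}) :
    Finpartition (Finset.Ico 1 (n+1)) :=
  P.ofSubset (Finset.filter_subset (· ⊆ Finset.Ico 1 (n+1)) P.parts)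
    (sup_filter_subset P _ (by
      intro x hx
      rw [Finset.mem_Ico] at hx
      have hxr : x ∈ Finset.range (n+1) := Finset.mem_range.2 hx.2
      refine ⟨hxr, ?_⟩
      intro z hz
      rw [Finset.mem_Ico]
      have hzr := Finset.mem_range.1 (P.le (P.part_mem.2 hxr) hz)
      rcases Nat.eq_zero_or_pos z with rfl | hz1
      · exfalso
        have he : P.part x = {0} := (part_ne_zero_part hxr (by omega) hz).trans h
        have hx0 : x ∈ ({0} : Finset ℕ) := he ▸ P.mem_part hxr
        rw [Finset.mem_singleton] at hx0
        omega
      · exact ⟨hz1, hzr⟩))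

lemma Ico_sup_zero : Finset.Ico 1 (n+1) ⊔ ({0} : Finset ℕ) = Finset.range (n+1) := by
  ext x
  simp only [Finset.sup_eq_union, Finset.mem_union, Finset.mem_Ico, Finset.mem_singleton,
    Finset.mem_range]
  omega

/-- Add back the singleton block `{0}`. -/
def ext0 (π' : Finpartition (Finset.Ico 1 (n+1))) : Finpartition (Finset.range (n+1)) :=
  π'.extend (b := ({0} : Finset ℕ)) (by simp [Finset.bot_eq_empty])
    (by
      rw [Finset.disjoint_right]
      intro x hx
      rw [Finset.mem_singleton] at hx
      subst hx
      simp)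
    Ico_sup_zero

lemma ext0_parts (π' : Finpartition (Finset.Ico 1 (n+1))) :
    (ext0 π').parts = insert ({0} : Finset ℕ) π'.parts := rfl

lemma zero_singleton_not_mem (π' : Finpartition (Finset.Ico 1 (n+1))) :
    ({0} : Finset ℕ) ∉ π'.parts := by
  intro h
  have := π'.le h (Finset.mem_singleton_self 0)
  rw [Finset.mem_Ico] at this
  omega

lemma ext0_card (π' : Finpartition (Finset.Ico 1 (n+1))) :
    (ext0 π').parts.card = π'.parts.card + 1 := by
  rw [ext0_parts, Finset.card_insert_of_notMem (zero_singleton_not_mem π')]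

lemma ext0_ncpred {π' : Finpartition (Finset.Ico 1 (n+1))} (h : NCPred π') :
    NCPred (ext0 π') := by
  intro D hD E hE hne hex
  obtain ⟨a, a', b, b', ha, hb, ha', hb', h1, h2, h3⟩ := hex
  rw [ext0_parts, Finset.mem_insert] at hD hE
  rcases hD with rfl | hD
  · rw [Finset.mem_singleton] at ha hb
    omega
  · rcases hE with rfl | hE
    · rw [Finset.mem_singleton] at ha' hb'
      omega
    · exact h D hD E hE hne ⟨a, a', b, b', ha, hb, ha', hb', h1, h2, h3⟩

lemma ext0_part_zero (π' : Finpartition (Finset.Ico 1 (n+1))) :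
    (ext0 π').part 0 = {0} :=
  (ext0 π').part_eq_of_mem (by rw [ext0_parts]; exact Finset.mem_insert_self _ _)
    (Finset.mem_singleton_self 0)

lemma split0_ncpred {P : Finpartition (Finset.range (n+1))} (hNC : NCPred P)
    (h : P.part 0 = {0}) : NCPred (split0 P h) := by
  intro D hD E hE hne hex
  exact hNC D (Finset.filter_subset _ _ hD) E (Finset.filter_subset _ _ hE) hne hex

lemma split0_parts (P : Finpartition (Finset.range (n+1))) (h : P.part 0 = {0}) :
    (split0 P h).parts = P.parts.filter (· ⊆ Finset.Ico 1 (n+1)) := rfl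

lemma ext0_split0 {P : Finpartition (Finset.range (n+1))} (h : P.part 0 = {0}) :
    ext0 (split0 P h) = P := by
  apply Finpartition.ext
  ext C
  rw [ext0_parts, split0_parts, Finset.mem_insert, Finset.mem_filter]
  constructor
  · rintro (rfl | ⟨hC, -⟩)
    · rw [← h]; exact P.part_mem.2 zero_mem_range
    · exact hC
  · intro hC
    by_cases h0 : (0 : ℕ) ∈ C
    · left
      rw [← h]
      exact (P.eq_of_mem_parts hC (P.part_mem.2 zero_mem_range) h0 (P.mem_part zero_mem_range))
    · right
      refine ⟨hC, ?_⟩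
      intro z hz
      have hzr := Finset.mem_range.1 (P.le hC hz)
      rw [Finset.mem_Ico]
      rcases Nat.eq_zero_or_pos z with rfl | hz1
      · exact absurd hz h0
      · exact ⟨hz1, hzr⟩

lemma split0_ext0 (π' : Finpartition (Finset.Ico 1 (n+1))) :
    split0 (ext0 π') (ext0_part_zero π') = π' := by
  apply Finpartition.ext
  ext C
  rw [split0_parts, Finset.mem_filter, ext0_parts, Finset.mem_insert]
  constructor
  · rintro ⟨rfl | hC, hsub⟩
    · exfalso
      have := hsub (Finset.mem_singleton_self 0)
      rw [Finset.mem_Ico] at this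
      omega
    · exact hC
  · intro hC
    exact ⟨Or.inr hC, π'.le hC⟩

variable {m : ℕ}

lemma mem_of_part_Ico {a b : ℕ} {π : Finpartition (Finset.Ico a b)} {C : Finset ℕ}
    (hC : C ∈ π.parts) {e : ℕ} (he : e ∈ C) : a ≤ e ∧ e < b :=
  Finset.mem_Ico.1 (π.le hC he)

lemma m_mem_Ico (hm2 : m ≤ n) : m ∈ Finset.Ico m (n+1) :=
  Finset.mem_Ico.2 ⟨le_rfl, by omega⟩

/-- Glue partitions of `[1,m)` and `[m,n+1)` into a partition of `[0,n+1)`,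
joining `0` to the block of `m`. -/
def glue (hm1 : 1 ≤ m) (hm2 : m ≤ n) (π₁ : Finpartition (Finset.Ico 1 m))
    (π₂ : Finpartition (Finset.Ico m (n+1))) : Finpartition (Finset.range (n+1)) where
  parts := insert (insert 0 (π₂.part m))
    (π₁.parts ∪ (π₂.parts.erase (π₂.part m)))
  supIndep := by
    rw [Finset.supIndep_iff_pairwiseDisjoint, Finset.coe_insert, Finset.coe_union]
    refine Set.PairwiseDisjoint.insert ?_ ?_
    · rw [Set.pairwiseDisjoint_union]
      refine ⟨π₁.disjoint, π₂.disjoint.subset (by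
          rw [Finset.coe_subset]; exact Finset.erase_subset _ _), ?_⟩
      intro D hD E hE _
      rw [Finset.mem_coe] at hD hE
      simp only [Function.onFun, id]
      rw [Finset.disjoint_left]
      intro x hxD hxE
      have h1 := mem_of_part_Ico hD hxD
      have h2 := mem_of_part_Ico (Finset.mem_of_mem_erase hE) hxE
      omega
    · intro D hD hne
      rw [Set.mem_union, Finset.mem_coe, Finset.mem_coe] at hD
      simp only [id]
      rw [Finset.disjoint_left]
      intro x hxX hxD
      rw [Finset.mem_insert] at hxX
      rcases hD with hD | hD
      · have h1 := mem_of_part_Ico hD hxD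
        rcases hxX with rfl | hxB
        · omega
        · have h2 := mem_of_part_Ico (π₂.part_mem.2 (m_mem_Ico hm2)) hxB
          omega
      · have hDp := Finset.mem_of_mem_erase hD
        have hDne := Finset.ne_of_mem_erase hD
        rcases hxX with rfl | hxB
        · have := mem_of_part_Ico hDp hxD
          omega
        · exact Finset.disjoint_left.1 (π₂.disjoint (π₂.part_mem.2 (m_mem_Ico hm2)) hDp
            (Ne.symm hDne)) hxB hxD
  sup_parts := by
    ext x
    rw [Finset.mem_sup]
    constructor
    · rintro ⟨B, hB, hxB⟩
      rw [Finset.mem_insert] at hB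
      rw [Finset.mem_range]
      rcases hB with rfl | hB
      · rw [id, Finset.mem_insert] at hxB
        rcases hxB with rfl | hxB
        · omega
        · have := mem_of_part_Ico (π₂.part_mem.2 (m_mem_Ico hm2)) hxB
          omega
      · rw [Finset.mem_union] at hB
        rcases hB with hB | hB
        · have := mem_of_part_Ico hB hxB
          omega
        · have := mem_of_part_Ico (Finset.mem_of_mem_erase hB) hxB
          omega
    · intro hx
      rw [Finset.mem_range] at hx
      rcases Nat.eq_zero_or_pos x with rfl | hx1
      · exact ⟨insert 0 (π₂.part m), Finset.mem_insert_self _ _, Finset.mem_insert_self _ _⟩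
      · by_cases hxm : x < m
        · have hxI : x ∈ Finset.Ico 1 m := Finset.mem_Ico.2 ⟨hx1, hxm⟩
          exact ⟨π₁.part x, Finset.mem_insert.2 (Or.inr (Finset.mem_union_left _
            (π₁.part_mem.2 hxI))), π₁.mem_part hxI⟩
        · have hxI : x ∈ Finset.Ico m (n+1) := Finset.mem_Ico.2 ⟨by omega, by omega⟩
          by_cases hxB : π₂.part x = π₂.part m
          · refine ⟨insert 0 (π₂.part m), Finset.mem_insert_self _ _, ?_⟩
            rw [id, Finset.mem_insert, ← hxB]
            exact Or.inr (π₂.mem_part hxI)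
          · exact ⟨π₂.part x, Finset.mem_insert.2 (Or.inr (Finset.mem_union_right _
              (Finset.mem_erase.2 ⟨hxB, π₂.part_mem.2 hxI⟩))), π₂.mem_part hxI⟩
  bot_notMem := by
    rw [Finset.bot_eq_empty, Finset.mem_insert, Finset.mem_union]
    push_neg
    refine ⟨?_, ?_, ?_⟩
    · intro h
      have : (0 : ℕ) ∈ (∅ : Finset ℕ) := h ▸ Finset.mem_insert_self _ _
      exact absurd this (Finset.notMem_empty 0)
    · intro h; exact π₁.bot_notMem (by rw [Finset.bot_eq_empty]; exact h)
    · intro h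
      exact π₂.bot_notMem (by rw [Finset.bot_eq_empty]; exact Finset.mem_of_mem_erase h)

lemma glue_parts (hm1 : 1 ≤ m) (hm2 : m ≤ n) (π₁ : Finpartition (Finset.Ico 1 m))
    (π₂ : Finpartition (Finset.Ico m (n+1))) :
    (glue hm1 hm2 π₁ π₂).parts = insert (insert 0 (π₂.part m))
      (π₁.parts ∪ (π₂.parts.erase (π₂.part m))) := rfl

lemma B2_not_zero (hm1 : 1 ≤ m) {π₂ : Finpartition (Finset.Ico m (n+1))} {C : Finset ℕ}
    (hC : C ∈ π₂.parts) : (0 : ℕ) ∉ C := by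
  intro h
  have := mem_of_part_Ico hC h
  omega

lemma glue_ncpred (hm1 : 1 ≤ m) (hm2 : m ≤ n) {π₁ : Finpartition (Finset.Ico 1 m)}
    {π₂ : Finpartition (Finset.Ico m (n+1))} (h₁ : NCPred π₁) (h₂ : NCPred π₂) :
    NCPred (glue hm1 hm2 π₁ π₂) := by
  intro D hD E hE hne hex
  obtain ⟨a, a', b, b', ha, hb, ha', hb', hlt1, hlt2, hlt3⟩ := hex
  rw [glue_parts, Finset.mem_insert, Finset.mem_union] at hD hE
  set X := insert 0 (π₂.part m) with hX
  have hB₂mem : π₂.part m ∈ π₂.parts := π₂.part_mem.2 (m_mem_Ico hm2)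
  have hmB₂ : m ∈ π₂.part m := π₂.mem_part (m_mem_Ico hm2)
  -- helper: bounds
  have bnd1 : ∀ {C : Finset ℕ}, C ∈ π₁.parts → ∀ {e : ℕ}, e ∈ C → 1 ≤ e ∧ e < m :=
    fun {C} hC {e} he => mem_of_part_Ico hC he
  have bnd2 : ∀ {C : Finset ℕ}, C ∈ π₂.parts → ∀ {e : ℕ}, e ∈ C → m ≤ e ∧ e < n + 1 :=
    fun {C} hC {e} he => mem_of_part_Ico hC he
  have memX : ∀ {e : ℕ}, e ∈ X → e = 0 ∨ (e ∈ π₂.part m ∧ m ≤ e) := by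
    intro e he
    rw [hX, Finset.mem_insert] at he
    rcases he with rfl | he
    · exact Or.inl rfl
    · exact Or.inr ⟨he, (bnd2 hB₂mem he).1⟩
  rcases hD with rfl | hD | hD
  · -- D = X
    rcases hE with rfl | hE | hE
    · exact hne rfl
    · -- E ∈ π₁.parts : a' < m, b' < m, but b ∈ X with a' < b so b ∈ B₂, b ≥ m, b < b' < m
      have h1 := bnd1 hE ha'
      have h2 := bnd1 hE hb'
      rcases memX hb with rfl | ⟨-, hbm⟩ <;> omega
    · -- E ∈ π₂.parts.erase B₂
      have hEp := Finset.mem_of_mem_erase hE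
      have hEne : E ≠ π₂.part m := Finset.ne_of_mem_erase hE
      have h1 := bnd2 hEp ha'
      have hbB : b ∈ π₂.part m := by
        rcases memX hb with rfl | ⟨hb', -⟩
        · omega
        · exact hb'
      rcases memX ha with rfl | ⟨haB, -⟩
      · -- a = 0: replace a by m
        have hma' : m < a' := by
          rcases lt_or_eq_of_le h1.1 with h | h
          · exact h
          · exfalso
            exact Finset.disjoint_left.1 (π₂.disjoint hB₂mem hEp (Ne.symm hEne)) hmB₂ (h ▸ ha')
        exact h₂ (π₂.part m) hB₂mem E hEp (Ne.symm hEne)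
          ⟨m, a', b, b', hmB₂, hbB, ha', hb', hma', hlt2, hlt3⟩
      · exact h₂ (π₂.part m) hB₂mem E hEp (Ne.symm hEne)
          ⟨a, a', b, b', haB, hbB, ha', hb', hlt1, hlt2, hlt3⟩
  · -- D ∈ π₁.parts
    have hDa := bnd1 hD ha
    have hDb := bnd1 hD hb
    rcases hE with rfl | hE | hE
    · -- E = X : a' ∈ X, a < a' so a' ≠ 0, a' ∈ B₂ so a' ≥ m, a' < b < m contra
      rcases memX ha' with rfl | ⟨-, h⟩ <;> omega
    · exact h₁ D hD E hE hne ⟨a, a', b, b', ha, hb, ha', hb', hlt1, hlt2, hlt3⟩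
    · have := bnd2 (Finset.mem_of_mem_erase hE) ha'
      omega
  · -- D ∈ π₂.parts.erase B₂
    have hDp := Finset.mem_of_mem_erase hD
    have hDne : D ≠ π₂.part m := Finset.ne_of_mem_erase hD
    have hDa := bnd2 hDp ha
    have hDb := bnd2 hDp hb
    rcases hE with rfl | hE | hE
    · -- E = X : a', b' ∈ X, both > a ≥ m ≥ 1 so in B₂
      have ha'B : a' ∈ π₂.part m := by
        rcases memX ha' with rfl | ⟨h, -⟩
        · omega
        · exact h
      have hb'B : b' ∈ π₂.part m := by
        rcases memX hb' with rfl | ⟨h, -⟩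
        · omega
        · exact h
      exact h₂ D hDp (π₂.part m) hB₂mem hDne
        ⟨a, a', b, b', ha, hb, ha'B, hb'B, hlt1, hlt2, hlt3⟩
    · have := bnd1 hE ha'
      omega
    · exact h₂ D hDp E (Finset.mem_of_mem_erase hE) hne
        ⟨a, a', b, b', ha, hb, ha', hb', hlt1, hlt2, hlt3⟩

lemma glue_part_zero (hm1 : 1 ≤ m) (hm2 : m ≤ n) (π₁ : Finpartition (Finset.Ico 1 m))
    (π₂ : Finpartition (Finset.Ico m (n+1))) :
    (glue hm1 hm2 π₁ π₂).part 0 = insert 0 (π₂.part m) :=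
  (glue hm1 hm2 π₁ π₂).part_eq_of_mem
    (by rw [glue_parts]; exact Finset.mem_insert_self _ _) (Finset.mem_insert_self _ _)

lemma glue_part_zero_ne (hm1 : 1 ≤ m) (hm2 : m ≤ n) (π₁ : Finpartition (Finset.Ico 1 m))
    (π₂ : Finpartition (Finset.Ico m (n+1))) :
    (glue hm1 hm2 π₁ π₂).part 0 ≠ {0} := by
  rw [glue_part_zero]
  intro h
  have hm : m ∈ insert 0 (π₂.part m) :=
    Finset.mem_insert_of_mem (π₂.mem_part (m_mem_Ico hm2))
  rw [h, Finset.mem_singleton] at hm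
  omega

lemma m0_glue (hm1 : 1 ≤ m) (hm2 : m ≤ n) (π₁ : Finpartition (Finset.Ico 1 m))
    (π₂ : Finpartition (Finset.Ico m (n+1))) :
    m0 (glue hm1 hm2 π₁ π₂) = m := by
  have hB₂mem : π₂.part m ∈ π₂.parts := π₂.part_mem.2 (m_mem_Ico hm2)
  have h0 : (0 : ℕ) ∉ π₂.part m := B2_not_zero hm1 hB₂mem
  have he : ((glue hm1 hm2 π₁ π₂).part 0).erase 0 = π₂.part m := by
    rw [glue_part_zero, Finset.erase_insert h0]
  rw [m0, he]
  apply le_antisymm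
  · exact Nat.sInf_le (π₂.mem_part (m_mem_Ico hm2))
  · have : sInf {x : ℕ | x ∈ π₂.part m} ∈ {x : ℕ | x ∈ π₂.part m} :=
      Nat.sInf_mem ⟨m, π₂.mem_part (m_mem_Ico hm2)⟩
    exact (mem_of_part_Ico hB₂mem this).1

lemma glue_card (hm1 : 1 ≤ m) (hm2 : m ≤ n) (π₁ : Finpartition (Finset.Ico 1 m))
    (π₂ : Finpartition (Finset.Ico m (n+1))) :
    (glue hm1 hm2 π₁ π₂).parts.card = π₁.parts.card + π₂.parts.card := by
  have hB₂mem : π₂.part m ∈ π₂.parts := π₂.part_mem.2 (m_mem_Ico hm2)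
  have hXnot : insert 0 (π₂.part m) ∉ π₁.parts ∪ (π₂.parts.erase (π₂.part m)) := by
    rw [Finset.mem_union]
    rintro (h | h)
    · have := (mem_of_part_Ico h (Finset.mem_insert_self 0 _)).1
      omega
    · exact B2_not_zero hm1 (Finset.mem_of_mem_erase h) (Finset.mem_insert_self 0 _)
  have hdisj : Disjoint π₁.parts (π₂.parts.erase (π₂.part m)) := by
    rw [Finset.disjoint_left]
    intro C hC hC'
    obtain ⟨e, he⟩ := Finpartition.nonempty_of_mem_parts π₁ hC
    have h1 := mem_of_part_Ico hC he
    have h2 := mem_of_part_Ico (Finset.mem_of_mem_erase hC') he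
    omega
  have hpos : 1 ≤ π₂.parts.card := Finset.card_pos.2 ⟨_, hB₂mem⟩
  rw [glue_parts, Finset.card_insert_of_notMem hXnot, Finset.card_union_of_disjoint hdisj,
    Finset.card_erase_of_mem hB₂mem]
  omega

/-- condition for a partition to decompose at `m`. -/
def DC (m : ℕ) (P : Finpartition (Finset.range (n+1))) : Prop :=
  NCPred P ∧ P.part 0 ≠ {0} ∧ m0 P = m

lemma part_ne_part_zero {P : Finpartition (Finset.range (n+1))} {x : ℕ}
    (hx : x ∈ Finset.range (n+1)) (h : x ∉ P.part 0) : P.part x ≠ P.part 0 := by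
  intro he
  exact h (he ▸ P.mem_part hx)

/-- The restriction of `P` to `[1, m)`. -/
def split1 {P : Finpartition (Finset.range (n+1))} (h : DC m P) :
    Finpartition (Finset.Ico 1 m) := by
  refine P.ofSubset (Finset.filter_subset (· ⊆ Finset.Ico 1 m) P.parts)
    (sup_filter_subset P _ ?_)
  obtain ⟨hNC, hB, hm⟩ := h
  intro x hx
  rw [Finset.mem_Ico] at hx
  have hmn : m0 P ≤ n := m0_le_n hB
  have hxr : x ∈ Finset.range (n+1) := Finset.mem_range.2 (by omega)
  refine ⟨hxr, ?_⟩
  have hne : P.part x ≠ P.part 0 := by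
    apply part_ne_part_zero hxr
    intro hmem
    have : x ∈ (P.part 0).erase 0 := Finset.mem_erase.2 ⟨by omega, hmem⟩
    have := m0_le this
    omega
  rcases part_sep hNC hB (P.part_mem.2 hxr) hne with hc | hc
  · rwa [hm] at hc
  · exfalso
    have := hc (P.mem_part hxr)
    rw [Finset.mem_Ico, hm] at this
    omega

lemma split1_parts {P : Finpartition (Finset.range (n+1))} (h : DC m P) :
    (split1 h).parts = P.parts.filter (· ⊆ Finset.Ico 1 m) := rfl

lemma split1_ncpred {P : Finpartition (Finset.range (n+1))} (h : DC m P) :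
    NCPred (split1 h) := by
  intro D hD E hE hne hex
  rw [split1_parts] at hD hE
  exact h.1 D (Finset.filter_subset _ _ hD) E (Finset.filter_subset _ _ hE) hne hex

lemma erase_subset_Ico {P : Finpartition (Finset.range (n+1))} (h : DC m P) :
    (P.part 0).erase 0 ⊆ Finset.Ico m (n+1) := by
  intro e he
  have h1 := m0_le he
  have h2 := Finset.mem_range.1 (P.le (P.part_mem.2 zero_mem_range) (Finset.mem_of_mem_erase he))
  rw [Finset.mem_Ico, ← h.2.2]
  omega

lemma filter2_zero_not_mem {P : Finpartition (Finset.range (n+1))} (h : DC m P)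
    {C : Finset ℕ} (hC : C ⊆ Finset.Ico m (n+1)) : (0 : ℕ) ∉ C := by
  intro h0
  have := Finset.mem_Ico.1 (hC h0)
  have hm1 : 1 ≤ m := by
    rw [← h.2.2]
    exact m0_pos h.2.1
  omega

/-- The restriction of `P` to `[m, n+1)`, with `0` removed from its block. -/
def split2 {P : Finpartition (Finset.range (n+1))} (h : DC m P) :
    Finpartition (Finset.Ico m (n+1)) where
  parts := insert ((P.part 0).erase 0) (P.parts.filter (· ⊆ Finset.Ico m (n+1)))
  supIndep := by
    rw [Finset.supIndep_iff_pairwiseDisjoint, Finset.coe_insert]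
    refine Set.PairwiseDisjoint.insert
      (P.disjoint.subset (by rw [Finset.coe_subset]; exact Finset.filter_subset _ _)) ?_
    intro D hD hne
    rw [Finset.mem_coe, Finset.mem_filter] at hD
    have hDne : D ≠ P.part 0 := by
      intro he
      exact filter2_zero_not_mem h hD.2 (he ▸ P.mem_part zero_mem_range)
    simp only [id]
    exact (P.disjoint (P.part_mem.2 zero_mem_range) hD.1 (Ne.symm hDne)).mono_left
      (Finset.erase_subset _ _)
  sup_parts := by
    apply Finset.Subset.antisymm
    · intro x hx
      rw [Finset.mem_sup] at hx
      obtain ⟨B, hB, hxB⟩ := hx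
      rw [Finset.mem_insert] at hB
      rcases hB with rfl | hB
      · exact erase_subset_Ico h hxB
      · exact (Finset.mem_filter.1 hB).2 hxB
    · intro x hx
      rw [Finset.mem_sup]
      have hxI := Finset.mem_Ico.1 hx
      have hxr : x ∈ Finset.range (n+1) := Finset.mem_range.2 hxI.2
      have hm1 : 1 ≤ m := by rw [← h.2.2]; exact m0_pos h.2.1
      by_cases hx0 : x ∈ P.part 0
      · refine ⟨(P.part 0).erase 0, Finset.mem_insert_self _ _, ?_⟩
        exact Finset.mem_erase.2 ⟨by omega, hx0⟩
      · have hne := part_ne_part_zero hxr hx0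
        rcases part_sep h.1 h.2.1 (P.part_mem.2 hxr) hne with hc | hc
        · exfalso
          have := Finset.mem_Ico.1 (hc (P.mem_part hxr))
          rw [h.2.2] at this
          omega
        · refine ⟨P.part x, Finset.mem_insert_of_mem (Finset.mem_filter.2
            ⟨P.part_mem.2 hxr, ?_⟩), P.mem_part hxr⟩
          rwa [h.2.2] at hc
  bot_notMem := by
    rw [Finset.bot_eq_empty, Finset.mem_insert]
    push_neg
    constructor
    · intro he
      have : m0 P ∈ (P.part 0).erase 0 := m0_mem h.2.1
      rw [← he] at this
      exact Finset.notMem_empty _ this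
    · intro he
      exact P.bot_notMem (by rw [Finset.bot_eq_empty]; exact Finset.filter_subset _ _ he)

lemma split2_parts {P : Finpartition (Finset.range (n+1))} (h : DC m P) :
    (split2 h).parts
      = insert ((P.part 0).erase 0) (P.parts.filter (· ⊆ Finset.Ico m (n+1))) := rfl

lemma split2_ncpred {P : Finpartition (Finset.range (n+1))} (h : DC m P) :
    NCPred (split2 h) := by
  intro D hD E hE hne hex
  obtain ⟨a, a', b, b', ha, hb, ha', hb', h1, h2, h3⟩ := hex
  rw [split2_parts, Finset.mem_insert] at hD hE
  have hP0 : P.part 0 ∈ P.parts := P.part_mem.2 zero_mem_range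
  rcases hD with rfl | hD
  · rcases hE with rfl | hE
    · exact hne rfl
    · rw [Finset.mem_filter] at hE
      have hEne : E ≠ P.part 0 :=
        fun he => filter2_zero_not_mem h hE.2 (he ▸ P.mem_part zero_mem_range)
      exact h.1 (P.part 0) hP0 E hE.1 (Ne.symm hEne)
        ⟨a, a', b, b', Finset.mem_of_mem_erase ha, Finset.mem_of_mem_erase hb, ha', hb',
          h1, h2, h3⟩
  · rcases hE with rfl | hE
    · rw [Finset.mem_filter] at hD
      have hDne : D ≠ P.part 0 :=
        fun he => filter2_zero_not_mem h hD.2 (he ▸ P.mem_part zero_mem_range)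
      exact h.1 D hD.1 (P.part 0) hP0 hDne
        ⟨a, a', b, b', ha, hb, Finset.mem_of_mem_erase ha', Finset.mem_of_mem_erase hb',
          h1, h2, h3⟩
    · rw [Finset.mem_filter] at hD hE
      exact h.1 D hD.1 E hE.1 hne ⟨a, a', b, b', ha, hb, ha', hb', h1, h2, h3⟩

lemma erase_not_mem_parts {P : Finpartition (Finset.range (n+1))} (hB : P.part 0 ≠ {0}) :
    (P.part 0).erase 0 ∉ P.parts := by
  intro hmem
  have hne : (P.part 0).erase 0 ≠ P.part 0 := by
    intro he
    have : (0 : ℕ) ∈ (P.part 0).erase 0 := by rw [he]; exact P.mem_part zero_mem_range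
    exact (Finset.notMem_erase 0 _) this
  have hd := P.disjoint hmem (P.part_mem.2 zero_mem_range) hne
  have hm := m0_mem hB
  exact Finset.disjoint_left.1 hd hm (Finset.mem_of_mem_erase hm)

lemma split2_part_m {P : Finpartition (Finset.range (n+1))} (h : DC m P) :
    (split2 h).part m = (P.part 0).erase 0 := by
  apply (split2 h).part_eq_of_mem
  · rw [split2_parts]; exact Finset.mem_insert_self _ _
  · rw [← h.2.2]; exact m0_mem h.2.1

lemma glue_split {P : Finpartition (Finset.range (n+1))} (h : DC m P)
    (hm1 : 1 ≤ m) (hm2 : m ≤ n) :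
    glue hm1 hm2 (split1 h) (split2 h) = P := by
  apply Finpartition.ext
  have he1 : insert 0 ((P.part 0).erase 0) = P.part 0 :=
    Finset.insert_erase (P.mem_part zero_mem_range)
  rw [glue_parts, split2_part_m h, split1_parts, split2_parts,
    Finset.erase_insert (fun hc => erase_not_mem_parts h.2.1 (Finset.filter_subset _ _ hc)), he1]
  ext C
  rw [Finset.mem_insert, Finset.mem_union, Finset.mem_filter, Finset.mem_filter]
  constructor
  · rintro (rfl | ⟨hC, -⟩ | ⟨hC, -⟩) <;> first
      | exact P.part_mem.2 zero_mem_range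
      | assumption
  · intro hC
    by_cases hC0 : C = P.part 0
    · exact Or.inl hC0
    · rcases part_sep h.1 h.2.1 hC hC0 with hc | hc
      · rw [h.2.2] at hc
        exact Or.inr (Or.inl ⟨hC, hc⟩)
      · rw [h.2.2] at hc
        exact Or.inr (Or.inr ⟨hC, hc⟩)

lemma dc_glue (hm1 : 1 ≤ m) (hm2 : m ≤ n) {π₁ : Finpartition (Finset.Ico 1 m)}
    {π₂ : Finpartition (Finset.Ico m (n+1))} (h₁ : NCPred π₁) (h₂ : NCPred π₂) :
    DC m (glue hm1 hm2 π₁ π₂) :=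
  ⟨glue_ncpred hm1 hm2 h₁ h₂, glue_part_zero_ne hm1 hm2 π₁ π₂, m0_glue hm1 hm2 π₁ π₂⟩

lemma split1_glue (hm1 : 1 ≤ m) (hm2 : m ≤ n) {π₁ : Finpartition (Finset.Ico 1 m)}
    {π₂ : Finpartition (Finset.Ico m (n+1))} (h : DC m (glue hm1 hm2 π₁ π₂)) :
    split1 h = π₁ := by
  apply Finpartition.ext
  rw [split1_parts, glue_parts]
  ext C
  rw [Finset.mem_filter, Finset.mem_insert, Finset.mem_union]
  constructor
  · rintro ⟨rfl | hC | hC, hsub⟩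
    · exfalso
      have := Finset.mem_Ico.1 (hsub (Finset.mem_insert_self 0 _))
      omega
    · exact hC
    · exfalso
      obtain ⟨e, he⟩ := Finpartition.nonempty_of_mem_parts π₂ (Finset.mem_of_mem_erase hC)
      have h1 := mem_of_part_Ico (Finset.mem_of_mem_erase hC) he
      have h2 := Finset.mem_Ico.1 (hsub he)
      omega
  · intro hC
    exact ⟨Or.inr (Or.inl hC), π₁.le hC⟩

lemma split2_glue (hm1 : 1 ≤ m) (hm2 : m ≤ n) {π₁ : Finpartition (Finset.Ico 1 m)}
    {π₂ : Finpartition (Finset.Ico m (n+1))} (h : DC m (glue hm1 hm2 π₁ π₂)) :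
    split2 h = π₂ := by
  have hB₂mem : π₂.part m ∈ π₂.parts := π₂.part_mem.2 (m_mem_Ico hm2)
  apply Finpartition.ext
  rw [split2_parts, glue_part_zero,
    Finset.erase_insert (B2_not_zero hm1 hB₂mem)]
  have hf : (glue hm1 hm2 π₁ π₂).parts.filter (· ⊆ Finset.Ico m (n+1))
      = π₂.parts.erase (π₂.part m) := by
    rw [glue_parts]
    ext C
    rw [Finset.mem_filter, Finset.mem_insert, Finset.mem_union]
    constructor
    · rintro ⟨rfl | hC | hC, hsub⟩
      · exfalso
        have := Finset.mem_Ico.1 (hsub (Finset.mem_insert_self 0 _))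
        omega
      · exfalso
        obtain ⟨e, he⟩ := Finpartition.nonempty_of_mem_parts π₁ hC
        have h1 := mem_of_part_Ico hC he
        have h2 := Finset.mem_Ico.1 (hsub he)
        omega
      · exact hC
    · intro hC
      exact ⟨Or.inr (Or.inr hC), π₂.le (Finset.mem_of_mem_erase hC)⟩
  rw [hf, Finset.insert_erase hB₂mem]

open scoped Classical in
lemma pnc_rec (n : ℕ) (t : ℝ) :
    pnc (n+1) t = pnc n t
      + t * ∑ m ∈ Finset.Ico 1 (n+1), pnc (m-1) t * pnc (n+1-m) t := by
  classical
  have hcard1 : (Finset.Ico 1 (n+1)).card = n := by rw [Nat.card_Ico]; omega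
  rw [pnc, ncrgf]
  rw [← Finset.sum_filter_add_sum_filter_not
    (Finset.univ.filter (fun P : Finpartition (Finset.range (n+1)) => NCPred P))
    (fun P => P.part 0 = {0})]
  congr 1
  · -- singleton block at 0
    have : ncrgf (Finset.Ico 1 (n+1)) t = pnc n t := by
      rw [ncrgf_card, hcard1]
    rw [← this, ncrgf]
    refine Finset.sum_bij' (fun P hP => split0 P (Finset.mem_filter.1 hP).2)
      (fun π' _ => ext0 π') ?_ ?_ ?_ ?_ ?_
    · intro P hP
      rw [Finset.mem_filter] at hP ⊢
      have hNC : NCPred P := (Finset.mem_filter.1 hP.1).2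
      exact ⟨Finset.mem_univ _, split0_ncpred hNC hP.2⟩
    · intro π' hπ'
      rw [Finset.mem_filter] at hπ' ⊢
      refine ⟨Finset.mem_filter.2 ⟨Finset.mem_univ _, ext0_ncpred hπ'.2⟩, ext0_part_zero π'⟩
    · intro P hP
      exact ext0_split0 (Finset.mem_filter.1 hP).2
    · intro π' hπ'
      exact split0_ext0 π'
    · intro P hP
      have h := (Finset.mem_filter.1 hP).2
      have hc : P.parts.card = (split0 P h).parts.card + 1 := by
        conv_lhs => rw [← ext0_split0 h]
        rw [ext0_card]
      show t ^ ((Finset.range (n+1)).card - P.parts.card)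
        = t ^ ((Finset.Ico 1 (n+1)).card - (split0 P h).parts.card)
      rw [hc, Finset.card_range, hcard1]
      congr 1
      omega
  · -- block of 0 is not a singleton
    rw [← Finset.sum_fiberwise_of_maps_to (g := m0) (t := Finset.Ico 1 (n+1)) ?_ _]
    swap
    · intro P hP
      rw [Finset.mem_filter] at hP
      rw [Finset.mem_Ico]
      exact ⟨m0_pos hP.2, by have := m0_le_n hP.2; omega⟩
    rw [Finset.mul_sum]
    refine Finset.sum_congr rfl ?_
    intro m hm
    rw [Finset.mem_Ico] at hm
    have hm1 : 1 ≤ m := hm.1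
    have hm2 : m ≤ n := by omega
    have hcI1 : (Finset.Ico 1 m).card = m - 1 := by rw [Nat.card_Ico]
    have hcI2 : (Finset.Ico m (n+1)).card = n + 1 - m := by rw [Nat.card_Ico]
    have e1 : pnc (m-1) t = ncrgf (Finset.Ico 1 m) t := by rw [ncrgf_card, hcI1]
    have e2 : pnc (n+1-m) t = ncrgf (Finset.Ico m (n+1)) t := by rw [ncrgf_card, hcI2]
    rw [e1, e2, ncrgf, ncrgf, Finset.sum_mul_sum]
    simp only [Finset.mul_sum]
    rw [← Finset.sum_product']
    refine Finset.sum_bij' (fun P hP => ((split1 (P := P) ⟨(Finset.mem_filter.1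
        (Finset.mem_filter.1 (Finset.mem_filter.1 hP).1).1).2,
        (Finset.mem_filter.1 (Finset.mem_filter.1 hP).1).2, (Finset.mem_filter.1 hP).2⟩),
        (split2 (P := P) ⟨(Finset.mem_filter.1
        (Finset.mem_filter.1 (Finset.mem_filter.1 hP).1).1).2,
        (Finset.mem_filter.1 (Finset.mem_filter.1 hP).1).2, (Finset.mem_filter.1 hP).2⟩)))
      (fun q _ => glue hm1 hm2 q.1 q.2) ?_ ?_ ?_ ?_ ?_
    · intro P hP
      have hdc : DC m P := ⟨(Finset.mem_filter.1
        (Finset.mem_filter.1 (Finset.mem_filter.1 hP).1).1).2,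
        (Finset.mem_filter.1 (Finset.mem_filter.1 hP).1).2, (Finset.mem_filter.1 hP).2⟩
      rw [Finset.mem_product]
      exact ⟨Finset.mem_filter.2 ⟨Finset.mem_univ _, split1_ncpred hdc⟩,
        Finset.mem_filter.2 ⟨Finset.mem_univ _, split2_ncpred hdc⟩⟩
    · intro q hq
      rw [Finset.mem_product, Finset.mem_filter, Finset.mem_filter] at hq
      have hdc := dc_glue hm1 hm2 hq.1.2 hq.2.2
      rw [Finset.mem_filter, Finset.mem_filter, Finset.mem_filter]
      exact ⟨⟨⟨Finset.mem_univ _, hdc.1⟩, hdc.2.1⟩, hdc.2.2⟩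
    · intro P hP
      have hdc : DC m P := ⟨(Finset.mem_filter.1
        (Finset.mem_filter.1 (Finset.mem_filter.1 hP).1).1).2,
        (Finset.mem_filter.1 (Finset.mem_filter.1 hP).1).2, (Finset.mem_filter.1 hP).2⟩
      exact glue_split hdc hm1 hm2
    · intro q hq
      rw [Finset.mem_product, Finset.mem_filter, Finset.mem_filter] at hq
      have hdc : DC m (glue hm1 hm2 q.1 q.2) := dc_glue hm1 hm2 hq.1.2 hq.2.2
      exact Prod.ext (split1_glue hm1 hm2 hdc) (split2_glue hm1 hm2 hdc)
    · intro P hP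
      have hdc : DC m P := ⟨(Finset.mem_filter.1
        (Finset.mem_filter.1 (Finset.mem_filter.1 hP).1).1).2,
        (Finset.mem_filter.1 (Finset.mem_filter.1 hP).1).2, (Finset.mem_filter.1 hP).2⟩
      have hc : P.parts.card = (split1 hdc).parts.card + (split2 hdc).parts.card := by
        conv_lhs => rw [← glue_split hdc hm1 hm2]
        rw [glue_card]
      have hb1 : (split1 hdc).parts.card ≤ (Finset.Ico 1 m).card :=
        Finpartition.card_parts_le_card (split1 hdc)
      have hb2 : (split2 hdc).parts.card ≤ (Finset.Ico m (n+1)).card :=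
        Finpartition.card_parts_le_card (split2 hdc)
      rw [hcI1] at hb1
      rw [hcI2] at hb2
      show t ^ ((Finset.range (n+1)).card - P.parts.card)
        = t * (t ^ ((Finset.Ico 1 m).card - (split1 hdc).parts.card)
          * t ^ ((Finset.Ico m (n+1)).card - (split2 hdc).parts.card))
      rw [hc, Finset.card_range, hcI1, hcI2]
      rw [show n + 1 - ((split1 hdc).parts.card + (split2 hdc).parts.card)
        = 1 + ((m - 1) - (split1 hdc).parts.card)
          + ((n + 1 - m) - (split2 hdc).parts.card) by omega]
      rw [pow_add, pow_add, pow_one]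
      ring

/-! ### Algebraic side -/

/-- The gamma-expansion polynomial. -/
noncomputable def Sg (m : ℕ) (t : ℝ) : ℝ :=
  ∑ j ∈ Finset.range (m+1),
    (catalan j : ℝ) * ((m.choose (2*j) : ℕ) : ℝ) * t^j * (1+t)^(m - 2*j)

lemma Sg_zero (t : ℝ) : Sg 0 t = 1 := by
  simp [Sg]

lemma Sg_one (t : ℝ) : Sg 1 t = 1 + t := by
  rw [Sg]
  rw [Finset.sum_range_succ, Finset.sum_range_one]
  norm_num

lemma hockey_range (m p : ℕ) :
    ∑ a ∈ Finset.range (m+1), a.choose p = (m+1).choose (p+1) := by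
  have h1 : Finset.range (m+1) = Finset.Icc 0 m := by
    rw [← Finset.Ico_add_one_right_eq_Icc, Finset.range_eq_Ico]
  rw [h1, ← Nat.sum_Icc_choose m p]
  refine (Finset.sum_subset ?_ ?_).symm
  · intro x hx
    rw [Finset.mem_Icc] at hx ⊢
    omega
  · intro x hx hx'
    rw [Finset.mem_Icc] at hx hx'
    exact Nat.choose_eq_zero_of_lt (by omega)

lemma choose_conv (m p q : ℕ) :
    ∑ a ∈ Finset.range (m+1), a.choose p * (m-a).choose q = (m+1).choose (p+q+1) := by
  induction m generalizing q with
  | zero =>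
    rw [Finset.sum_range_one]
    rcases Nat.eq_zero_or_pos p with rfl | hp
    · rcases Nat.eq_zero_or_pos q with rfl | hq
      · simp
      · rw [Nat.choose_eq_zero_of_lt hq, Nat.choose_eq_zero_of_lt (show 1 < 0+q+1 by omega),
          mul_zero]
    · rw [Nat.choose_eq_zero_of_lt hp, Nat.choose_eq_zero_of_lt (show 1 < p+q+1 by omega),
        zero_mul]
  | succ m ih =>
    rcases Nat.eq_zero_or_pos q with rfl | hq
    · simp only [Nat.choose_zero_right, mul_one]
      rw [hockey_range]
    · obtain ⟨q', rfl⟩ : ∃ q', q = q' + 1 := ⟨q - 1, by omega⟩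
      rw [Finset.sum_range_succ]
      rw [Nat.sub_self, Nat.choose_eq_zero_of_lt (show 0 < q' + 1 by omega), mul_zero, add_zero]
      have hcong : ∀ a ∈ Finset.range (m+1),
          a.choose p * (m+1-a).choose (q'+1)
            = a.choose p * (m-a).choose q' + a.choose p * (m-a).choose (q'+1) := by
        intro a ha
        rw [Finset.mem_range] at ha
        rw [show m+1-a = (m-a)+1 by omega, Nat.choose_succ_succ, Nat.mul_add]
      rw [Finset.sum_congr rfl hcong, Finset.sum_add_distrib, ih q', ih (q'+1)]
      rw [show p+(q'+1)+1 = (p+q'+1)+1 by ring]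
      exact (Nat.choose_succ_succ (m+1) (p+q'+1)).symm

lemma catalan_group (m : ℕ) (W : ℕ → ℝ) (hW : ∀ k, m < k → W k = 0) :
    ∑ c ∈ Finset.range (m+1), ∑ d ∈ Finset.range (m+1),
        (catalan c : ℝ) * (catalan d : ℝ) * W (c+d)
      = ∑ i ∈ Finset.range (m+1), (catalan (i+1) : ℝ) * W i := by
  classical
  rw [← Finset.sum_product']
  have hsub : (Finset.range (m+1)).biUnion Finset.HasAntidiagonal.antidiagonal
      ⊆ Finset.range (m+1) ×ˢ Finset.range (m+1) := by
    intro x hx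
    rw [Finset.mem_biUnion] at hx
    obtain ⟨i, hi, hx⟩ := hx
    rw [Finset.HasAntidiagonal.mem_antidiagonal] at hx
    rw [Finset.mem_range] at hi
    rw [Finset.mem_product, Finset.mem_range, Finset.mem_range]
    omega
  have hzero : ∀ x ∈ Finset.range (m+1) ×ˢ Finset.range (m+1),
      x ∉ (Finset.range (m+1)).biUnion Finset.HasAntidiagonal.antidiagonal →
      (catalan x.1 : ℝ) * (catalan x.2 : ℝ) * W (x.1 + x.2) = 0 := by
    intro x _ hx
    have : m < x.1 + x.2 := by
      by_contra hc
      push_neg at hc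
      apply hx
      rw [Finset.mem_biUnion]
      exact ⟨x.1 + x.2, Finset.mem_range.2 (by omega), Finset.HasAntidiagonal.mem_antidiagonal.2 rfl⟩
    rw [hW _ this, mul_zero]
  rw [← Finset.sum_subset hsub hzero]
  have hdisj : ∀ i ∈ Finset.range (m+1), ∀ j ∈ Finset.range (m+1), i ≠ j →
      Disjoint (Finset.HasAntidiagonal.antidiagonal i) (Finset.HasAntidiagonal.antidiagonal j) := by
    intro i _ j _ hij
    rw [Finset.disjoint_left]
    intro x hx hx'
    rw [Finset.HasAntidiagonal.mem_antidiagonal] at hx hx'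
    omega
  rw [Finset.sum_biUnion hdisj]
  refine Finset.sum_congr rfl fun i _ => ?_
  have hcong : ∀ x ∈ Finset.HasAntidiagonal.antidiagonal i,
      (catalan x.1 : ℝ) * (catalan x.2 : ℝ) * W (x.1 + x.2)
        = ((catalan x.1 * catalan x.2 : ℕ) : ℝ) * W i := by
    intro x hx
    rw [Finset.HasAntidiagonal.mem_antidiagonal] at hx
    rw [hx]
    push_cast
    ring
  rw [Finset.sum_congr rfl hcong, ← Finset.sum_mul, ← Nat.cast_sum, ← catalan_succ']

lemma sg_step1 (m : ℕ) (t : ℝ) :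
    (1+t) * Sg (m+1) t = ∑ j ∈ Finset.range (m+2),
      (catalan j : ℝ) * (((m+1).choose (2*j) : ℕ) : ℝ) * t^j * (1+t)^(m+2 - 2*j) := by
  rw [Sg, Finset.mul_sum]
  refine Finset.sum_congr rfl fun j _ => ?_
  by_cases h : 2*j ≤ m+1
  · rw [show m+2-2*j = (m+1-2*j)+1 by omega, pow_succ]
    ring
  · rw [Nat.choose_eq_zero_of_lt (by omega)]
    push_cast
    ring

lemma sg_gamma (m : ℕ) (t : ℝ) :
    Sg (m+2) t = (1+t) * Sg (m+1) t
      + ∑ i ∈ Finset.range (m+2),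
          (catalan (i+1) : ℝ) * (((m+1).choose (2*i+1) : ℕ) : ℝ) * t^(i+1) * (1+t)^(m-2*i) := by
  have hB : (∑ j ∈ Finset.range (m+3),
        (catalan j : ℝ) * (((m+1).choose (2*j) : ℕ) : ℝ) * t^j * (1+t)^(m+2 - 2*j))
      = (1+t) * Sg (m+1) t := by
    rw [Finset.sum_range_succ, Nat.choose_eq_zero_of_lt (show m+1 < 2*(m+2) by omega),
      sg_step1]
    norm_num
  rw [← hB, Sg]
  rw [Finset.sum_range_succ' (fun j => (catalan j : ℝ)
      * (((m+2).choose (2*j) : ℕ) : ℝ) * t^j * (1+t)^(m+2 - 2*j)) (m+2),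
    Finset.sum_range_succ' (fun j => (catalan j : ℝ)
      * (((m+1).choose (2*j) : ℕ) : ℝ) * t^j * (1+t)^(m+2 - 2*j)) (m+2)]
  have key : ∀ i ∈ Finset.range (m+2),
      (catalan (i+1) : ℝ) * (((m+2).choose (2*(i+1)) : ℕ) : ℝ) * t^(i+1) * (1+t)^(m+2-2*(i+1))
      = ((catalan (i+1) : ℝ) * (((m+1).choose (2*(i+1)) : ℕ) : ℝ) * t^(i+1)
            * (1+t)^(m+2-2*(i+1)))
        + ((catalan (i+1) : ℝ) * (((m+1).choose (2*i+1) : ℕ) : ℝ) * t^(i+1)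
            * (1+t)^(m-2*i)) := by
    intro i _
    rw [show 2*(i+1) = (2*i+1)+1 by ring, Nat.choose_succ_succ (m+1) (2*i+1),
      show m+2-((2*i+1)+1) = m - 2*i by omega]
    push_cast
    ring
  rw [Finset.sum_congr rfl key, Finset.sum_add_distrib]
  norm_num [Nat.choose_zero_right]
  ring

lemma sg_ext {a m : ℕ} (h : a ≤ m) (t : ℝ) :
    Sg a t = ∑ c ∈ Finset.range (m+1),
      (catalan c : ℝ) * ((a.choose (2*c) : ℕ) : ℝ) * t^c * (1+t)^(a - 2*c) := by
  rw [Sg]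
  refine Finset.sum_subset (Finset.range_subset_range.2 (by omega)) ?_
  intro c hc hc'
  rw [Finset.mem_range] at hc hc'
  rw [Nat.choose_eq_zero_of_lt (show a < 2*c by omega)]
  norm_num

lemma sg_conv (m : ℕ) (t : ℝ) :
    t * ∑ a ∈ Finset.range (m+1), Sg a t * Sg (m-a) t
      = ∑ i ∈ Finset.range (m+2),
          (catalan (i+1) : ℝ) * (((m+1).choose (2*i+1) : ℕ) : ℝ) * t^(i+1) * (1+t)^(m-2*i) := by
  have step1 : t * ∑ a ∈ Finset.range (m+1), Sg a t * Sg (m-a) t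
      = ∑ a ∈ Finset.range (m+1), ∑ c ∈ Finset.range (m+1), ∑ d ∈ Finset.range (m+1),
          (catalan c : ℝ) * (catalan d : ℝ)
            * ((a.choose (2*c) * (m-a).choose (2*d) : ℕ) : ℝ)
            * t^(c+d+1) * (1+t)^(m - (2*c+2*d)) := by
    rw [Finset.mul_sum]
    refine Finset.sum_congr rfl fun a ha => ?_
    rw [Finset.mem_range] at ha
    rw [sg_ext (show a ≤ m by omega) t, sg_ext (show m - a ≤ m by omega) t,
      Finset.sum_mul_sum, Finset.mul_sum]
    refine Finset.sum_congr rfl fun c _ => ?_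
    rw [Finset.mul_sum]
    refine Finset.sum_congr rfl fun d _ => ?_
    by_cases h1 : 2*c ≤ a ∧ 2*d ≤ m - a
    · rw [show m - (2*c+2*d) = (a - 2*c) + ((m-a) - 2*d) by omega, pow_add]
      push_cast
      ring
    · rcases (not_and_or.1 h1) with h2 | h2
      · rw [Nat.choose_eq_zero_of_lt (show a < 2*c by omega)]
        push_cast
        ring
      · rw [Nat.choose_eq_zero_of_lt (show m - a < 2*d by omega)]
        push_cast
        ring
  have step2 : ∑ a ∈ Finset.range (m+1), ∑ c ∈ Finset.range (m+1), ∑ d ∈ Finset.range (m+1),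
          (catalan c : ℝ) * (catalan d : ℝ)
            * ((a.choose (2*c) * (m-a).choose (2*d) : ℕ) : ℝ)
            * t^(c+d+1) * (1+t)^(m - (2*c+2*d))
      = ∑ c ∈ Finset.range (m+1), ∑ d ∈ Finset.range (m+1),
          (catalan c : ℝ) * (catalan d : ℝ)
            * (((m+1).choose (2*(c+d)+1) : ℕ) : ℝ) * t^((c+d)+1) * (1+t)^(m - 2*(c+d)) := by
    rw [Finset.sum_comm]
    refine Finset.sum_congr rfl fun c _ => ?_
    rw [Finset.sum_comm]
    refine Finset.sum_congr rfl fun d _ => ?_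
    rw [← Finset.sum_mul, ← Finset.sum_mul, ← Finset.mul_sum, ← Nat.cast_sum,
      choose_conv m (2*c) (2*d),
      show 2*c+2*d+1 = 2*(c+d)+1 by ring, show m - (2*c+2*d) = m - 2*(c+d) by
        rw [show 2*c+2*d = 2*(c+d) by ring]]
  rw [step1, step2]
  have step3 := catalan_group m
    (fun k => (((m+1).choose (2*k+1) : ℕ) : ℝ) * t^(k+1) * (1+t)^(m - 2*k))
    (by
      intro k hk
      show (((m+1).choose (2*k+1) : ℕ) : ℝ) * t^(k+1) * (1+t)^(m - 2*k) = 0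
      rw [Nat.choose_eq_zero_of_lt (show m+1 < 2*k+1 by omega)]
      norm_num)
  have step3' : ∑ c ∈ Finset.range (m+1), ∑ d ∈ Finset.range (m+1),
      (catalan c : ℝ) * (catalan d : ℝ)
        * (((m+1).choose (2*(c+d)+1) : ℕ) : ℝ) * t^((c+d)+1) * (1+t)^(m - 2*(c+d))
      = ∑ i ∈ Finset.range (m+1),
          (catalan (i+1) : ℝ) * ((((m+1).choose (2*i+1) : ℕ) : ℝ) * t^(i+1) * (1+t)^(m - 2*i)) := by
    rw [← step3]
    refine Finset.sum_congr rfl fun c _ => Finset.sum_congr rfl fun d _ => ?_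
    ring
  rw [step3']
  rw [Finset.sum_range_succ (fun i => (catalan (i+1) : ℝ)
    * (((m+1).choose (2*i+1) : ℕ) : ℝ) * t^(i+1) * (1+t)^(m-2*i)) (m+1)]
  rw [Nat.choose_eq_zero_of_lt (show m+1 < 2*(m+1)+1 by omega)]
  norm_num
  refine Finset.sum_congr rfl fun i _ => ?_
  ring

/-- The recurrence for the gamma-expansion polynomial matching `pnc_rec`. -/
lemma sg_rec (n : ℕ) (t : ℝ) :
    Sg n t = Sg (n-1) t + t * ∑ m ∈ Finset.Ico 1 (n+1), Sg (m-2) t * Sg (n-m) t := by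
  rcases n with _ | n
  · simp [Sg_zero]
  rcases n with _ | n
  · rw [show (2:ℕ) = 1 + 1 from rfl, Finset.sum_Ico_eq_sum_range]
    norm_num [Sg_zero, Sg_one]
  · -- n + 2
    rw [Finset.sum_eq_sum_Ico_succ_bot (show 1 < n+2+1 by omega)]
    rw [show (1:ℕ) - 2 = 0 by rfl, show n+2-1 = n+1 by rfl, Sg_zero, one_mul]
    rw [Finset.sum_Ico_eq_sum_range, show n+2+1-(1+1) = n+1 by omega]
    rw [mul_add]
    have hre : ∑ i ∈ Finset.range (n+1), Sg (1+1+i-2) t * Sg (n+2-(1+1+i)) t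
        = ∑ a ∈ Finset.range (n+1), Sg a t * Sg (n-a) t := by
      refine Finset.sum_congr rfl fun a ha => ?_
      rw [Finset.mem_range] at ha
      rw [show 1+1+a-2 = a by omega, show n+2-(1+1+a) = n-a by omega]
    rw [hre, sg_gamma n t, sg_conv n t]
    ring

open scoped Classical in
lemma pnc_zero (t : ℝ) : pnc 0 t = 1 := by
  classical
  rw [pnc, ncrgf]
  have hbot : (Finset.range 0) = (⊥ : Finset ℕ) := by simp
  have hparts : ∀ P : Finpartition (Finset.range 0), P.parts = ∅ :=
    fun P => Finpartition.parts_eq_empty_iff.2 hbot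
  have hNCP : ∀ P : Finpartition (Finset.range 0), NCPred P := by
    intro P B hB
    rw [hparts P] at hB
    exact absurd hB (Finset.notMem_empty B)
  rw [Finset.filter_true_of_mem (fun P _ => hNCP P)]
  have hsub : Subsingleton (Finpartition (Finset.range 0)) :=
    ⟨fun P Q => Finpartition.ext (by rw [hparts P, hparts Q])⟩
  have hcard : Fintype.card (Finpartition (Finset.range 0)) = 1 := by
    have h1 : Fintype.card (Finpartition (Finset.range 0)) ≤ 1 :=
      Fintype.card_le_one_iff_subsingleton.2 hsub
    have h2 : 0 < Fintype.card (Finpartition (Finset.range 0)) :=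
      Fintype.card_pos_iff.2 ⟨⊥⟩
    omega
  have hval : ∀ P : Finpartition (Finset.range 0),
      t ^ ((Finset.range 0).card - P.parts.card) = 1 := by
    intro P
    rw [Finset.card_range]
    norm_num
  rw [Finset.sum_congr rfl (fun P _ => hval P), Finset.sum_const, Finset.card_univ, hcard]
  norm_num

lemma pnc_sg (t : ℝ) : ∀ n, pnc n t = Sg (n - 1) t := by
  intro n
  induction n using Nat.strong_induction_on with
  | _ n ih =>
    rcases n with _ | n
    · rw [pnc_zero]
      exact (Sg_zero t).symm
    · rw [pnc_rec n t]
      rw [ih n (by omega)]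
      have h2 : ∀ m ∈ Finset.Ico 1 (n+1), pnc (m-1) t * pnc (n+1-m) t
          = Sg (m-2) t * Sg (n-m) t := by
        intro m hm
        rw [Finset.mem_Ico] at hm
        rw [ih (m-1) (by omega), ih (n+1-m) (by omega),
          show m-1-1 = m-2 by omega, show n+1-m-1 = n-m by omega]
      rw [Finset.sum_congr rfl h2, show n+1-1 = n by omega]
      exact (sg_rec n t).symm

open scoped Classical in
/-- The rank generating function of the noncrossing partition lattice:
`∑_{π ∈ NC(n)} t^rk(π) = ∑_{0 ≤ 2j ≤ n-1} C_j binomial(n-1,2j) t^j (1+t)^(n-1-2j)`,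
where the rank of `π` is `n` minus its number of blocks. -/
theorem nc_rank_gamma (n : ℕ) (hn : 1 ≤ n) (t : ℝ) :
    (∑ π ∈ (Finset.univ.filter fun π :
        Finpartition (Finset.univ : Finset (Fin n)) => Noncrossing π),
      t ^ (n - π.parts.card)) =
      ∑ j ∈ (Finset.range n).filter (fun j => 2 * j ≤ n - 1),
        (catalan j : ℝ) * ((n - 1).choose (2 * j)) * t ^ j *
          (1 + t) ^ (n - 1 - 2 * j) := by
  classical
  have hL : (∑ π ∈ (Finset.univ.filter fun π :
        Finpartition (Finset.univ : Finset (Fin n)) => Noncrossing π),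
      t ^ (n - π.parts.card)) = ncrgf (Finset.univ : Finset (Fin n)) t := by
    rw [ncrgf]
    apply Finset.sum_congr
    · apply Finset.filter_congr
      intro P _
      exact Iff.rfl
    · intro P _
      congr 1
      rw [Finset.card_univ, Fintype.card_fin]
  have hM : ncrgf (Finset.univ : Finset (Fin n)) t = pnc n t := by
    have hr : Set.range (Fin.valOrderEmb n) = ((Finset.range n : Finset ℕ) : Set ℕ) := by
      ext x
      simp only [Set.mem_range, Finset.coe_range, Set.mem_Iio]
      constructor
      · rintro ⟨i, rfl⟩; exact i.2
      · intro hx; exact ⟨⟨x, hx⟩, rfl⟩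
    rw [pnc]
    conv_rhs => rw [← image_univ_orderEmb (Fin.valOrderEmb n) (Finset.range n) hr]
    rw [ncrgf_map]
  have hR : (∑ j ∈ (Finset.range n).filter (fun j => 2 * j ≤ n - 1),
        (catalan j : ℝ) * ((n - 1).choose (2 * j)) * t ^ j *
          (1 + t) ^ (n - 1 - 2 * j)) = Sg (n-1) t := by
    rw [Sg, show n-1+1 = n by omega]
    apply Finset.sum_filter_of_ne
    intro j _ hj
    by_contra hc
    push_neg at hc
    rw [Nat.choose_eq_zero_of_lt (by omega)] at hj
    norm_num at hj
  rw [hL, hM, hR, pnc_sg t n]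
end Decomp
end

section
/- The number of noncrossing partitions of {1,...,n} with exactly k blocks is the Narayana number N(n,k) = (1/k) * binomial(n-1, k-1) * binomial(n, k-1), and these satisfy the symmetry N(n,k) = N(n, n+1-k). -/
open Finset

namespace NarayanaProof

/-- prefix count: number of elements of `S` below `t`. -/
def pcnt (S : Finset ℕ) (t : ℕ) : ℕ := (S.filter (· < t)).card

lemma pcnt_zero (S : Finset ℕ) : pcnt S 0 = 0 := by
  simp [pcnt]

lemma pcnt_succ (S : Finset ℕ) (t : ℕ) :
    pcnt S (t + 1) = pcnt S t + (if t ∈ S then 1 else 0) := by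
  classical
  unfold pcnt
  split_ifs with h
  · have : S.filter (· < t + 1) = insert t (S.filter (· < t)) := by
      ext x
      simp only [mem_filter, mem_insert]
      constructor
      · rintro ⟨hx, hlt⟩
        rcases Nat.lt_succ_iff_lt_or_eq.1 hlt with h' | h'
        · exact Or.inr ⟨hx, h'⟩
        · exact Or.inl h'
      · rintro (rfl | ⟨hx, h'⟩)
        · exact ⟨h, Nat.lt_succ_self _⟩
        · exact ⟨hx, Nat.lt_succ_of_lt h'⟩
    rw [this, card_insert_of_notMem (by simp)]
  · have : S.filter (· < t + 1) = S.filter (· < t) := by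
      ext x
      simp only [mem_filter]
      constructor
      · rintro ⟨hx, hlt⟩
        refine ⟨hx, ?_⟩
        rcases Nat.lt_succ_iff_lt_or_eq.1 hlt with h' | h'
        · exact h'
        · exact absurd (h' ▸ hx) h
      · rintro ⟨hx, h'⟩
        exact ⟨hx, Nat.lt_succ_of_lt h'⟩
    rw [this]
    omega

lemma pcnt_mono (S : Finset ℕ) {a b : ℕ} (hab : a ≤ b) : pcnt S a ≤ pcnt S b := by
  apply card_le_card
  intro x
  simp only [mem_filter]
  exact fun ⟨h1, h2⟩ => ⟨h1, h2.trans_le hab⟩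

lemma pcnt_of_subset_range (S : Finset ℕ) {m t : ℕ} (hS : S ⊆ range m) (h : m ≤ t) :
    pcnt S t = S.card := by
  unfold pcnt
  congr 1
  apply filter_true_of_mem
  intro x hx
  have := hS hx
  simp only [mem_range] at this
  omega

lemma pcnt_le_card (S : Finset ℕ) (t : ℕ) : pcnt S t ≤ S.card :=
  card_le_card (filter_subset _ _)

end NarayanaProof

namespace NarayanaProof

open scoped Classical

/-- swap the parts of the two sets from position `t0` on -/
def swapAt (t0 : ℕ) (q : Finset ℕ × Finset ℕ) : Finset ℕ × Finset ℕ :=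
  (q.1.filter (· < t0) ∪ q.2.filter (fun x => ¬ x < t0),
   q.2.filter (· < t0) ∪ q.1.filter (fun x => ¬ x < t0))

lemma swapAt_swapAt (t0 : ℕ) (q : Finset ℕ × Finset ℕ) : swapAt t0 (swapAt t0 q) = q := by
  unfold swapAt
  obtain ⟨C, B⟩ := q
  simp only [Prod.mk.injEq]
  constructor <;>
  · ext x
    simp only [mem_union, mem_filter]
    by_cases h : x < t0 <;> simp [h]

/-- the violation set -/
def vset (q : Finset ℕ × Finset ℕ) : Set ℕ := {t | pcnt q.1 t < pcnt q.2 t}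

noncomputable def vt (q : Finset ℕ × Finset ℕ) : ℕ := sInf (vset q)

noncomputable def reflMap (q : Finset ℕ × Finset ℕ) : Finset ℕ × Finset ℕ :=
  swapAt (vt q) q

lemma swapAt_pcnt_le₁ (t0 : ℕ) (q : Finset ℕ × Finset ℕ) {t : ℕ} (ht : t ≤ t0) :
    pcnt (swapAt t0 q).1 t = pcnt q.1 t := by
  unfold swapAt pcnt
  simp only
  congr 1
  ext x
  simp only [mem_filter, mem_union]
  constructor
  · rintro ⟨h1 | h2, hx⟩
    · exact ⟨h1.1, hx⟩
    · omega
  · rintro ⟨hx, hlt⟩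
    exact ⟨Or.inl ⟨hx, by omega⟩, hlt⟩

lemma swapAt_pcnt_le₂ (t0 : ℕ) (q : Finset ℕ × Finset ℕ) {t : ℕ} (ht : t ≤ t0) :
    pcnt (swapAt t0 q).2 t = pcnt q.2 t := by
  unfold swapAt pcnt
  simp only
  congr 1
  ext x
  simp only [mem_filter, mem_union]
  constructor
  · rintro ⟨h1 | h2, hx⟩
    · exact ⟨h1.1, hx⟩
    · omega
  · rintro ⟨hx, hlt⟩
    exact ⟨Or.inl ⟨hx, by omega⟩, hlt⟩

lemma vt_mem {q : Finset ℕ × Finset ℕ} (h : (vset q).Nonempty) :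
    pcnt q.1 (vt q) < pcnt q.2 (vt q) := Nat.sInf_mem h

lemma vt_min {q : Finset ℕ × Finset ℕ} {t : ℕ} (ht : t < vt q) :
    pcnt q.2 t ≤ pcnt q.1 t := by
  by_contra hc
  have h2 : t ∈ vset q := lt_of_not_ge hc
  have := Nat.sInf_le h2
  unfold vt at ht
  omega

lemma reflMap_pcnt₁ (q : Finset ℕ × Finset ℕ) {t : ℕ} (ht : t ≤ vt q) :
    pcnt (reflMap q).1 t = pcnt q.1 t := swapAt_pcnt_le₁ _ _ ht

lemma reflMap_pcnt₂ (q : Finset ℕ × Finset ℕ) {t : ℕ} (ht : t ≤ vt q) :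
    pcnt (reflMap q).2 t = pcnt q.2 t := swapAt_pcnt_le₂ _ _ ht

lemma vt_reflMap {q : Finset ℕ × Finset ℕ} (h : (vset q).Nonempty) :
    vt (reflMap q) = vt q ∧ (vset (reflMap q)).Nonempty := by
  have hmem : vt q ∈ vset (reflMap q) := by
    show pcnt (reflMap q).1 (vt q) < pcnt (reflMap q).2 (vt q)
    rw [reflMap_pcnt₁ _ (le_refl _), reflMap_pcnt₂ _ (le_refl _)]
    exact vt_mem h
  refine ⟨le_antisymm (Nat.sInf_le hmem) ?_, ⟨_, hmem⟩⟩
  by_contra hc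
  push_neg at hc
  have h2 : vt (reflMap q) ∈ vset (reflMap q) := Nat.sInf_mem ⟨_, hmem⟩
  have h3 : pcnt (reflMap q).1 (vt (reflMap q)) < pcnt (reflMap q).2 (vt (reflMap q)) := h2
  rw [reflMap_pcnt₁ _ (le_of_lt hc), reflMap_pcnt₂ _ (le_of_lt hc)] at h3
  exact absurd h3 (not_lt_of_ge (vt_min hc))

lemma reflMap_reflMap {q : Finset ℕ × Finset ℕ} (h : (vset q).Nonempty) :
    reflMap (reflMap q) = q := by
  have h1 := (vt_reflMap h).1
  show swapAt (vt (reflMap q)) (reflMap q) = q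
  rw [h1]
  exact swapAt_swapAt _ _

end NarayanaProof

namespace NarayanaProof

open scoped Classical

lemma vt_exact {q : Finset ℕ × Finset ℕ} (h : (vset q).Nonempty) :
    pcnt q.2 (vt q) = pcnt q.1 (vt q) + 1 := by
  have hv := vt_mem h
  rcases Nat.eq_zero_or_pos (vt q) with h0 | h0
  · rw [h0] at hv
    simp [pcnt_zero] at hv
  · obtain ⟨u, hu⟩ : ∃ u, vt q = u + 1 := ⟨vt q - 1, by omega⟩
    have hmin : pcnt q.2 u ≤ pcnt q.1 u := vt_min (by omega)
    have h1 := pcnt_succ q.1 u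
    have h2 := pcnt_succ q.2 u
    rw [hu] at hv ⊢
    split_ifs at h1 h2 <;> omega

lemma reflMap_card₁ {q : Finset ℕ × Finset ℕ} :
    (reflMap q).1.card + pcnt q.2 (vt q) = pcnt q.1 (vt q) + q.2.card := by
  show (q.1.filter (· < vt q) ∪ q.2.filter (fun x => ¬ x < vt q)).card + _ = _
  rw [card_union_of_disjoint]
  · have := card_filter_add_card_filter_not (s := q.2) (p := (· < vt q))
    unfold pcnt
    omega
  · rw [disjoint_left]
    intro x hx hx'
    simp only [mem_filter] at hx hx'
    exact hx'.2 hx.2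

lemma reflMap_card₂ {q : Finset ℕ × Finset ℕ} :
    (reflMap q).2.card + pcnt q.1 (vt q) = pcnt q.2 (vt q) + q.1.card := by
  show (q.2.filter (· < vt q) ∪ q.1.filter (fun x => ¬ x < vt q)).card + _ = _
  rw [card_union_of_disjoint]
  · have := card_filter_add_card_filter_not (s := q.1) (p := (· < vt q))
    unfold pcnt
    omega
  · rw [disjoint_left]
    intro x hx hx'
    simp only [mem_filter] at hx hx'
    exact hx'.2 hx.2

lemma reflMap_subset₁ {q : Finset ℕ × Finset ℕ} {s : Finset ℕ}
    (h1 : q.1 ⊆ s) (h2 : q.2 ⊆ s) : (reflMap q).1 ⊆ s := by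
  intro x hx
  rcases mem_union.1 hx with h | h
  · exact h1 (mem_filter.1 h).1
  · exact h2 (mem_filter.1 h).1

lemma reflMap_subset₂ {q : Finset ℕ × Finset ℕ} {s : Finset ℕ}
    (h1 : q.1 ⊆ s) (h2 : q.2 ⊆ s) : (reflMap q).2 ⊆ s := by
  intro x hx
  rcases mem_union.1 hx with h | h
  · exact h2 (mem_filter.1 h).1
  · exact h1 (mem_filter.1 h).1

/-- the set of pairs of subsets of `range m` of sizes `p1`, `p2` -/
def pairsSet (m p1 p2 : ℕ) : Finset (Finset ℕ × Finset ℕ) :=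
  (range m).powersetCard p1 ×ˢ (range m).powersetCard p2

lemma mem_pairsSet {m p1 p2 : ℕ} {q : Finset ℕ × Finset ℕ} :
    q ∈ pairsSet m p1 p2 ↔ (q.1 ⊆ range m ∧ q.1.card = p1) ∧ (q.2 ⊆ range m ∧ q.2.card = p2) := by
  simp [pairsSet, mem_product, mem_powersetCard]

lemma card_pairsSet (m p1 p2 : ℕ) :
    (pairsSet m p1 p2).card = m.choose p1 * m.choose p2 := by
  rw [pairsSet, card_product, card_powersetCard, card_powersetCard, card_range]

lemma viol_card (m p : ℕ) :
    ((pairsSet m (p+1) (p+1)).filter (fun q => (vset q).Nonempty)).card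
      = (pairsSet m p (p+2)).card := by
  apply card_bij' (fun q _ => reflMap q) (fun q _ => reflMap q)
  · intro q hq
    rw [mem_filter] at hq
    obtain ⟨hq, hne⟩ := hq
    rw [mem_pairsSet] at hq ⊢
    have hc1 := reflMap_card₁ (q := q)
    have hc2 := reflMap_card₂ (q := q)
    have hex := vt_exact hne
    refine ⟨⟨reflMap_subset₁ hq.1.1 hq.2.1, by omega⟩, ⟨reflMap_subset₂ hq.1.1 hq.2.1, by omega⟩⟩
  · intro q hq
    rw [mem_pairsSet] at hq
    have hne : (vset q).Nonempty := by
      refine ⟨m, ?_⟩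
      show pcnt q.1 m < pcnt q.2 m
      rw [pcnt_of_subset_range _ hq.1.1 (le_refl m), pcnt_of_subset_range _ hq.2.1 (le_refl m),
        hq.1.2, hq.2.2]
      omega
    rw [mem_filter]
    have hc1 := reflMap_card₁ (q := q)
    have hc2 := reflMap_card₂ (q := q)
    have hex := vt_exact hne
    refine ⟨?_, (vt_reflMap hne).2⟩
    rw [mem_pairsSet]
    exact ⟨⟨reflMap_subset₁ hq.1.1 hq.2.1, by omega⟩, ⟨reflMap_subset₂ hq.1.1 hq.2.1, by omega⟩⟩
  · intro q hq
    rw [mem_filter] at hq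
    exact reflMap_reflMap hq.2
  · intro q hq
    rw [mem_pairsSet] at hq
    have hne : (vset q).Nonempty := by
      refine ⟨m, ?_⟩
      show pcnt q.1 m < pcnt q.2 m
      rw [pcnt_of_subset_range _ hq.1.1 (le_refl m), pcnt_of_subset_range _ hq.2.1 (le_refl m),
        hq.1.2, hq.2.2]
      omega
    exact reflMap_reflMap hne

/-- dominated pairs: the second subset is prefix-dominated by the first -/
noncomputable def dompairs (m p : ℕ) : Finset (Finset ℕ × Finset ℕ) :=
  (pairsSet m p p).filter (fun q => ¬ (vset q).Nonempty)

lemma mem_dompairs {m p : ℕ} {q : Finset ℕ × Finset ℕ} :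
    q ∈ dompairs m p ↔ q ∈ pairsSet m p p ∧ ∀ t, pcnt q.2 t ≤ pcnt q.1 t := by
  rw [dompairs, mem_filter]
  constructor
  · rintro ⟨h1, h2⟩
    refine ⟨h1, fun t => ?_⟩
    by_contra hc
    exact h2 ⟨t, lt_of_not_ge hc⟩
  · rintro ⟨h1, h2⟩
    refine ⟨h1, ?_⟩
    rintro ⟨t, ht⟩
    exact absurd (h2 t) (not_le_of_gt ht)

lemma dompairs_split (m p : ℕ) :
    (dompairs m p).card + ((pairsSet m p p).filter (fun q => (vset q).Nonempty)).card
      = (pairsSet m p p).card := by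
  rw [dompairs]
  rw [add_comm]
  exact card_filter_add_card_filter_not (p := fun q => (vset q).Nonempty)

lemma choose_identity (m p : ℕ) :
    (p+2) * (m.choose (p+1) * m.choose (p+1))
      = (p+2) * (m.choose p * m.choose (p+2)) + m.choose (p+1) * (m+1).choose (p+1) := by
  rcases lt_or_ge m (p+1) with h | h
  · rw [Nat.choose_eq_zero_of_lt h, Nat.choose_eq_zero_of_lt (show m < p+2 by omega)]
    ring
  · obtain ⟨d, hd⟩ := Nat.exists_eq_add_of_le h
    have hA : m.choose (p+2) * (p+2) = m.choose (p+1) * d := by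
      have := Nat.choose_succ_right_eq m (p+1)
      rwa [show m - (p+1) = d by omega] at this
    have hB : m.choose (p+1) * (p+1) = m.choose p * (d+1) := by
      have := Nat.choose_succ_right_eq m p
      rwa [show m - p = d + 1 by omega] at this
    have hS : (m+1).choose (p+1) = m.choose p + m.choose (p+1) := Nat.choose_succ_succ m p
    rw [hS]
    zify at hA hB ⊢
    linear_combination ((m.choose (p+1) : ℤ)) * hB - ((m.choose p : ℤ)) * hA

theorem dompairs_card (m p : ℕ) :
    (p+1) * (dompairs m p).card = m.choose p * (m+1).choose p := by
  cases p with
  | zero =>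
    have h1 : dompairs m 0 = pairsSet m 0 0 := by
      apply filter_true_of_mem
      intro q hq
      rw [mem_pairsSet] at hq
      rintro ⟨t, ht⟩
      have : q.2 = ∅ := card_eq_zero.1 hq.2.2
      have h2 : pcnt q.1 t < pcnt q.2 t := ht
      rw [this] at h2
      simp [pcnt] at h2
    rw [h1, card_pairsSet]
    simp
  | succ p =>
    have hsplit := dompairs_split m (p+1)
    have hviol := viol_card m p
    rw [hviol, card_pairsSet, card_pairsSet] at hsplit
    have hid := choose_identity m p
    have h2 := congrArg (fun z => (p+2) * z) hsplit
    simp only [mul_add] at h2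
    rw [hid] at h2
    rw [add_comm ((p+2) * (dompairs m (p+1)).card)] at h2
    have h3 := Nat.add_left_cancel h2
    show (p+2) * (dompairs m (p+1)).card = _
    exact h3

end NarayanaProof

namespace NarayanaProof

open scoped Classical

/-- the stack after processing positions `0, …, t-1`:
at step `t`, push `t` if `t ∈ A`, then pop (after assigning) if `t ∈ B`. -/
noncomputable def stk (A B : Finset ℕ) : ℕ → List ℕ
  | 0 => []
  | t+1 =>
      let s' := if t ∈ A then t :: stk A B t else stk A B t
      if t ∈ B then s'.tail else s'

/-- the stack during step `t`, after the push. -/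
noncomputable def stk' (A B : Finset ℕ) (t : ℕ) : List ℕ :=
  if t ∈ A then t :: stk A B t else stk A B t

lemma stk_succ (A B : Finset ℕ) (t : ℕ) :
    stk A B (t+1) = if t ∈ B then (stk' A B t).tail else stk' A B t := rfl

/-- the assignment: the block (identified by its minimum) that `t` belongs to. -/
noncomputable def fm (A B : Finset ℕ) (t : ℕ) : ℕ := (stk' A B t).headI

lemma mem_stk {A B : Finset ℕ} {t x : ℕ} (h : x ∈ stk A B t) : x ∈ A ∧ x < t := by
  induction t with
  | zero => simp [stk] at h
  | succ t ih =>
    rw [stk_succ] at h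
    have h' : x ∈ stk' A B t := by
      split_ifs at h with hB
      · exact List.mem_of_mem_tail h
      · exact h
    unfold stk' at h'
    split_ifs at h' with hA
    · rcases List.mem_cons.1 h' with rfl | h''
      · exact ⟨hA, Nat.lt_succ_self _⟩
      · have := ih h''
        exact ⟨this.1, Nat.lt_succ_of_lt this.2⟩
    · have := ih h'
      exact ⟨this.1, Nat.lt_succ_of_lt this.2⟩

lemma mem_stk' {A B : Finset ℕ} {t x : ℕ} (h : x ∈ stk' A B t) : x ∈ A ∧ x ≤ t := by
  unfold stk' at h
  split_ifs at h with hA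
  · rcases List.mem_cons.1 h with rfl | h'
    · exact ⟨hA, le_refl _⟩
    · have := mem_stk h'
      exact ⟨this.1, le_of_lt this.2⟩
  · have := mem_stk h
    exact ⟨this.1, le_of_lt this.2⟩

lemma stk_sorted (A B : Finset ℕ) (t : ℕ) : (stk A B t).Pairwise (· > ·) := by
  induction t with
  | zero => simp [stk]
  | succ t ih =>
    rw [stk_succ]
    have hs' : (stk' A B t).Pairwise (· > ·) := by
      unfold stk'
      split_ifs with hA
      · exact List.pairwise_cons.2 ⟨fun y hy => (mem_stk hy).2, ih⟩
      · exact ih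
    split_ifs with hB
    · cases h : stk' A B t with
      | nil => simp
      | cons a l => rw [h] at hs'; exact (List.pairwise_cons.1 hs').2
    · exact hs'

lemma stk'_sorted (A B : Finset ℕ) (t : ℕ) : (stk' A B t).Pairwise (· > ·) := by
  unfold stk'
  split_ifs with hA
  · exact List.pairwise_cons.2 ⟨fun y hy => (mem_stk hy).2, stk_sorted A B t⟩
  · exact stk_sorted A B t

end NarayanaProof

namespace NarayanaProof

open scoped Classical

/-- validity of a pair of subsets of `range n` (openers / closers). -/
def ValidP (n : ℕ) (A B : Finset ℕ) : Prop :=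
  A ⊆ range n ∧ B ⊆ range n ∧ A.card = B.card ∧ ∀ t < n, pcnt B t < pcnt A (t+1)

section Stack

variable {n : ℕ} {A B : Finset ℕ} (hv : ValidP n A B)

include hv

lemma stk_length (t : ℕ) (ht : t ≤ n) :
    (stk A B t).length + pcnt B t = pcnt A t := by
  induction t with
  | zero => simp [stk, pcnt_zero]
  | succ t ih =>
    have ih' := ih (by omega)
    have hlen' : (stk' A B t).length = (stk A B t).length + (if t ∈ A then 1 else 0) := by
      unfold stk'
      split_ifs <;> simp
    have hA1 := pcnt_succ A t
    have hB1 := pcnt_succ B t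
    have hval := hv.2.2.2 t (by omega)
    rw [stk_succ]
    have hne : (stk' A B t).length ≥ 1 := by
      by_contra hc
      push_neg at hc
      omega
    split_ifs with hB
    · rw [List.length_tail]
      simp only [hB, if_pos] at hB1
      omega
    · simp only [hB, if_neg, if_false] at hB1
      omega

lemma stk'_ne_nil (t : ℕ) (ht : t < n) : stk' A B t ≠ [] := by
  have h1 := stk_length hv t (by omega)
  have hval := hv.2.2.2 t ht
  have hA1 := pcnt_succ A t
  intro hc
  have hlen0 : (stk' A B t).length = 0 := by rw [hc]; rfl
  have hlen' : (stk' A B t).length = (stk A B t).length + (if t ∈ A then 1 else 0) := by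
    unfold stk'
    split_ifs <;> simp
  split_ifs at hlen' hA1 <;> omega

lemma fm_mem_stk' (t : ℕ) (ht : t < n) : fm A B t ∈ stk' A B t := by
  unfold fm
  cases h : stk' A B t with
  | nil => exact absurd h (stk'_ne_nil hv t ht)
  | cons a l => simp

omit hv in
lemma fm_max {t x : ℕ} (ht : t < n) (hx : x ∈ stk' A B t) : x ≤ fm A B t := by
  unfold fm
  cases h : stk' A B t with
  | nil => rw [h] at hx; simp at hx
  | cons a l =>
    rw [h] at hx
    rcases List.mem_cons.1 hx with rfl | hx'
    · simp
    · have hs := stk'_sorted A B t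
      rw [h] at hs
      exact le_of_lt (List.rel_of_pairwise_cons hs hx')

lemma fm_spec (t : ℕ) (ht : t < n) : fm A B t ∈ A ∧ fm A B t ≤ t :=
  mem_stk' (fm_mem_stk' hv t ht)

omit hv in
lemma fm_self {t : ℕ} (htA : t ∈ A) : fm A B t = t := by
  unfold fm stk'
  rw [if_pos htA]
  simp

omit hv in
/-- once absent (and not re-pushable), always absent -/
lemma stk'_absent {x t : ℕ} (hx : x ∉ stk' A B t) (hxt : x ≤ t) :
    ∀ u, t ≤ u → x ∉ stk' A B u := by
  intro u hu
  induction u with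
  | zero =>
    have : t = 0 := by omega
    rwa [this] at hx
  | succ u ih =>
    rcases Nat.lt_or_ge t (u+1) with h | h
    · have hind := ih (by omega)
      intro hc
      have h1 : x ∈ stk A B (u+1) ∨ x = u + 1 := by
        unfold stk' at hc
        split_ifs at hc with hA
        · rcases List.mem_cons.1 hc with h' | h'
          · exact Or.inr h'
          · exact Or.inl h'
        · exact Or.inl hc
      rcases h1 with h1 | rfl
      · rw [stk_succ] at h1
        have h2 : x ∈ stk' A B u := by
          split_ifs at h1 with hB
          · exact List.mem_of_mem_tail h1
          · exact h1
        exact hind h2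
      · omega
    · have : t = u + 1 := by omega
      rwa [this] at hx

lemma lifetime {x j t : ℕ} (hj : j < n) (hfm : fm A B j = x) (hxt : x ≤ t) (htj : t ≤ j) :
    x ∈ stk' A B t := by
  by_contra hc
  exact (stk'_absent hc hxt j htj) (hfm ▸ fm_mem_stk' hv j hj)

/-- after a closer `b ∈ B`, the value assigned at `b` never appears again -/
lemma popped {b j : ℕ} (hbB : b ∈ B) (hbn : b < n) (hbj : b < j) (hjn : j < n) :
    fm A B j ≠ fm A B b := by
  intro heq
  set x := fm A B b with hx
  have hxb : x ≤ b := (fm_spec hv b hbn).2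
  have hmem : x ∈ stk' A B b := fm_mem_stk' hv b hbn
  -- x is the head; the tail does not contain x
  have hxtail : x ∉ (stk' A B b).tail := by
    cases h : stk' A B b with
    | nil => simp
    | cons a l =>
      have hs := stk'_sorted A B b
      rw [h] at hs
      have hax : a = x := by
        have h5 : fm A B b = a := by unfold fm; rw [h]; rfl
        rw [hx, h5]
      simp only [List.tail_cons]
      intro hc
      have := List.rel_of_pairwise_cons hs hc
      omega
  have h1 : x ∉ stk A B (b+1) := by
    rw [stk_succ, if_pos hbB]
    exact hxtail
  have h2 : x ∉ stk' A B (b+1) := by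
    unfold stk'
    split_ifs with hA
    · intro hc
      rcases List.mem_cons.1 hc with h' | h'
      · omega
      · exact h1 h'
    · exact h1
  exact (stk'_absent h2 (by omega) j (by omega)) (heq ▸ fm_mem_stk' hv j hjn)

lemma stk_n_nil : stk A B n = [] := by
  have h1 := stk_length hv n (le_refl n)
  have h2 : pcnt A n = A.card := pcnt_of_subset_range A hv.1 (le_refl n)
  have h3 : pcnt B n = B.card := pcnt_of_subset_range B hv.2.1 (le_refl n)
  have := hv.2.2.1
  rw [← List.length_eq_zero_iff]
  omega

/-- every stack element is eventually assigned (popped with assignment) -/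
lemma eventual : ∀ d t x, n - t ≤ d → x ∈ stk A B t → t ≤ n →
    ∃ j, t ≤ j ∧ j < n ∧ fm A B j = x := by
  intro d
  induction d with
  | zero =>
    intro t x hd hx htn
    have : t = n := by omega
    rw [this, stk_n_nil hv] at hx
    simp at hx
  | succ d ih =>
    intro t x hd hx htn
    have htn' : t < n := by
      rcases Nat.lt_or_ge t n with h | h
      · exact h
      · have : t = n := by omega
        rw [this, stk_n_nil hv] at hx
        simp at hx
    have hxs' : x ∈ stk' A B t := by
      unfold stk'
      split_ifs
      · exact List.mem_cons_of_mem _ hx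
      · exact hx
    by_cases hrec : x ∈ stk A B (t+1)
    · obtain ⟨j, hj1, hj2, hj3⟩ := ih (t+1) x (by omega) hrec (by omega)
      exact ⟨j, by omega, hj2, hj3⟩
    · -- popped at step t, so x is the head at t
      rw [stk_succ] at hrec
      have htB : t ∈ B := by
        by_contra hc
        rw [if_neg hc] at hrec
        exact hrec hxs'
      rw [if_pos htB] at hrec
      refine ⟨t, le_refl _, htn', ?_⟩
      unfold fm
      cases h : stk' A B t with
      | nil => rw [h] at hxs'; simp at hxs'
      | cons a l =>
        rw [h] at hxs' hrec
        simp only [List.tail_cons] at hrec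
        rcases List.mem_cons.1 hxs' with h' | h'
        · simp [h']
        · exact absurd h' hrec

/-- if `i` is not a closer, its block receives a later element -/
lemma not_closer_not_max {i : ℕ} (hin : i < n) (hiB : i ∉ B) :
    ∃ j, i < j ∧ j < n ∧ fm A B j = fm A B i := by
  set x := fm A B i with hx
  have hmem : x ∈ stk' A B i := fm_mem_stk' hv i hin
  have h1 : x ∈ stk A B (i+1) := by
    rw [stk_succ, if_neg hiB]
    exact hmem
  obtain ⟨j, hj1, hj2, hj3⟩ := eventual hv (n - (i+1)) (i+1) x (le_refl _) h1 (by omega)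
  exact ⟨j, by omega, hj2, hj3⟩

/-- the noncrossing property of the fibers of `fm` -/
lemma fm_noncrossing {a a' b b' : ℕ} (hab : a < a') (ha'b : a' < b) (hbb' : b < b')
    (hb'n : b' < n) (hfab : fm A B a = fm A B b) (hfa'b' : fm A B a' = fm A B b')
    (hne : fm A B a ≠ fm A B a') : False := by
  set x := fm A B a with hxd
  set x' := fm A B a' with hx'd
  have hxa : x ≤ a := (fm_spec hv a (by omega)).2
  have hx'a' : x' ≤ a' := (fm_spec hv a' (by omega)).2
  have h1 : x ∈ stk' A B a' := lifetime hv (by omega) hfab.symm (by omega) (by omega)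
  have h2 : x ≤ x' := fm_max (show a' < n by omega) h1
  have h3 : x' ∈ stk' A B b := lifetime hv (by omega) hfa'b'.symm (by omega) (by omega)
  have h4 : x' ≤ fm A B b := fm_max (show b < n by omega) h3
  rw [← hfab] at h4
  exact hne (by omega)

end Stack

end NarayanaProof

namespace NarayanaProof

open scoped Classical

section PartitionSide

variable {n : ℕ}

/-- the minimum of a finset of `Fin n`, as a natural number (junk value `0` for `∅`). -/
noncomputable def mnv (P : Finset (Fin n)) : ℕ :=
  if h : P.Nonempty then (P.min' h).val else 0

/-- the maximum of a finset of `Fin n`, as a natural number (junk value `0` for `∅`). -/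
noncomputable def mxv (P : Finset (Fin n)) : ℕ :=
  if h : P.Nonempty then (P.max' h).val else 0

lemma mnv_of_nonempty {P : Finset (Fin n)} (h : P.Nonempty) : mnv P = (P.min' h).val := by
  rw [mnv, dif_pos h]

lemma mxv_of_nonempty {P : Finset (Fin n)} (h : P.Nonempty) : mxv P = (P.max' h).val := by
  rw [mxv, dif_pos h]

lemma mnv_le {P : Finset (Fin n)} {i : Fin n} (hi : i ∈ P) : mnv P ≤ i.val := by
  rw [mnv_of_nonempty ⟨i, hi⟩]
  exact P.min'_le i hi

lemma le_mxv {P : Finset (Fin n)} {i : Fin n} (hi : i ∈ P) : i.val ≤ mxv P := by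
  rw [mxv_of_nonempty ⟨i, hi⟩]
  exact P.le_max' i hi

lemma mnv_lt {P : Finset (Fin n)} (h : P.Nonempty) : mnv P < n := by
  rw [mnv_of_nonempty h]; exact (P.min' h).isLt

lemma mxv_lt {P : Finset (Fin n)} (h : P.Nonempty) : mxv P < n := by
  rw [mxv_of_nonempty h]; exact (P.max' h).isLt

lemma mnv_mem {P : Finset (Fin n)} (h : P.Nonempty) : (⟨mnv P, mnv_lt h⟩ : Fin n) ∈ P := by
  have heq : (⟨mnv P, mnv_lt h⟩ : Fin n) = P.min' h := by
    apply Fin.ext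
    exact mnv_of_nonempty h
  rw [heq]
  exact P.min'_mem h

lemma mxv_mem {P : Finset (Fin n)} (h : P.Nonempty) : (⟨mxv P, mxv_lt h⟩ : Fin n) ∈ P := by
  have heq : (⟨mxv P, mxv_lt h⟩ : Fin n) = P.max' h := by
    apply Fin.ext
    exact mxv_of_nonempty h
  rw [heq]
  exact P.max'_mem h

lemma mnv_le_mxv {P : Finset (Fin n)} (h : P.Nonempty) : mnv P ≤ mxv P :=
  (mnv_le (mxv_mem h))

variable (π : Finpartition (Finset.univ : Finset (Fin n)))

/-- the set of block minima -/
noncomputable def minset : Finset ℕ := π.parts.image mnv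

/-- the set of block maxima -/
noncomputable def maxset : Finset ℕ := π.parts.image mxv

lemma mnv_injOn : Set.InjOn mnv (π.parts : Set (Finset (Fin n))) := by
  intro P hP Q hQ h
  have hPne := π.nonempty_of_mem_parts hP
  have hQne := π.nonempty_of_mem_parts hQ
  have h1 := mnv_mem hPne
  have h2 := mnv_mem hQne
  refine π.eq_of_mem_parts hP hQ h1 ?_
  have heq : (⟨mnv P, mnv_lt hPne⟩ : Fin n) = (⟨mnv Q, mnv_lt hQne⟩ : Fin n) := Fin.ext h
  rw [heq]
  exact h2

lemma mxv_injOn : Set.InjOn mxv (π.parts : Set (Finset (Fin n))) := by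
  intro P hP Q hQ h
  have hPne := π.nonempty_of_mem_parts hP
  have hQne := π.nonempty_of_mem_parts hQ
  have h1 := mxv_mem hPne
  have h2 := mxv_mem hQne
  refine π.eq_of_mem_parts hP hQ h1 ?_
  have heq : (⟨mxv P, mxv_lt hPne⟩ : Fin n) = (⟨mxv Q, mxv_lt hQne⟩ : Fin n) := Fin.ext h
  rw [heq]
  exact h2

lemma minset_card : (minset π).card = π.parts.card :=
  card_image_of_injOn (mnv_injOn π)

lemma maxset_card : (maxset π).card = π.parts.card :=
  card_image_of_injOn (mxv_injOn π)

lemma minset_subset_range : minset π ⊆ range n := by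
  intro x hx
  rw [minset, mem_image] at hx
  obtain ⟨P, hP, rfl⟩ := hx
  have h := π.nonempty_of_mem_parts hP
  rw [mnv_of_nonempty h, mem_range]
  exact (P.min' h).isLt

lemma maxset_subset_range : maxset π ⊆ range n := by
  intro x hx
  rw [maxset, mem_image] at hx
  obtain ⟨P, hP, rfl⟩ := hx
  have h := π.nonempty_of_mem_parts hP
  rw [mxv_of_nonempty h, mem_range]
  exact (P.max' h).isLt

lemma pcnt_minset (t : ℕ) :
    pcnt (minset π) t = (π.parts.filter (fun P => mnv P < t)).card := by
  rw [pcnt, minset, filter_image]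
  exact card_image_of_injOn ((mnv_injOn π).mono (filter_subset _ _))

lemma pcnt_maxset (t : ℕ) :
    pcnt (maxset π) t = (π.parts.filter (fun P => mxv P < t)).card := by
  rw [pcnt, maxset, filter_image]
  exact card_image_of_injOn ((mxv_injOn π).mono (filter_subset _ _))

/-- validity of the pair of minima/maxima of any finpartition -/
lemma validP_minset_maxset : ValidP n (minset π) (maxset π) := by
  refine ⟨minset_subset_range π, maxset_subset_range π, ?_, ?_⟩
  · rw [minset_card, maxset_card]
  · intro t ht
    rw [pcnt_minset, pcnt_maxset]
    apply card_lt_card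
    constructor
    · intro P hP
      rw [mem_filter] at hP ⊢
      have h := π.nonempty_of_mem_parts hP.1
      have h2 := hP.2
      exact ⟨hP.1, by have := mnv_le_mxv h; omega⟩
    · intro hsub
      set Pt := π.part ⟨t, ht⟩ with hPt
      have hPtm : Pt ∈ π.parts := π.part_mem.2 (mem_univ _)
      have htPt : (⟨t, ht⟩ : Fin n) ∈ Pt := π.mem_part (mem_univ _)
      have hvt : ((⟨t, ht⟩ : Fin n) : ℕ) = t := rfl
      have h1 : Pt ∈ π.parts.filter (fun P => mnv P < t + 1) := by
        rw [mem_filter]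
        have h3 := mnv_le htPt
        rw [hvt] at h3
        exact ⟨hPtm, by omega⟩
      have h2 := hsub h1
      rw [mem_filter] at h2
      have h4 := le_mxv htPt
      rw [hvt] at h4
      omega

end PartitionSide

end NarayanaProof

namespace NarayanaProof

open scoped Classical

section Phi

variable {n : ℕ}

/-- the partition of `Fin n` induced by the fibers of `fm A B` -/
noncomputable def phi (A B : Finset ℕ) : Finpartition (Finset.univ : Finset (Fin n)) :=
  letI : DecidableRel (Setoid.ker (fun i : Fin n => fm A B i.val)).r := fun _ _ => Classical.propDecidable _
  Finpartition.ofSetoid (Setoid.ker (fun i : Fin n => fm A B i.val))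

lemma part_phi (A B : Finset ℕ) (i : Fin n) :
    (phi A B).part i = univ.filter (fun j => fm A B i.val = fm A B j.val) := by
  ext b
  rw [phi]
  rw [Finpartition.mem_part_ofSetoid_iff_rel]
  rw [Setoid.ker_def]
  simp

lemma mem_parts_phi {A B : Finset ℕ} {X : Finset (Fin n)} :
    X ∈ (phi A B).parts ↔ ∃ i : Fin n, X = univ.filter (fun j => fm A B i.val = fm A B j.val) := by
  constructor
  · intro hX
    obtain ⟨i, hi⟩ := Finpartition.nonempty_of_mem_parts _ hX
    exact ⟨i, ((phi A B).part_eq_of_mem hX hi).symm.trans (part_phi A B i)⟩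
  · rintro ⟨i, rfl⟩
    rw [← part_phi]
    exact (phi A B).part_mem.2 (mem_univ _)

variable {A B : Finset ℕ} (hv : ValidP n A B)

include hv

lemma image_fm : univ.image (fun i : Fin n => fm A B i.val) = A := by
  apply Finset.Subset.antisymm
  · intro x hx
    rw [mem_image] at hx
    obtain ⟨i, _, rfl⟩ := hx
    exact (fm_spec hv i.val i.isLt).1
  · intro a ha
    have han : a < n := by have := hv.1 ha; rwa [mem_range] at this
    rw [mem_image]
    exact ⟨⟨a, han⟩, mem_univ _, fm_self ha⟩

lemma phi_parts_eq : (phi A B).parts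
    = A.image (fun a => univ.filter (fun j : Fin n => a = fm A B j.val)) := by
  apply Finset.Subset.antisymm
  · intro X hX
    rw [mem_parts_phi] at hX
    obtain ⟨i, rfl⟩ := hX
    rw [mem_image]
    exact ⟨fm A B i.val, (fm_spec hv i.val i.isLt).1, rfl⟩
  · intro X hX
    rw [mem_image] at hX
    obtain ⟨a, ha, rfl⟩ := hX
    rw [mem_parts_phi]
    have han : a < n := by have := hv.1 ha; rwa [mem_range] at this
    refine ⟨⟨a, han⟩, ?_⟩
    congr 1
    ext j
    rw [fm_self ha]

lemma phi_parts_card : (phi A B : Finpartition (Finset.univ : Finset (Fin n))).parts.card = A.card := by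
  rw [phi_parts_eq hv]
  apply card_image_of_injOn
  intro a ha b hb hab
  dsimp only at hab
  have han : a < n := by have := hv.1 ha; rwa [mem_range] at this
  have hbn : b < n := by have := hv.1 hb; rwa [mem_range] at this
  have h1 : (⟨a, han⟩ : Fin n) ∈ univ.filter (fun j : Fin n => a = fm A B j.val) := by
    rw [mem_filter]
    exact ⟨mem_univ _, (fm_self ha).symm⟩
  rw [hab, mem_filter] at h1
  have h3 : b = fm A B a := h1.2
  have h4 : fm A B a = a := fm_self ha
  omega

end Phi

end NarayanaProof

namespace NarayanaProof

open scoped Classical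

section Phi2

variable {n : ℕ} {A B : Finset ℕ} (hv : ValidP n A B)

include hv

lemma phi_noncrossing : Noncrossing (phi A B : Finpartition (Finset.univ : Finset (Fin n))) := by
  intro X hX X' hX' hne
  rintro ⟨a, a', b, b', haX, hbX, ha'X, hb'X, h1, h2, h3⟩
  rw [mem_parts_phi] at hX hX'
  obtain ⟨i, rfl⟩ := hX
  obtain ⟨i', rfl⟩ := hX'
  have hvv' : fm A B i.val ≠ fm A B i'.val := by
    intro h
    exact hne (by rw [h])
  have hfa : fm A B i.val = fm A B a.val := (mem_filter.1 haX).2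
  have hfb : fm A B i.val = fm A B b.val := (mem_filter.1 hbX).2
  have hfa' : fm A B i'.val = fm A B a'.val := (mem_filter.1 ha'X).2
  have hfb' : fm A B i'.val = fm A B b'.val := (mem_filter.1 hb'X).2
  exact fm_noncrossing hv (Fin.lt_def.1 h1) (Fin.lt_def.1 h2) (Fin.lt_def.1 h3)
    b'.isLt (hfa ▸ hfb ▸ rfl) (hfa' ▸ hfb' ▸ rfl)
    (by rw [← hfa, ← hfa']; exact hvv')

lemma mnv_phi_part {a : ℕ} (ha : a ∈ A) :
    mnv (univ.filter (fun j : Fin n => a = fm A B j.val)) = a := by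
  have han : a < n := by have := hv.1 ha; rwa [mem_range] at this
  set X := univ.filter (fun j : Fin n => a = fm A B j.val) with hXdef
  have hmem : (⟨a, han⟩ : Fin n) ∈ X := by
    rw [hXdef, mem_filter]
    exact ⟨mem_univ _, (fm_self ha).symm⟩
  apply le_antisymm (mnv_le hmem)
  show a ≤ mnv X
  have hne : X.Nonempty := ⟨_, hmem⟩
  have h1 := mnv_mem hne
  have h2 : a = fm A B (mnv X) := (mem_filter.1 h1).2
  have h3 : fm A B (mnv X) ≤ mnv X := (fm_spec hv (mnv X) (mnv_lt hne)).2
  omega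

lemma minset_phi : minset (phi A B : Finpartition (Finset.univ : Finset (Fin n))) = A := by
  rw [minset, phi_parts_eq hv, image_image]
  have h1 : A.image (fun a => mnv (univ.filter (fun j : Fin n => a = fm A B j.val))) = A.image id := by
    apply image_congr
    intro a ha
    exact mnv_phi_part hv ha
  rw [Function.comp_def]
  rw [h1, image_id]

lemma maxset_phi : maxset (phi A B : Finpartition (Finset.univ : Finset (Fin n))) = B := by
  have hsub : maxset (phi A B : Finpartition (Finset.univ : Finset (Fin n))) ⊆ B := by
    intro x hx
    rw [maxset, mem_image] at hx
    obtain ⟨X, hX, rfl⟩ := hx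
    have hXne := Finpartition.nonempty_of_mem_parts _ hX
    rw [mem_parts_phi] at hX
    obtain ⟨i, rfl⟩ := hX
    set X := univ.filter (fun j : Fin n => fm A B i.val = fm A B j.val) with hXdef
    by_contra hxB
    have hmax := mxv_mem hXne
    rw [mem_filter] at hmax
    have hfx : fm A B i.val = fm A B (mxv X) := hmax.2
    obtain ⟨j, hj1, hj2, hj3⟩ := not_closer_not_max hv (mxv_lt hXne) hxB
    have hjX : (⟨j, hj2⟩ : Fin n) ∈ X := by
      rw [hXdef, mem_filter]
      refine ⟨mem_univ _, ?_⟩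
      show fm A B i.val = fm A B j
      rw [hj3, ← hfx]
    have := le_mxv hjX
    have hj : j ≤ mxv X := this
    omega
  apply Finset.eq_of_subset_of_card_le hsub
  have h1 : (maxset (phi A B : Finpartition (Finset.univ : Finset (Fin n)))).card = A.card := by
    rw [maxset_card, phi_parts_card hv]
  rw [h1, hv.2.2.1]

end Phi2

end NarayanaProof

namespace NarayanaProof

open scoped Classical

section Psi

variable {n : ℕ} (π : Finpartition (Finset.univ : Finset (Fin n)))

lemma part_self_mem (i : Fin n) : i ∈ π.part i := π.mem_part (mem_univ _)

lemma part_mem_parts (i : Fin n) : π.part i ∈ π.parts := π.part_mem.2 (mem_univ _)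

lemma mnv_part_le (i : Fin n) : mnv (π.part i) ≤ i.val := mnv_le (part_self_mem π i)

lemma le_mxv_part (i : Fin n) : i.val ≤ mxv (π.part i) := le_mxv (part_self_mem π i)

lemma mxv_part_of_mem_maxset {t : ℕ} (ht : t < n) (htB : t ∈ maxset π) :
    mxv (π.part ⟨t, ht⟩) = t := by
  rw [maxset, mem_image] at htB
  obtain ⟨P, hP, hPt⟩ := htB
  have hPne := π.nonempty_of_mem_parts hP
  have h1 := mxv_mem hPne
  have heq : (⟨mxv P, mxv_lt hPne⟩ : Fin n) = ⟨t, ht⟩ := Fin.ext hPt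
  rw [heq] at h1
  rw [π.part_eq_of_mem hP h1]
  exact hPt

lemma mxv_ne_of_not_mem_maxset {t : ℕ} {P : Finset (Fin n)} (hP : P ∈ π.parts)
    (htB : t ∉ maxset π) : mxv P ≠ t := by
  intro h
  exact htB (by rw [maxset, mem_image]; exact ⟨P, hP, h⟩)

lemma mnv_eq_part_iff {t : ℕ} (ht : t < n) {P : Finset (Fin n)} (hP : P ∈ π.parts)
    (h : mxv P = t) : P = π.part ⟨t, ht⟩ := by
  have hPne := π.nonempty_of_mem_parts hP
  have h1 := mxv_mem hPne
  have heq : (⟨mxv P, mxv_lt hPne⟩ : Fin n) = ⟨t, ht⟩ := Fin.ext h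
  rw [heq] at h1
  exact (π.part_eq_of_mem hP h1).symm

lemma mnv_part_eq_of_mem_minset {t : ℕ} (ht : t < n) (htA : t ∈ minset π) :
    ∃ P ∈ π.parts, mnv P = t := by
  rw [minset, mem_image] at htA
  obtain ⟨P, hP, hPt⟩ := htA
  exact ⟨P, hP, hPt⟩

variable (hnc : Noncrossing π)

include hnc

/-- the key geometric fact: among the blocks spanning time `t`, the block of `t`
has the largest minimum. -/
lemma head_bound {t : ℕ} (ht : t < n) {Q : Finset (Fin n)} (hQ : Q ∈ π.parts)
    (h1 : mnv Q ≤ t) (h2 : t ≤ mxv Q) : mnv Q ≤ mnv (π.part ⟨t, ht⟩) := by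
  set Pt := π.part ⟨t, ht⟩ with hPtdef
  have hPtm : Pt ∈ π.parts := part_mem_parts π _
  by_cases hQPt : Q = Pt
  · rw [hQPt]
  · by_contra hc
    push_neg at hc
    have hQne := π.nonempty_of_mem_parts hQ
    have hPtne := π.nonempty_of_mem_parts hPtm
    -- mnv Q < t  (if = t then ⟨t⟩ ∈ Q so Q = Pt)
    have hmnlt : mnv Q < t := by
      rcases lt_or_eq_of_le h1 with h | h
      · exact h
      · exfalso
        have hmem := mnv_mem hQne
        have heq : (⟨mnv Q, mnv_lt hQne⟩ : Fin n) = ⟨t, ht⟩ := Fin.ext h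
        rw [heq] at hmem
        exact hQPt ((π.part_eq_of_mem hQ hmem).symm)
    have hmxgt : t < mxv Q := by
      rcases lt_or_eq_of_le h2 with h | h
      · exact h
      · exfalso
        have hmem := mxv_mem hQne
        have heq : (⟨mxv Q, mxv_lt hQne⟩ : Fin n) = ⟨t, ht⟩ := Fin.ext h.symm
        rw [heq] at hmem
        exact hQPt ((π.part_eq_of_mem hQ hmem).symm)
    apply hnc Pt hPtm Q hQ (fun h => hQPt h.symm)
    refine ⟨⟨mnv Pt, mnv_lt hPtne⟩, ⟨mnv Q, mnv_lt hQne⟩, ⟨t, ht⟩, ⟨mxv Q, mxv_lt hQne⟩,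
      mnv_mem hPtne, part_self_mem π _, mnv_mem hQne, mxv_mem hQne, ?_, ?_, ?_⟩
    · rw [Fin.lt_def]; exact hc
    · rw [Fin.lt_def]; exact hmnlt
    · rw [Fin.lt_def]; exact hmxgt

omit hnc in
lemma stk'_char_of_inv {t : ℕ} (ht : t < n)
    (hinv : ∀ x, x ∈ stk (minset π) (maxset π) t ↔
      ∃ P ∈ π.parts, mnv P = x ∧ x < t ∧ t ≤ mxv P) :
    ∀ x, x ∈ stk' (minset π) (maxset π) t ↔
      ∃ P ∈ π.parts, mnv P = x ∧ x ≤ t ∧ t ≤ mxv P := by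
  intro x
  unfold stk'
  split_ifs with hA
  · constructor
    · intro hx
      rcases List.mem_cons.1 hx with rfl | hx'
      · obtain ⟨P, hP, hPeq⟩ := mnv_part_eq_of_mem_minset π ht hA
        refine ⟨P, hP, hPeq, le_refl _, ?_⟩
        have := mnv_le_mxv (π.nonempty_of_mem_parts hP)
        omega
      · obtain ⟨P, hP, h1, h2, h3⟩ := (hinv x).1 hx'
        exact ⟨P, hP, h1, by omega, h3⟩
    · rintro ⟨P, hP, rfl, hle, hmx⟩
      rcases lt_or_eq_of_le hle with h | h
      · exact List.mem_cons_of_mem _ ((hinv _).2 ⟨P, hP, rfl, h, hmx⟩)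
      · rw [h]; exact List.mem_cons_self
  · constructor
    · intro hx
      obtain ⟨P, hP, h1, h2, h3⟩ := (hinv x).1 hx
      exact ⟨P, hP, h1, by omega, h3⟩
    · rintro ⟨P, hP, rfl, hle, hmx⟩
      rcases lt_or_eq_of_le hle with h | h
      · exact (hinv _).2 ⟨P, hP, rfl, h, hmx⟩
      · exfalso
        apply hA
        rw [minset, mem_image]
        exact ⟨P, hP, h⟩

lemma head_of_inv {t : ℕ} (ht : t < n)
    (hinv : ∀ x, x ∈ stk (minset π) (maxset π) t ↔
      ∃ P ∈ π.parts, mnv P = x ∧ x < t ∧ t ≤ mxv P) :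
    fm (minset π) (maxset π) t = mnv (π.part ⟨t, ht⟩) := by
  have hvπ := validP_minset_maxset π
  have hchar := stk'_char_of_inv π ht hinv
  set Pt := π.part ⟨t, ht⟩ with hPtdef
  have hPtm : Pt ∈ π.parts := part_mem_parts π _
  have hmn : mnv Pt ≤ t := by have := mnv_part_le π ⟨t, ht⟩; exact this
  have hmx : t ≤ mxv Pt := by have := le_mxv_part π ⟨t, ht⟩; exact this
  have h1 : mnv Pt ∈ stk' (minset π) (maxset π) t := (hchar _).2 ⟨Pt, hPtm, rfl, hmn, hmx⟩
  have h2 : mnv Pt ≤ fm (minset π) (maxset π) t := fm_max ht h1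
  have h3 := fm_mem_stk' hvπ t ht
  obtain ⟨P, hP, hPeq, hle, hmxP⟩ := (hchar _).1 h3
  have h4 : mnv P ≤ mnv Pt := head_bound π hnc ht hP (by omega) hmxP
  omega

/-- the stack invariant: at time `t` the stack consists of the minima of the blocks
spanning across `t`. -/
lemma stack_inv : ∀ t, t ≤ n →
    ∀ x, x ∈ stk (minset π) (maxset π) t ↔
      ∃ P ∈ π.parts, mnv P = x ∧ x < t ∧ t ≤ mxv P := by
  intro t
  induction t with
  | zero =>
    intro _ x
    simp [stk]
  | succ t ih =>
    intro htn x
    have ht : t < n := by omega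
    have hinv := ih (by omega)
    have hchar := stk'_char_of_inv π ht hinv
    have hhead := head_of_inv π hnc ht hinv
    have hvπ := validP_minset_maxset π
    set Pt := π.part ⟨t, ht⟩ with hPtdef
    have hPtm : Pt ∈ π.parts := part_mem_parts π _
    rw [stk_succ]
    split_ifs with hB
    · -- t is a closer: pop the head, which is mnv Pt
      have hmxPt : mxv Pt = t := mxv_part_of_mem_maxset π ht hB
      have htail : ∀ y, y ∈ (stk' (minset π) (maxset π) t).tail ↔
          (y ∈ stk' (minset π) (maxset π) t ∧ y ≠ fm (minset π) (maxset π) t) := by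
        intro y
        cases hstk : stk' (minset π) (maxset π) t with
        | nil => exact absurd hstk (stk'_ne_nil hvπ t ht)
        | cons c l =>
          have hsort := stk'_sorted (minset π) (maxset π) t
          rw [hstk] at hsort
          have hfmc : fm (minset π) (maxset π) t = c := by unfold fm; rw [hstk]; rfl
          simp only [List.tail_cons, hfmc, List.mem_cons]
          constructor
          · intro hy
            have := List.rel_of_pairwise_cons hsort hy
            exact ⟨Or.inr hy, by omega⟩
          · rintro ⟨hy | hy, hne⟩
            · exact absurd hy hne
            · exact hy
      rw [htail, hhead]
      constructor
      · rintro ⟨hx, hne⟩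
        obtain ⟨P, hP, hPeq, hle, hmxP⟩ := (hchar _).1 hx
        have hPPt : P ≠ Pt := by
          intro h
          rw [h] at hPeq
          exact hne (by rw [hPeq])
        have hmxne : mxv P ≠ t := by
          intro h
          exact hPPt (mnv_eq_part_iff π ht hP h)
        exact ⟨P, hP, hPeq, by omega, by omega⟩
      · rintro ⟨P, hP, rfl, hlt, hmxP⟩
        refine ⟨(hchar _).2 ⟨P, hP, rfl, by omega, by omega⟩, ?_⟩
        intro h
        have hPPt : P = Pt := mnv_injOn π hP hPtm (by rw [h])
        rw [hPPt, hmxPt] at hmxP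
        omega
    · -- t is not a closer
      constructor
      · intro hx
        obtain ⟨P, hP, hPeq, hle, hmxP⟩ := (hchar _).1 hx
        have hmxne : mxv P ≠ t := mxv_ne_of_not_mem_maxset π hP hB
        exact ⟨P, hP, hPeq, by omega, by omega⟩
      · rintro ⟨P, hP, rfl, hlt, hmxP⟩
        exact (hchar _).2 ⟨P, hP, rfl, by omega, by omega⟩

lemma fm_eq_mnv_part {t : ℕ} (ht : t < n) :
    fm (minset π) (maxset π) t = mnv (π.part ⟨t, ht⟩) :=
  head_of_inv π hnc ht (stack_inv π hnc t (le_of_lt ht))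

lemma filter_fm_eq_part (i : Fin n) :
    univ.filter (fun j : Fin n => fm (minset π) (maxset π) i.val
      = fm (minset π) (maxset π) j.val) = π.part i := by
  ext j
  rw [mem_filter]
  have h1 : fm (minset π) (maxset π) i.val = mnv (π.part i) := by
    have := fm_eq_mnv_part π hnc i.isLt
    rwa [Fin.eta] at this
  have h2 : fm (minset π) (maxset π) j.val = mnv (π.part j) := by
    have := fm_eq_mnv_part π hnc j.isLt
    rwa [Fin.eta] at this
  rw [h1, h2]
  constructor
  · rintro ⟨_, h⟩
    have : π.part i = π.part j := mnv_injOn π (part_mem_parts π i) (part_mem_parts π j) h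
    rw [this]
    exact part_self_mem π j
  · intro hj
    refine ⟨mem_univ _, ?_⟩
    rw [π.part_eq_of_mem (part_mem_parts π i) hj]

/-- recovering the partition from its minima and maxima -/
lemma phi_psi : phi (minset π) (maxset π) = π := by
  apply Finpartition.ext
  ext X
  rw [mem_parts_phi]
  constructor
  · rintro ⟨i, rfl⟩
    rw [filter_fm_eq_part π hnc i]
    exact part_mem_parts π i
  · intro hX
    obtain ⟨i, hi⟩ := π.nonempty_of_mem_parts hX
    refine ⟨i, ?_⟩
    rw [filter_fm_eq_part π hnc i]
    exact (π.part_eq_of_mem hX hi).symm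

end Psi

end NarayanaProof

namespace NarayanaProof

open scoped Classical

section Shift

lemma pcnt_shift_down {A : Finset ℕ} (h0 : 0 ∈ A) (hpos : ∀ a ∈ A.erase 0, 1 ≤ a) (t : ℕ) :
    pcnt ((A.erase 0).image (· - 1)) t + 1 = pcnt A (t+1) := by
  unfold pcnt
  rw [filter_image]
  rw [card_image_of_injOn (by
    intro a ha b hb hab
    have ha1 := hpos a (mem_of_mem_filter a ha)
    have hb1 := hpos b (mem_of_mem_filter b hb)
    dsimp only at hab
    omega)]
  have h1 : (A.erase 0).filter (fun a => a - 1 < t) = (A.erase 0).filter (fun a => a < t + 1) := by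
    apply filter_congr
    intro a ha
    have := hpos a ha
    omega
  rw [h1, filter_erase, card_erase_of_mem (by rw [mem_filter]; exact ⟨h0, by omega⟩)]
  have h2 : 1 ≤ (A.filter (· < t + 1)).card := card_pos.2 ⟨0, by rw [mem_filter]; exact ⟨h0, by omega⟩⟩
  omega

lemma pcnt_shift_up (C : Finset ℕ) (t : ℕ) :
    pcnt (insert 0 (C.image (· + 1))) (t+1) = pcnt C t + 1 := by
  unfold pcnt
  rw [filter_insert, if_pos (by omega)]
  rw [card_insert_of_notMem (by
    rw [mem_filter, mem_image]
    rintro ⟨⟨c, _, hc⟩, _⟩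
    omega)]
  rw [filter_image]
  rw [card_image_of_injOn (by intro a _ b _ hab; dsimp only at hab; omega)]
  congr 2
  apply filter_congr
  intro a _
  omega

lemma pcnt_erase_top {B : Finset ℕ} {x t : ℕ} (hx : t ≤ x) :
    pcnt (B.erase x) t = pcnt B t := by
  unfold pcnt
  rw [filter_erase, erase_eq_of_notMem (by rw [mem_filter]; rintro ⟨_, h⟩; omega)]

lemma pcnt_insert_top {B : Finset ℕ} {x t : ℕ} (hx : t ≤ x) :
    pcnt (insert x B) t = pcnt B t := by
  unfold pcnt
  rw [filter_insert, if_neg (by omega)]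

/-- the set of valid pairs with `k` blocks -/
noncomputable def VP (n k : ℕ) : Finset (Finset ℕ × Finset ℕ) :=
  (pairsSet n k k).filter (fun q => ∀ t < n, pcnt q.2 t < pcnt q.1 (t+1))

lemma mem_VP {n k : ℕ} {q : Finset ℕ × Finset ℕ} :
    q ∈ VP n k ↔ ((q.1 ⊆ range n ∧ q.1.card = k) ∧ (q.2 ⊆ range n ∧ q.2.card = k))
      ∧ ∀ t < n, pcnt q.2 t < pcnt q.1 (t+1) := by
  rw [VP, mem_filter, mem_pairsSet]

lemma validP_of_mem_VP {n k : ℕ} {q : Finset ℕ × Finset ℕ} (h : q ∈ VP n k) :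
    ValidP n q.1 q.2 := by
  rw [mem_VP] at h
  exact ⟨h.1.1.1, h.1.2.1, by rw [h.1.1.2, h.1.2.2], h.2⟩

lemma zero_mem_of_VP {n k : ℕ} (hn : 1 ≤ n) {q : Finset ℕ × Finset ℕ} (h : q ∈ VP n k) :
    0 ∈ q.1 := by
  rw [mem_VP] at h
  have h1 := h.2 0 (by omega)
  rw [pcnt_zero] at h1
  have h2 : (q.1.filter (· < 1)).Nonempty := card_pos.1 h1
  obtain ⟨a, ha⟩ := h2
  rw [mem_filter] at ha
  obtain ⟨ha1, ha2⟩ := ha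
  have : a = 0 := by omega
  rwa [this] at ha1

lemma top_mem_of_VP {n k : ℕ} (hn : 1 ≤ n) {q : Finset ℕ × Finset ℕ} (h : q ∈ VP n k) :
    n - 1 ∈ q.2 := by
  rw [mem_VP] at h
  have h1 := h.2 (n-1) (by omega)
  rw [show n - 1 + 1 = n by omega] at h1
  rw [pcnt_of_subset_range _ h.1.1.1 (le_refl n), h.1.1.2] at h1
  by_contra hc
  have h2 : q.2.filter (· < n - 1) = q.2 := by
    apply filter_true_of_mem
    intro b hb
    have hbn : b < n := by have := h.1.2.1 hb; rwa [mem_range] at this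
    rcases Nat.lt_or_ge b (n-1) with h' | h'
    · exact h'
    · exfalso; apply hc; have : b = n - 1 := by omega
      rwa [this] at hb
  have h3 : pcnt q.2 (n-1) = k := by rw [pcnt, h2, h.1.2.2]
  omega

/-- the forward shift map -/
noncomputable def shiftF (n : ℕ) (q : Finset ℕ × Finset ℕ) : Finset ℕ × Finset ℕ :=
  ((q.1.erase 0).image (· - 1), q.2.erase (n-1))

/-- the backward shift map -/
noncomputable def shiftB (n : ℕ) (q : Finset ℕ × Finset ℕ) : Finset ℕ × Finset ℕ :=
  (insert 0 (q.1.image (· + 1)), insert (n-1) q.2)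

lemma VP_card_eq (n k : ℕ) (hn : 1 ≤ k) (hkn : k ≤ n) :
    (VP n k).card = (dompairs (n-1) (k-1)).card := by
  have hn1 : 1 ≤ n := le_trans hn hkn
  apply card_bij' (fun q _ => shiftF n q) (fun q _ => shiftB n q)
  · -- forward lands in dompairs
    intro q hq
    have h0 := zero_mem_of_VP hn1 hq
    have htop := top_mem_of_VP hn1 hq
    rw [mem_VP] at hq
    obtain ⟨⟨⟨hA1, hA2⟩, hB1, hB2⟩, hval⟩ := hq
    have hpos : ∀ a ∈ q.1.erase 0, 1 ≤ a := by
      intro a ha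
      rw [mem_erase] at ha
      omega
    rw [mem_dompairs]
    constructor
    · rw [mem_pairsSet]
      constructor
      · constructor
        · intro x hx
          rw [shiftF] at hx
          simp only [mem_image, mem_erase] at hx
          obtain ⟨a, ⟨ha0, haA⟩, rfl⟩ := hx
          have : a < n := by have := hA1 haA; rwa [mem_range] at this
          rw [mem_range]
          omega
        · show ((q.1.erase 0).image (· - 1)).card = k - 1
          rw [card_image_of_injOn (by
            intro a ha b hb hab
            have := hpos a ha
            have := hpos b hb
            dsimp only at hab
            omega)]
          rw [card_erase_of_mem h0, hA2]
      · constructor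
        · intro x hx
          rw [shiftF] at hx
          rw [mem_erase] at hx
          have : x < n := by have := hB1 hx.2; rwa [mem_range] at this
          rw [mem_range]
          omega
        · show (q.2.erase (n-1)).card = k - 1
          rw [card_erase_of_mem htop, hB2]
    · -- dominance
      intro t
      show pcnt (q.2.erase (n-1)) t ≤ pcnt ((q.1.erase 0).image (· - 1)) t
      rcases Nat.lt_or_ge t n with htn | htn
      · have h1 : pcnt (q.2.erase (n-1)) t = pcnt q.2 t := pcnt_erase_top (by omega)
        have h2 := pcnt_shift_down h0 hpos t
        have h3 := hval t htn
        omega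
      · have h1 : pcnt (q.2.erase (n-1)) t ≤ (q.2.erase (n-1)).card := pcnt_le_card _ _
        have h2 : (q.2.erase (n-1)).card = k - 1 := by rw [card_erase_of_mem htop, hB2]
        have h3 : pcnt ((q.1.erase 0).image (· - 1)) t = k - 1 := by
          rw [pcnt_of_subset_range _ (by
            intro x hx
            simp only [mem_image, mem_erase] at hx
            obtain ⟨a, ⟨ha0, haA⟩, rfl⟩ := hx
            have : a < n := by have := hA1 haA; rwa [mem_range] at this
            rw [mem_range]
            omega) (show n - 1 ≤ t by omega)]
          rw [card_image_of_injOn (by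
            intro a ha b hb hab
            have := hpos a ha
            have := hpos b hb
            dsimp only at hab
            omega)]
          rw [card_erase_of_mem h0, hA2]
        omega
  · -- backward lands in VP
    intro q hq
    rw [mem_dompairs, mem_pairsSet] at hq
    obtain ⟨⟨⟨hC1, hC2⟩, hB1, hB2⟩, hdom⟩ := hq
    rw [mem_VP]
    have htB : (n-1) ∉ q.2 := by
      intro hc
      have := hB1 hc
      rw [mem_range] at this
      omega
    have h0C : (0 : ℕ) ∉ q.1.image (· + 1) := by
      rw [mem_image]
      rintro ⟨c, _, hc⟩
      omega
    constructor
    · constructor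
      · constructor
        · intro x hx
          rw [shiftB] at hx
          simp only [mem_insert, mem_image] at hx
          rcases hx with rfl | ⟨c, hc, rfl⟩
          · rw [mem_range]; omega
          · have := hC1 hc; rw [mem_range] at this ⊢; omega
        · show (insert 0 (q.1.image (· + 1))).card = k
          rw [card_insert_of_notMem h0C,
            card_image_of_injective _ (fun a b h => by omega), hC2]
          omega
      · constructor
        · intro x hx
          rw [shiftB] at hx
          rw [mem_insert] at hx
          rcases hx with rfl | hx
          · rw [mem_range]; omega
          · have := hB1 hx; rw [mem_range] at this ⊢; omega
        · show (insert (n-1) q.2).card = k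
          rw [card_insert_of_notMem htB, hB2]
          omega
    · intro t htn
      show pcnt (insert (n-1) q.2) t < pcnt (insert 0 (q.1.image (· + 1))) (t+1)
      have h1 : pcnt (insert (n-1) q.2) t = pcnt q.2 t := pcnt_insert_top (by omega)
      have h2 := pcnt_shift_up q.1 t
      have h3 := hdom t
      omega
  · -- left inverse
    intro q hq
    have hn1' : 1 ≤ n := hn1
    have h0 := zero_mem_of_VP hn1 hq
    have htop := top_mem_of_VP hn1 hq
    rw [mem_VP] at hq
    rw [shiftF, shiftB]
    have hpos : ∀ a ∈ q.1.erase 0, 1 ≤ a := by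
      intro a ha
      rw [mem_erase] at ha
      omega
    apply Prod.ext
    · show insert 0 (((q.1.erase 0).image (· - 1)).image (· + 1)) = q.1
      rw [image_image]
      ext x
      simp only [mem_insert, mem_image, Function.comp_apply, mem_erase]
      constructor
      · rintro (rfl | ⟨a, ⟨ha0, haA⟩, rfl⟩)
        · exact h0
        · rwa [show a - 1 + 1 = a by omega]
      · intro hx
        rcases Nat.eq_zero_or_pos x with rfl | hxpos
        · exact Or.inl rfl
        · exact Or.inr ⟨x, ⟨by omega, hx⟩, by omega⟩
    · show insert (n-1) (q.2.erase (n-1)) = q.2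
      exact insert_erase htop
  · -- right inverse
    intro q hq
    rw [mem_dompairs, mem_pairsSet] at hq
    obtain ⟨⟨⟨hC1, hC2⟩, hB1, hB2⟩, hdom⟩ := hq
    rw [shiftB, shiftF]
    have htB : (n-1) ∉ q.2 := by
      intro hc
      have := hB1 hc
      rw [mem_range] at this
      omega
    have h0C : (0 : ℕ) ∉ q.1.image (· + 1) := by
      rw [mem_image]
      rintro ⟨c, _, hc⟩
      omega
    apply Prod.ext
    · show (((insert 0 (q.1.image (· + 1))).erase 0).image (· - 1)) = q.1
      rw [erase_insert h0C, image_image]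
      have : q.1.image ((· - 1) ∘ (· + 1)) = q.1.image id := by
        apply image_congr
        intro a _
        simp
      rw [this, image_id]
    · show (insert (n-1) q.2).erase (n-1) = q.2
      exact erase_insert htB

end Shift

end NarayanaProof

namespace NarayanaProof

open scoped Classical in
lemma count_eq_VP (n k : ℕ) :
    (Finset.univ.filter fun π : Finpartition (Finset.univ : Finset (Fin n)) =>
        Noncrossing π ∧ π.parts.card = k).card = (VP n k).card := by
  apply card_bij' (fun π _ => (minset π, maxset π)) (fun q _ => phi q.1 q.2)
  · intro π hπ
    rw [mem_filter] at hπ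
    rw [mem_VP]
    exact ⟨⟨⟨minset_subset_range π, by rw [minset_card, hπ.2.2]⟩,
      maxset_subset_range π, by rw [maxset_card, hπ.2.2]⟩,
      (validP_minset_maxset π).2.2.2⟩
  · intro q hq
    have hv := validP_of_mem_VP hq
    rw [mem_filter]
    rw [mem_VP] at hq
    exact ⟨mem_univ _, phi_noncrossing hv, by rw [phi_parts_card hv, hq.1.1.2]⟩
  · intro π hπ
    rw [mem_filter] at hπ
    exact phi_psi π hπ.2.1
  · intro q hq
    have hv := validP_of_mem_VP hq
    exact Prod.ext (minset_phi hv) (maxset_phi hv)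

end NarayanaProof

open scoped Classical in
/-- The number of noncrossing partitions of `{1,…,n}` with exactly `k` blocks
is the Narayana number `N(n,k) = (1/k) binomial(n-1,k-1) binomial(n,k-1)`, and
`N(n,k) = N(n,n+1-k)`. -/
theorem narayana_count (n k : ℕ) (hk : 1 ≤ k) (hkn : k ≤ n) :
    (Finset.univ.filter fun π : Finpartition (Finset.univ : Finset (Fin n)) =>
        Noncrossing π ∧ π.parts.card = k).card
      = (n - 1).choose (k - 1) * n.choose (k - 1) / k ∧
    (n - 1).choose (k - 1) * n.choose (k - 1) / k
      = (n - 1).choose (n + 1 - k - 1) * n.choose (n + 1 - k - 1) / (n + 1 - k) := by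
  have hn1 : 1 ≤ n := le_trans hk hkn
  -- the count equals the cardinality of the dominance pairs
  have hD : (Finset.univ.filter fun π : Finpartition (Finset.univ : Finset (Fin n)) =>
        Noncrossing π ∧ π.parts.card = k).card = (NarayanaProof.dompairs (n-1) (k-1)).card := by
    rw [NarayanaProof.count_eq_VP, NarayanaProof.VP_card_eq n k hk hkn]
  -- k times the dominance-pair count is the product of binomials
  have hX : k * (NarayanaProof.dompairs (n-1) (k-1)).card
      = (n - 1).choose (k - 1) * n.choose (k - 1) := by
    have := NarayanaProof.dompairs_card (n-1) (k-1)
    rwa [show k - 1 + 1 = k by omega, show n - 1 + 1 = n by omega] at this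
  have hk0 : 0 < k := hk
  constructor
  · rw [hD, ← hX, Nat.mul_div_cancel_left _ hk0]
  · -- symmetry
    have hnk0 : 0 < n + 1 - k := by omega
    rw [show n + 1 - k - 1 = n - k by omega]
    have hs1 : (n - 1).choose (n - k) = (n - 1).choose (k - 1) := by
      have := Nat.choose_symm (show k - 1 ≤ n - 1 by omega) (n := n - 1)
      rwa [show n - 1 - (k - 1) = n - k by omega] at this
    have hs2 : n.choose (n - k) = n.choose k := by
      have := Nat.choose_symm hkn (n := n)
      rwa [show n - k = n - k from rfl] at this
    rw [hs1, hs2]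
    -- (n+1-k) * (C(n-1,k-1) * C(n,k-1)) = k * (C(n-1,k-1) * C(n,k))
    have hid : (n + 1 - k) * ((n - 1).choose (k - 1) * n.choose (k - 1))
        = k * ((n - 1).choose (k - 1) * n.choose k) := by
      have h1 : n.choose k * k = n.choose (k-1) * (n + 1 - k) := by
        have := Nat.choose_succ_right_eq n (k - 1)
        rwa [show k - 1 + 1 = k by omega, show n - (k-1) = n + 1 - k by omega] at this
      calc (n + 1 - k) * ((n - 1).choose (k - 1) * n.choose (k - 1))
          = (n - 1).choose (k - 1) * (n.choose (k - 1) * (n + 1 - k)) := by ring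
        _ = (n - 1).choose (k - 1) * (n.choose k * k) := by rw [h1]
        _ = k * ((n - 1).choose (k - 1) * n.choose k) := by ring
    set D := (NarayanaProof.dompairs (n-1) (k-1)).card with hDdef
    have h2 : k * ((n + 1 - k) * D) = k * ((n - 1).choose (k - 1) * n.choose k) := by
      calc k * ((n + 1 - k) * D) = (n + 1 - k) * (k * D) := by ring
        _ = (n + 1 - k) * ((n - 1).choose (k - 1) * n.choose (k - 1)) := by rw [hX]
        _ = k * ((n - 1).choose (k - 1) * n.choose k) := hid
    have h3 : (n + 1 - k) * D = (n - 1).choose (k - 1) * n.choose k :=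
      Nat.eq_of_mul_eq_mul_left hk0 h2
    rw [← hX, ← h3, Nat.mul_div_cancel_left _ hk0, Nat.mul_div_cancel_left _ hnk0]
end

section
/- The number of Motzkin paths of order n (from (1,1) to (2n-1,1) with up, down, and level steps as defined) with exactly j up steps equals C_j * binomial(n-1, 2j), where C_j is the j-th Catalan number. -/
open Finset

section Aux
open List
/-! ### Generic counting lemmas -/

lemma card_filter_lt_succ {k : ℕ} (Q : Fin k → Prop) [DecidablePred Q] (i : ℕ) :
    (Finset.univ.filter fun x : Fin k => (x : ℕ) < i + 1 ∧ Q x).card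
      = (Finset.univ.filter fun x : Fin k => (x : ℕ) < i ∧ Q x).card
        + (if h : i < k then (if Q ⟨i, h⟩ then 1 else 0) else 0) := by
  rw [Finset.card_filter, Finset.card_filter]
  have hsum : (∑ x : Fin k, if ((x : ℕ) < i + 1 ∧ Q x) then 1 else 0)
      = ∑ x : Fin k, ((if ((x : ℕ) < i ∧ Q x) then 1 else 0)
          + (if ((x : ℕ) = i ∧ Q x) then 1 else 0)) := by
    refine Finset.sum_congr rfl fun x _ => ?_
    by_cases hq : Q x
    · simp only [hq, and_true]
      split_ifs <;> omega
    · simp [hq]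
  rw [hsum, Finset.sum_add_distrib]
  congr 1
  split
  · next h =>
    rw [Finset.sum_eq_single (⟨i, h⟩ : Fin k)]
    · simp
    · intro b _ hb
      have : (b : ℕ) ≠ i := fun hbi => hb (Fin.ext hbi)
      simp [this]
    · simp
  · next h =>
    refine Finset.sum_eq_zero fun x _ => ?_
    have := x.isLt
    have : (x : ℕ) ≠ i := by omega
    simp [this]

lemma countP_take_ofFn {α : Type*} {k : ℕ} (q : α → Bool) (m : Fin k → α) :
    ∀ i : ℕ, ((List.ofFn m).take i).countP q
      = (Finset.univ.filter fun x : Fin k => (x : ℕ) < i ∧ q (m x) = true).card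
  | 0 => by simp
  | (i + 1) => by
    rw [List.take_succ, List.countP_append, countP_take_ofFn q m i,
      card_filter_lt_succ (fun x : Fin k => q (m x) = true) i]
    congr 1
    rw [List.getElem?_ofFn]
    split
    · next h => simp [List.countP_cons]
    · next h => simp

lemma count_take_ofFn {α : Type*} [BEq α] [LawfulBEq α] [DecidableEq α] {k : ℕ}
    (m : Fin k → α) (a : α) (i : ℕ) :
    ((List.ofFn m).take i).count a
      = (Finset.univ.filter fun x : Fin k => (x : ℕ) < i ∧ m x = a).card := by
  rw [List.count_eq_countP, countP_take_ofFn]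
  congr 1
  ext x
  simp [beq_iff_eq]

lemma count_ofFn {α : Type*} [BEq α] [LawfulBEq α] [DecidableEq α] {k : ℕ} (m : Fin k → α) (a : α) :
    (List.ofFn m).count a = (Finset.univ.filter fun x : Fin k => m x = a).card := by
  have h := count_take_ofFn m a k
  rw [List.take_of_length_le (by simp)] at h
  rw [h]
  congr 1
  ext x
  simp [x.isLt]

/-! ### Lists vs functions -/

def listFnEquiv (α : Type*) (k : ℕ) : (Fin k → α) ≃ {l : List α // l.length = k} where
  toFun m := ⟨List.ofFn m, List.length_ofFn⟩
  invFun l i := l.1.get (Fin.cast l.2.symm i)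
  left_inv m := by
    funext i
    simp [List.get_ofFn]
  right_inv l := by
    ext1
    apply List.ext_get (by simp [l.2])
    intro i h1 h2
    simp [List.get_ofFn]

def fnListSubEquiv {α : Type*} (k : ℕ) (Q : List α → Prop) :
    {m : Fin k → α // Q (List.ofFn m)} ≃ {l : List α // l.length = k ∧ Q l} :=
  (Equiv.subtypeEquiv (listFnEquiv α k) fun _ => Iff.rfl).trans
    (Equiv.subtypeSubtypeEquivSubtypeInter _ _)

/-! ### List versions of the Motzkin and Dyck conditions -/

def MotzL (l : List (Option Bool)) : Prop :=
  l.count (some true) = l.count (some false) ∧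
  ∀ p, p <+: l → p.count (some false) ≤ p.count (some true)

def DyckL (d : List Bool) : Prop :=
  d.count true = d.count false ∧ ∀ p, p <+: d → p.count false ≤ p.count true

lemma upM_eq_count {k : ℕ} (m : Fin k → Option Bool) (i : ℕ) :
    upM m i = ((List.ofFn m).take i).count (some true) :=
  (count_take_ofFn m (some true) i).symm

lemma downM_eq_count {k : ℕ} (m : Fin k → Option Bool) (i : ℕ) :
    downM m i = ((List.ofFn m).take i).count (some false) :=
  (count_take_ofFn m (some false) i).symm

lemma isMotzkin_iff {k : ℕ} (j : ℕ) (m : Fin k → Option Bool) :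
    (IsMotzkin m ∧ upM m k = j) ↔
      (MotzL (List.ofFn m) ∧ (List.ofFn m).count (some true) = j) := by
  have hfull : (List.ofFn m).take k = List.ofFn m := List.take_of_length_le (by simp)
  constructor
  · rintro ⟨⟨h1, h2⟩, h3⟩
    refine ⟨⟨?_, ?_⟩, ?_⟩
    · rw [← hfull, ← upM_eq_count, ← downM_eq_count]; exact h1
    · intro p hp
      have hlen : p.length ≤ k := by simpa using hp.length_le
      have := h2 p.length (by omega)
      rwa [upM_eq_count, downM_eq_count, ← List.prefix_iff_eq_take.mp hp] at this
    · rw [← hfull, ← upM_eq_count]; exact h3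
  · rintro ⟨⟨h1, h2⟩, h3⟩
    refine ⟨⟨?_, ?_⟩, ?_⟩
    · rw [upM_eq_count, downM_eq_count, hfull]; exact h1
    · intro i _
      rw [upM_eq_count, downM_eq_count]
      exact h2 _ (List.take_prefix i _)
    · rw [upM_eq_count, hfull]; exact h3

/-! ### Counting lemmas for Bool lists -/

lemma count_isSome_map : ∀ l : List (Option Bool),
    (l.map Option.isSome).count true = l.count (some true) + l.count (some false)
  | [] => by simp
  | a :: t => by
    have ih := count_isSome_map t
    rcases a with _ | b
    · simpa using ih
    · cases b <;> simp [List.count_cons] <;> omega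

lemma count_filterMap_id (l : List (Option Bool)) (b : Bool) :
    (l.filterMap id).count b = l.count (some b) := by
  rw [List.count_filterMap]
  simp [List.count_eq_countP]

lemma exists_prefix_filterMap {α β : Type*} (f : α → Option β) :
    ∀ (l : List α) (p : List β), p <+: l.filterMap f → ∃ q, q <+: l ∧ q.filterMap f = p
  | [], p, hp => by
      have : p = [] := List.prefix_nil.mp (by simpa using hp)
      exact ⟨[], List.nil_prefix, by simp [this]⟩
  | a :: l, p, hp => by
      rcases hfa : f a with _ | b
      · rw [List.filterMap_cons, hfa] at hp
        obtain ⟨q, hq, hfq⟩ := exists_prefix_filterMap f l p hp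
        exact ⟨a :: q, List.cons_prefix_cons.mpr ⟨rfl, hq⟩,
          by rw [List.filterMap_cons, hfa, hfq]⟩
      · rw [List.filterMap_cons, hfa] at hp
        match p, hp with
        | [], _ => exact ⟨[], List.nil_prefix, rfl⟩
        | c :: p', hp =>
          obtain ⟨hcb, hp'⟩ := List.cons_prefix_cons.mp hp
          obtain ⟨q, hq, hfq⟩ := exists_prefix_filterMap f l p' hp'
          exact ⟨a :: q, List.cons_prefix_cons.mpr ⟨rfl, hq⟩,
            by rw [List.filterMap_cons, hfa, hfq, hcb]⟩

/-! ### Splitting a Motzkin word into its mask and reduced Dyck word -/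

def unsplit : List Bool → List Bool → List (Option Bool)
  | [], _ => []
  | false :: s, d => none :: unsplit s d
  | true :: s, [] => none :: unsplit s []
  | true :: s, b :: d => some b :: unsplit s d

lemma unsplit_length : ∀ s d : List Bool, (unsplit s d).length = s.length
  | [], _ => rfl
  | false :: s, d => by simp [unsplit, unsplit_length s d]
  | true :: s, [] => by simp [unsplit, unsplit_length s []]
  | true :: s, b :: d => by simp [unsplit, unsplit_length s d]

lemma unsplit_map_isSome : ∀ s d : List Bool, d.length = s.count true →
    (unsplit s d).map Option.isSome = s
  | [], _, _ => rfl
  | false :: s, d, h => by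
      simp [List.count_cons] at h
      simp [unsplit, unsplit_map_isSome s d h]
  | true :: s, [], h => by
      simp [List.count_cons] at h
  | true :: s, b :: d, h => by
      simp [List.count_cons] at h
      simp [unsplit, unsplit_map_isSome s d (by omega)]

lemma unsplit_filterMap : ∀ s d : List Bool, d.length = s.count true →
    (unsplit s d).filterMap id = d
  | [], d, h => by
      have : d = [] := List.length_eq_zero_iff.mp (by simpa using h)
      simp [unsplit, this]
  | false :: s, d, h => by
      simp [List.count_cons] at h
      simpa [unsplit] using unsplit_filterMap s d h
  | true :: s, [], h => by
      simp [List.count_cons] at h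
  | true :: s, b :: d, h => by
      simp [List.count_cons] at h
      simpa [unsplit] using unsplit_filterMap s d (by omega)

lemma unsplit_eta : ∀ l : List (Option Bool),
    unsplit (l.map Option.isSome) (l.filterMap id) = l
  | [] => rfl
  | none :: t => by simpa [unsplit] using unsplit_eta t
  | some b :: t => by simpa [unsplit] using unsplit_eta t

def splitEquiv (k j : ℕ) :
    {l : List (Option Bool) // l.length = k ∧ (MotzL l ∧ l.count (some true) = j)} ≃
      {s : List Bool // s.length = k ∧ s.count true = 2 * j} ×
        {d : List Bool // DyckL d ∧ d.length = 2 * j} where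
  toFun l :=
    (⟨l.1.map Option.isSome,
      by simpa using l.2.1,
      by
        have h1 := l.2.2.1.1
        have h2 := l.2.2.2
        rw [count_isSome_map]; omega⟩,
     ⟨l.1.filterMap id,
      ⟨by rw [count_filterMap_id, count_filterMap_id]; exact l.2.2.1.1,
       fun p hp => by
        obtain ⟨q, hq, rfl⟩ := exists_prefix_filterMap id l.1 p hp
        rw [count_filterMap_id, count_filterMap_id]
        exact l.2.2.1.2 q hq⟩,
      by
        have h0 := List.count_true_add_count_false (l.1.filterMap id)
        rw [count_filterMap_id, count_filterMap_id] at h0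
        have h1 := l.2.2.1.1
        have h2 := l.2.2.2
        omega⟩)
  invFun x :=
    ⟨unsplit x.1.1 x.2.1,
     by rw [unsplit_length]; exact x.1.2.1,
     ⟨⟨by
        rw [← count_filterMap_id, ← count_filterMap_id,
          unsplit_filterMap x.1.1 x.2.1 (by rw [x.2.2.2, x.1.2.2])]
        exact x.2.2.1.1,
       fun p hp => by
        rw [← count_filterMap_id, ← count_filterMap_id]
        refine x.2.2.1.2 _ ?_
        have := hp.filterMap id
        rwa [unsplit_filterMap x.1.1 x.2.1 (by rw [x.2.2.2, x.1.2.2])] at this⟩,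
      by
        rw [← count_filterMap_id, unsplit_filterMap x.1.1 x.2.1 (by rw [x.2.2.2, x.1.2.2])]
        have h0 := List.count_true_add_count_false x.2.1
        have h1 := x.2.2.1.1
        have h2 := x.2.2.2
        omega⟩⟩
  left_inv l := Subtype.ext (unsplit_eta l.1)
  right_inv x := by
    refine Prod.ext (Subtype.ext ?_) (Subtype.ext ?_)
    · exact unsplit_map_isSome x.1.1 x.2.1 (by rw [x.2.2.2, x.1.2.2])
    · exact unsplit_filterMap x.1.1 x.2.1 (by rw [x.2.2.2, x.1.2.2])

/-! ### Counting masks -/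

def finsetBoolEquiv (k : ℕ) : (Fin k → Bool) ≃ Finset (Fin k) where
  toFun v := Finset.univ.filter fun x => v x = true
  invFun t x := decide (x ∈ t)
  left_inv v := by
    funext x
    by_cases h : v x = true <;> simp [h]
  right_inv t := by
    ext x
    simp

def maskEquiv (k j : ℕ) :
    {s : List Bool // s.length = k ∧ s.count true = 2 * j} ≃
      {t : Finset (Fin k) // t.card = 2 * j} :=
  ((fnListSubEquiv k fun s => s.count true = 2 * j).symm.trans
    (Equiv.subtypeEquivRight fun v => by rw [count_ofFn])).trans
    (Equiv.subtypeEquiv (finsetBoolEquiv k) fun v => by simp [finsetBoolEquiv])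

/-! ### Reduced words are Dyck words -/

def toStep : Bool → DyckStep
  | true => DyckStep.U
  | false => DyckStep.D

def ofStep : DyckStep → Bool
  | DyckStep.U => true
  | DyckStep.D => false

lemma ofStep_toStep : ∀ b, ofStep (toStep b) = b
  | true => rfl
  | false => rfl

lemma toStep_ofStep : ∀ s, toStep (ofStep s) = s
  | DyckStep.U => rfl
  | DyckStep.D => rfl

lemma toStep_inj : Function.Injective toStep := fun a b h => by
  rw [← ofStep_toStep a, h, ofStep_toStep]

lemma ofStep_inj : Function.Injective ofStep := fun a b h => by
  rw [← toStep_ofStep a, h, toStep_ofStep]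

lemma count_map_toStep_U (d : List Bool) :
    (d.map toStep).count DyckStep.U = d.count true :=
  List.count_map_of_injective d toStep toStep_inj true

lemma count_map_toStep_D (d : List Bool) :
    (d.map toStep).count DyckStep.D = d.count false :=
  List.count_map_of_injective d toStep toStep_inj false

lemma count_map_ofStep_true (w : List DyckStep) :
    (w.map ofStep).count true = w.count DyckStep.U :=
  List.count_map_of_injective w ofStep ofStep_inj DyckStep.U

lemma count_map_ofStep_false (w : List DyckStep) :
    (w.map ofStep).count false = w.count DyckStep.D :=
  List.count_map_of_injective w ofStep ofStep_inj DyckStep.D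

def dyckEquiv (j : ℕ) :
    {d : List Bool // DyckL d ∧ d.length = 2 * j} ≃ {p : DyckWord // p.semilength = j} where
  toFun d :=
    ⟨⟨d.1.map toStep,
      by rw [count_map_toStep_U, count_map_toStep_D]; exact d.2.1.1,
      fun i => by
        rw [← List.map_take, count_map_toStep_U, count_map_toStep_D]
        exact d.2.1.2 _ (List.take_prefix i d.1)⟩,
     by
      show (d.1.map toStep).count DyckStep.U = j
      rw [count_map_toStep_U]
      have h1 := d.2.1.1
      have h2 := d.2.2
      have h3 := List.count_true_add_count_false d.1
      omega⟩
  invFun p :=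
    ⟨p.1.toList.map ofStep,
     ⟨⟨by rw [count_map_ofStep_true, count_map_ofStep_false]; exact p.1.count_U_eq_count_D,
       fun q hq => by
        rw [List.prefix_iff_eq_take.mp hq, ← List.map_take, count_map_ofStep_true,
          count_map_ofStep_false]
        exact p.1.count_D_le_count_U _⟩,
      by
        have := p.1.two_mul_semilength_eq_length
        rw [List.length_map, ← this, p.2]⟩⟩
  left_inv d := by
    refine Subtype.ext ?_
    show (d.1.map toStep).map ofStep = d.1
    rw [List.map_map, show ofStep ∘ toStep = id from funext ofStep_toStep, List.map_id]
  right_inv p := by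
    refine Subtype.ext (DyckWord.ext ?_)
    show (p.1.toList.map ofStep).map toStep = p.1.toList
    rw [List.map_map, show toStep ∘ ofStep = id from funext toStep_ofStep, List.map_id]

/-! ### The master bijection -/

def bigEquiv (k j : ℕ) :
    {m : Fin k → Option Bool // IsMotzkin m ∧ upM m k = j} ≃
      {t : Finset (Fin k) // t.card = 2 * j} × {p : DyckWord // p.semilength = j} :=
  ((Equiv.subtypeEquivRight (isMotzkin_iff j)).trans
    ((fnListSubEquiv k fun l => MotzL l ∧ l.count (some true) = j).trans
      (splitEquiv k j))).trans
    (Equiv.prodCongr (maskEquiv k j) (dyckEquiv j))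

end Aux

/-- The number of Motzkin paths of order `n` with exactly `j` up steps equals
`C_j * binomial(n-1, 2j)`. -/
theorem motzkin_count_by_up_steps (n j : ℕ) (hn : 1 ≤ n) :
    ((motzSet n).filter fun m => rkM m = j).card
      = catalan j * (n - 1).choose (2 * j) := by
  have h1 : ((motzSet n).filter fun m => rkM m = j).card
      = Fintype.card {m : Fin (n - 1) → Option Bool // IsMotzkin m ∧ upM m (n - 1) = j} := by
    rw [Fintype.card_subtype, motzSet, Finset.filter_filter]
    rfl
  rw [h1, Fintype.card_congr (bigEquiv (n - 1) j), Fintype.card_prod,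
    Fintype.card_finset_len, Fintype.card_fin,
    DyckWord.card_dyckWord_semilength_eq_catalan, Nat.mul_comm]
end
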